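/- arXiv:1701.01388 — 6 statements merged into one kernel-verified Lean document; each statement's English description precedes it below -/
import Mathlib

section
/- Let R be a nonnegative integer vector in ℤ^n with each component at most n. There exists an n×n (0,1)-matrix with row sum vector R and column sum vector R that is invariant under both matrix transposition and transposition about the antidiagonal if and only if there exists an n×n (0,1)-matrix with row sum vector R and column sum vector R that is invariant under ρ_π (rotation through π radians). -/
set_option linter.unusedSectionVars false

section Core

variable {V : Type*} [Fintype V] [DecidableEq V]

/-- asymmetry measure -/
private def mu (Z : V → V → ℕ) : ℕ := ∑ p : V × V, (Z p.1 p.2 - Z p.2 p.1)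

private lemma step_lemma (Z : V → V → ℕ) (R : V → ℕ)
    (hrow : ∀ i, ∑ j, Z i j = R i) (hcol : ∀ j, ∑ i, Z i j = R j)
    (x u : V) (hu : Z x u < Z u x) : ∃ w, Z w x < Z x w := by
  by_contra h
  push_neg at h
  have : ∑ w, Z x w < ∑ w, Z w x :=
    Finset.sum_lt_sum (fun w _ => h w) ⟨u, Finset.mem_univ u, hu⟩
  rw [hrow x, hcol x] at this
  exact lt_irrefl _ this

private lemma exists_cycle (Z : V → V → ℕ) (R : V → ℕ) (c : V → V → ℕ)
    (hbad : ∀ v w : V, c v v = 0 → c w w = 0 → v = w)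
    (hrow : ∀ i, ∑ j, Z i j = R i) (hcol : ∀ j, ∑ i, Z i j = R j)
    (i0 j0 : V) (h0 : Z j0 i0 < Z i0 j0) :
    ∃ (L : ℕ) (v : ℕ → V), 3 ≤ L ∧ v L = v 0 ∧
      (∀ t, t < L → Z (v (t+1)) (v t) < Z (v t) (v (t+1))) ∧
      (∀ s t, s < L → t < L → v s = v t → s = t) ∧
      1 ≤ c (v 0) (v 0) := by
  classical
  -- build an infinite walk along the asymmetry digraph
  let S := {x : V // ∃ u, Z x u < Z u x}
  let g : S → S := fun p =>
    ⟨(step_lemma Z R hrow hcol p.1 p.2.choose p.2.choose_spec).choose,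
     ⟨p.1, (step_lemma Z R hrow hcol p.1 p.2.choose p.2.choose_spec).choose_spec⟩⟩
  have hg : ∀ p : S, Z (g p).1 p.1 < Z p.1 (g p).1 := fun p =>
    (step_lemma Z R hrow hcol p.1 p.2.choose p.2.choose_spec).choose_spec
  let p0 : S := ⟨j0, ⟨i0, h0⟩⟩
  let f : ℕ → V := fun k => (g^[k] p0).1
  have hstep : ∀ k, Z (f (k+1)) (f k) < Z (f k) (f (k+1)) := by
    intro k
    have h1 : g^[k+1] p0 = g (g^[k] p0) := Function.iterate_succ_apply' g k p0
    show Z (g^[k+1] p0).1 (g^[k] p0).1 < Z (g^[k] p0).1 (g^[k+1] p0).1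
    rw [h1]
    exact hg _
  -- pigeonhole
  have hpig : ∃ a ∈ Finset.range (Fintype.card V + 1), ∃ b ∈ Finset.range (Fintype.card V + 1),
      a ≠ b ∧ f a = f b := by
    refine Finset.exists_ne_map_eq_of_card_lt_of_maps_to ?_ (fun a _ => Finset.mem_univ (f a))
    simp
  have hcol' : ∃ b, ∃ a, a < b ∧ f a = f b := by
    obtain ⟨a, -, b, -, hne, he⟩ := hpig
    rcases lt_or_gt_of_ne hne with h | h
    · exact ⟨b, a, h, he⟩
    · exact ⟨a, b, h, he.symm⟩
  let b1 := Nat.find hcol'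
  obtain ⟨a1, ha1, heq⟩ : ∃ a, a < b1 ∧ f a = f b1 := Nat.find_spec hcol'
  have hmin : ∀ b' < b1, ¬ ∃ a, a < b' ∧ f a = f b' := fun b' h => Nat.find_min hcol' h
  set L := b1 - a1 with hLdef
  set v : ℕ → V := fun t => f (a1 + t) with hvdef
  have hL0 : v L = v 0 := by
    show f (a1 + (b1 - a1)) = f (a1 + 0)
    rw [Nat.add_sub_cancel' (le_of_lt ha1), Nat.add_zero]
    exact heq.symm
  have hedge : ∀ t, t < L → Z (v (t+1)) (v t) < Z (v t) (v (t+1)) := by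
    intro t _
    have := hstep (a1 + t)
    simpa [hvdef, Nat.add_assoc] using this
  have hinj : ∀ s t, s < L → t < L → v s = v t → s = t := by
    intro s t hs ht he
    by_contra hne
    rcases lt_or_gt_of_ne hne with h | h
    · exact hmin (a1 + t) (by omega) ⟨a1 + s, by omega, he⟩
    · exact hmin (a1 + s) (by omega) ⟨a1 + t, by omega, he.symm⟩
  have hL1 : 1 ≤ L := by omega
  have hLne1 : L ≠ 1 := by
    intro h
    have h2 := hedge 0 (by omega)
    rw [show (0:ℕ)+1 = L by omega, hL0] at h2
    exact lt_irrefl _ h2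
  have hLne2 : L ≠ 2 := by
    intro h
    have h2 := hedge 0 (by omega)
    have h3 := hedge 1 (by omega)
    rw [show (1:ℕ)+1 = L by omega, hL0] at h3
    rw [show (0:ℕ)+1 = 1 from rfl] at h2
    omega
  have hL3 : 3 ≤ L := by omega
  by_cases hc0 : 1 ≤ c (v 0) (v 0)
  · exact ⟨L, v, hL3, hL0, hedge, hinj, hc0⟩
  · have hcz : c (v 0) (v 0) = 0 := by omega
    have h1good : 1 ≤ c (v 1) (v 1) := by
      rcases Nat.eq_zero_or_pos (c (v 1) (v 1)) with h | h
      · exact absurd (hinj 1 0 (by omega) (by omega) (hbad _ _ h hcz)) (by omega)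
      · exact h
    set w : ℕ → V := fun t => if t + 1 ≤ L then v (t+1) else v (t + 1 - L) with hwdef
    have hw : ∀ t, w t = if t + 1 ≤ L then v (t+1) else v (t + 1 - L) := fun t => rfl
    refine ⟨L, w, hL3, ?_, ?_, ?_, ?_⟩
    · rw [hw, hw, if_neg (show ¬ L + 1 ≤ L by omega), if_pos (show 0 + 1 ≤ L by omega),
        show L + 1 - L = 1 by omega]
    · intro t ht
      by_cases h : t + 1 < L
      · rw [hw (t+1), hw t, if_pos (show t + 1 + 1 ≤ L by omega),
          if_pos (show t + 1 ≤ L by omega)]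
        exact hedge (t+1) h
      · have ht1 : t + 1 = L := by omega
        rw [hw (t+1), hw t, if_pos (show t + 1 ≤ L by omega),
          if_neg (show ¬ t + 1 + 1 ≤ L by omega),
          show t + 1 + 1 - L = 1 by omega, ht1, hL0]
        exact hedge 0 (by omega)
    · intro s t hs ht he
      rw [hw s, hw t, if_pos (show s + 1 ≤ L by omega), if_pos (show t + 1 ≤ L by omega)] at he
      rcases eq_or_lt_of_le (show s + 1 ≤ L by omega) with h1 | h1 <;>
        rcases eq_or_lt_of_le (show t + 1 ≤ L by omega) with h2 | h2
      · omega
      · rw [h1, hL0] at he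
        have := hinj 0 (t+1) (by omega) h2 he
        omega
      · rw [h2, hL0] at he
        have := hinj (s+1) 0 h1 (by omega) he
        omega
      · have := hinj (s+1) (t+1) h1 h2 he
        omega
    · rw [hw 0, if_pos (show 0 + 1 ≤ L by omega)]
      exact h1good

end Core

section Switch

variable {V : Type*} [Fintype V] [DecidableEq V]
variable (L : ℕ) (v : ℕ → V) (dbl : ℕ → Bool) (du dd : Bool)

private def PP (x y : V) : ℕ :=
  (∑ t ∈ Finset.range L, if dbl t = true ∧ x = v (t+1) ∧ y = v t then 1 else 0)
    + (if du = true ∧ x = v 0 ∧ y = v 0 then 1 else 0)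

private def MM (x y : V) : ℕ :=
  (∑ t ∈ Finset.range L, if dbl t = false ∧ x = v t ∧ y = v (t+1) then 1 else 0)
    + (if dd = true ∧ x = v 0 ∧ y = v 0 then 1 else 0)

private lemma count_le (L : ℕ) (P : ℕ → Prop) [DecidablePred P] (t0 : ℕ) (ht0 : t0 < L)
    (h : ∀ t, t < L → P t → t = t0) :
    (∑ t ∈ Finset.range L, if P t then (1:ℕ) else 0) = if P t0 then 1 else 0 := by
  by_cases hp : P t0
  · rw [if_pos hp, Finset.sum_eq_single_of_mem t0 (Finset.mem_range.2 ht0), if_pos hp]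
    intro t ht hne
    exact if_neg (fun hPt => hne (h t (Finset.mem_range.1 ht) hPt))
  · rw [if_neg hp]
    apply Finset.sum_eq_zero
    intro t ht
    apply if_neg
    intro hPt
    exact hp ((h t (Finset.mem_range.1 ht) hPt) ▸ hPt)

private lemma count_zero (L : ℕ) (P : ℕ → Prop) [DecidablePred P]
    (h : ∀ t, t < L → ¬ P t) :
    (∑ t ∈ Finset.range L, if P t then (1:ℕ) else 0) = 0 := by
  apply Finset.sum_eq_zero
  intro t ht
  exact if_neg (h t (Finset.mem_range.1 ht))

private lemma sum_ite_last {V : Type*} [Fintype V] [DecidableEq V]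
    (A B : Prop) [Decidable A] [Decidable B] (a : V) :
    (∑ y : V, if A ∧ B ∧ y = a then (1:ℕ) else 0) = if A ∧ B then 1 else 0 := by
  by_cases h : A ∧ B
  · simp [h.1, h.2]
  · rw [if_neg h]
    apply Finset.sum_eq_zero
    intro y _
    apply if_neg
    tauto

private lemma sum_ite_mid {V : Type*} [Fintype V] [DecidableEq V]
    (A D : Prop) [Decidable A] [Decidable D] (a : V) :
    (∑ x : V, if A ∧ x = a ∧ D then (1:ℕ) else 0) = if A ∧ D then 1 else 0 := by
  by_cases h : A ∧ D
  · simp [h.1, h.2]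
  · rw [if_neg h]
    apply Finset.sum_eq_zero
    intro x _
    apply if_neg
    tauto

section CycleFacts

variable {V : Type*} [Fintype V] [DecidableEq V]
variable {L : ℕ} {v : ℕ → V}

private lemma vmod (hL : 3 ≤ L) (hvL : v L = v 0)
    (hinj : ∀ s t, s < L → t < L → v s = v t → s = t) :
    ∀ s t, s ≤ L → t ≤ L → v s = v t → s % L = t % L := by
  have hmod : ∀ s, s ≤ L → v s = v (s % L) := by
    intro s hs
    rcases eq_or_lt_of_le hs with h | h
    · rw [h, Nat.mod_self, hvL]
    · rw [Nat.mod_eq_of_lt h]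
  intro s t hs ht he
  exact hinj _ _ (Nat.mod_lt _ (by omega)) (Nat.mod_lt _ (by omega))
    (by rw [← hmod s hs, ← hmod t ht]; exact he)

private lemma no_loop (hL : 3 ≤ L) (hvL : v L = v 0)
    (hinj : ∀ s t, s < L → t < L → v s = v t → s = t) :
    ∀ t, t < L → v t ≠ v (t+1) := by
  intro t ht h
  have h1 := vmod hL hvL hinj t (t+1) (by omega) (by omega) h
  rw [Nat.mod_eq_of_lt ht] at h1
  rcases eq_or_lt_of_le (show t + 1 ≤ L by omega) with h2 | h2
  · rw [h2, Nat.mod_self] at h1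
    omega
  · rw [Nat.mod_eq_of_lt h2] at h1
    omega

private lemma no_reverse (hL : 3 ≤ L) (hvL : v L = v 0)
    (hinj : ∀ s t, s < L → t < L → v s = v t → s = t) :
    ∀ s t, s < L → t < L → v t = v (s+1) → v (t+1) = v s → False := by
  intro s t hs ht h1 h2
  have e1 := vmod hL hvL hinj t (s+1) (by omega) (by omega) h1
  have e2 := vmod hL hvL hinj (t+1) s (by omega) (by omega) h2
  rw [Nat.mod_eq_of_lt ht] at e1
  rw [Nat.mod_eq_of_lt hs] at e2
  rcases eq_or_lt_of_le (show s + 1 ≤ L by omega) with h3 | h3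
  · rw [h3, Nat.mod_self] at e1
    subst e1
    rw [Nat.mod_eq_of_lt (by omega)] at e2
    omega
  · rw [Nat.mod_eq_of_lt h3] at e1
    subst e1
    rcases eq_or_lt_of_le (show s + 1 + 1 ≤ L by omega) with h4 | h4
    · rw [h4, Nat.mod_self] at e2
      omega
    · rw [Nat.mod_eq_of_lt h4] at e2
      omega

end CycleFacts

section SwitchVals

variable {V : Type*} [Fintype V] [DecidableEq V]
variable {L : ℕ} {v : ℕ → V} {dbl : ℕ → Bool} {du dd : Bool}
variable (hL : 3 ≤ L) (hvL : v L = v 0)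
variable (hinj : ∀ s t, s < L → t < L → v s = v t → s = t)

include hL hvL hinj

private lemma PP_eq_of_edge {x y : V} (t : ℕ) (ht : t < L)
    (hx : x = v (t+1)) (hy : y = v t) :
    PP L v dbl du x y = if dbl t = true then 1 else 0 := by
  unfold PP
  have h1 : (∑ s ∈ Finset.range L, if dbl s = true ∧ x = v (s+1) ∧ y = v s then (1:ℕ) else 0)
      = if dbl t = true ∧ x = v (t+1) ∧ y = v t then 1 else 0 := by
    apply count_le L _ t ht
    intro s hs hP
    exact hinj s t hs ht (hy ▸ hP.2.2).symm
  have h2 : (if du = true ∧ x = v 0 ∧ y = v 0 then (1:ℕ) else 0) = 0 := by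
    apply if_neg
    rintro ⟨-, h2, h3⟩
    exact no_loop hL hvL hinj t ht ((hy.symm.trans h3).trans (h2.symm.trans hx))
  rw [h1, h2, Nat.add_zero, if_congr (and_iff_left (⟨hx, hy⟩ : x = v (t+1) ∧ y = v t)) rfl rfl]

private lemma PP_eq_of_diag {x y : V} (hx : x = v 0) (hy : y = v 0) :
    PP L v dbl du x y = if du = true then 1 else 0 := by
  unfold PP
  have h1 : (∑ s ∈ Finset.range L, if dbl s = true ∧ x = v (s+1) ∧ y = v s then (1:ℕ) else 0) = 0 := by
    apply count_zero
    rintro s hs ⟨-, h2, h3⟩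
    exact no_loop hL hvL hinj s hs ((h3.symm.trans hy).trans (h2.symm.trans hx).symm)
  rw [h1, Nat.zero_add, if_congr (and_iff_left (⟨hx, hy⟩ : x = v 0 ∧ y = v 0)) rfl rfl]

private lemma PP_eq_zero {x y : V}
    (hne : ∀ s, s < L → ¬ (x = v (s+1) ∧ y = v s)) (hnd : ¬ (x = v 0 ∧ y = v 0)) :
    PP L v dbl du x y = 0 := by
  unfold PP
  have h1 : (∑ s ∈ Finset.range L, if dbl s = true ∧ x = v (s+1) ∧ y = v s then (1:ℕ) else 0) = 0 := by
    apply count_zero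
    rintro s hs ⟨-, h2⟩
    exact hne s hs h2
  rw [h1, Nat.zero_add, if_neg]
  rintro ⟨-, h2⟩
  exact hnd h2

private lemma MM_eq_of_edge {x y : V} (t : ℕ) (ht : t < L)
    (hx : x = v t) (hy : y = v (t+1)) :
    MM L v dbl dd x y = if dbl t = false then 1 else 0 := by
  unfold MM
  have h1 : (∑ s ∈ Finset.range L, if dbl s = false ∧ x = v s ∧ y = v (s+1) then (1:ℕ) else 0)
      = if dbl t = false ∧ x = v t ∧ y = v (t+1) then 1 else 0 := by
    apply count_le L _ t ht
    intro s hs hP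
    exact hinj s t hs ht (hx ▸ hP.2.1).symm
  have h2 : (if dd = true ∧ x = v 0 ∧ y = v 0 then (1:ℕ) else 0) = 0 := by
    apply if_neg
    rintro ⟨-, h2, h3⟩
    exact no_loop hL hvL hinj t ht ((hx.symm.trans h2).trans (h3.symm.trans hy))
  rw [h1, h2, Nat.add_zero, if_congr (and_iff_left (⟨hx, hy⟩ : x = v t ∧ y = v (t+1))) rfl rfl]

private lemma MM_eq_of_diag {x y : V} (hx : x = v 0) (hy : y = v 0) :
    MM L v dbl dd x y = if dd = true then 1 else 0 := by
  unfold MM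
  have h1 : (∑ s ∈ Finset.range L, if dbl s = false ∧ x = v s ∧ y = v (s+1) then (1:ℕ) else 0) = 0 := by
    apply count_zero
    rintro s hs ⟨-, h2, h3⟩
    exact no_loop hL hvL hinj s hs ((h2.symm.trans hx).trans (hy.symm.trans h3))
  rw [h1, Nat.zero_add, if_congr (and_iff_left (⟨hx, hy⟩ : x = v 0 ∧ y = v 0)) rfl rfl]

private lemma MM_eq_zero {x y : V}
    (hne : ∀ s, s < L → ¬ (x = v s ∧ y = v (s+1))) (hnd : ¬ (x = v 0 ∧ y = v 0)) :
    MM L v dbl dd x y = 0 := by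
  unfold MM
  have h1 : (∑ s ∈ Finset.range L, if dbl s = false ∧ x = v s ∧ y = v (s+1) then (1:ℕ) else 0) = 0 := by
    apply count_zero
    rintro s hs ⟨-, h2⟩
    exact hne s hs h2
  rw [h1, Nat.zero_add, if_neg]
  rintro ⟨-, h2⟩
  exact hnd h2

private lemma rowPP (x : V) : ∑ y, PP L v dbl du x y
    = (∑ t ∈ Finset.range L, if dbl t = true ∧ x = v (t+1) then (1:ℕ) else 0)
      + (if du = true ∧ x = v 0 then 1 else 0) := by
  unfold PP
  rw [Finset.sum_add_distrib]
  congr 1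
  · rw [Finset.sum_comm]
    exact Finset.sum_congr rfl fun t _ => sum_ite_last _ _ _
  · exact sum_ite_last _ _ _

private lemma rowMM (x : V) : ∑ y, MM L v dbl dd x y
    = (∑ t ∈ Finset.range L, if dbl t = false ∧ x = v t then (1:ℕ) else 0)
      + (if dd = true ∧ x = v 0 then 1 else 0) := by
  unfold MM
  rw [Finset.sum_add_distrib]
  congr 1
  · rw [Finset.sum_comm]
    exact Finset.sum_congr rfl fun t _ => sum_ite_last _ _ _
  · exact sum_ite_last _ _ _

private lemma colPP (y : V) : ∑ x, PP L v dbl du x y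
    = (∑ t ∈ Finset.range L, if dbl t = true ∧ y = v t then (1:ℕ) else 0)
      + (if du = true ∧ y = v 0 then 1 else 0) := by
  unfold PP
  rw [Finset.sum_add_distrib]
  congr 1
  · rw [Finset.sum_comm]
    exact Finset.sum_congr rfl fun t _ => sum_ite_mid _ _ _
  · exact sum_ite_mid _ _ _

private lemma colMM (y : V) : ∑ x, MM L v dbl dd x y
    = (∑ t ∈ Finset.range L, if dbl t = false ∧ y = v (t+1) then (1:ℕ) else 0)
      + (if dd = true ∧ y = v 0 then 1 else 0) := by
  unfold MM
  rw [Finset.sum_add_distrib]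
  congr 1
  · rw [Finset.sum_comm]
    exact Finset.sum_congr rfl fun t _ => sum_ite_mid _ _ _
  · exact sum_ite_mid _ _ _

private lemma row_balance
    (halt : ∀ t, t + 1 < L → dbl (t+1) = !dbl t)
    (h2row : (if dbl (L-1) = true then (1:ℕ) else 0) + (if du = true then 1 else 0)
      = (if dbl 0 = false then 1 else 0) + (if dd = true then 1 else 0))
    (x : V) :
    (∑ t ∈ Finset.range L, if dbl t = true ∧ x = v (t+1) then (1:ℕ) else 0)
      + (if du = true ∧ x = v 0 then 1 else 0)
    = (∑ t ∈ Finset.range L, if dbl t = false ∧ x = v t then (1:ℕ) else 0)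
      + (if dd = true ∧ x = v 0 then 1 else 0) := by
  by_cases hx : ∃ s, s < L ∧ x = v s
  · obtain ⟨s, hs, hxe⟩ := hx
    subst hxe
    rcases Nat.eq_zero_or_pos s with hs0 | hs0
    · subst hs0
      have e1 : (∑ t ∈ Finset.range L, if dbl t = true ∧ v 0 = v (t+1) then (1:ℕ) else 0)
          = if dbl (L-1) = true then 1 else 0 := by
        rw [count_le L _ (L-1) (by omega)]
        · apply if_congr _ rfl rfl
          constructor
          · exact fun h => h.1
          · intro h
            refine ⟨h, ?_⟩
            rw [show L - 1 + 1 = L by omega, hvL]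
        · rintro t ht ⟨-, h2⟩
          have := vmod hL hvL hinj 0 (t+1) (by omega) (by omega) h2
          rw [Nat.mod_eq_of_lt (by omega)] at this
          rcases eq_or_lt_of_le (show t + 1 ≤ L by omega) with h3 | h3
          · omega
          · rw [Nat.mod_eq_of_lt h3] at this
            omega
      have e2 : (∑ t ∈ Finset.range L, if dbl t = false ∧ v 0 = v t then (1:ℕ) else 0)
          = if dbl 0 = false then 1 else 0 := by
        rw [count_le L _ 0 (by omega)]
        · exact if_congr (and_iff_left rfl) rfl rfl
        · rintro t ht ⟨-, h2⟩
          exact (hinj 0 t (by omega) ht h2).symm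
      rw [e1, e2, if_congr (and_iff_left rfl) rfl rfl, if_congr (and_iff_left rfl) rfl rfl]
      exact h2row
    · have e1 : (∑ t ∈ Finset.range L, if dbl t = true ∧ v s = v (t+1) then (1:ℕ) else 0)
          = if dbl (s-1) = true then 1 else 0 := by
        rw [count_le L _ (s-1) (by omega)]
        · apply if_congr _ rfl rfl
          constructor
          · exact fun h => h.1
          · intro h
            refine ⟨h, ?_⟩
            rw [show s - 1 + 1 = s by omega]
        · rintro t ht ⟨-, h2⟩
          have := vmod hL hvL hinj s (t+1) (by omega) (by omega) h2
          rw [Nat.mod_eq_of_lt (by omega)] at this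
          rcases eq_or_lt_of_le (show t + 1 ≤ L by omega) with h3 | h3
          · rw [h3, Nat.mod_self] at this
            omega
          · rw [Nat.mod_eq_of_lt h3] at this
            omega
      have e2 : (∑ t ∈ Finset.range L, if dbl t = false ∧ v s = v t then (1:ℕ) else 0)
          = if dbl s = false then 1 else 0 := by
        rw [count_le L _ s hs]
        · exact if_congr (and_iff_left rfl) rfl rfl
        · rintro t ht ⟨-, h2⟩
          exact (hinj s t hs ht h2).symm
      have e3 : ¬ (v s = v 0) := fun h => by
        have := hinj s 0 hs (by omega) h
        omega
      have e4 : ¬ (du = true ∧ v s = v 0) := fun h => e3 h.2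
      have e5 : ¬ (dd = true ∧ v s = v 0) := fun h => e3 h.2
      have h4 := halt (s-1) (by omega)
      rw [show s - 1 + 1 = s by omega] at h4
      rw [e1, e2, if_neg e4, if_neg e5, h4]
      cases dbl (s-1) <;> simp
  · push_neg at hx
    have e1 : (∑ t ∈ Finset.range L, if dbl t = true ∧ x = v (t+1) then (1:ℕ) else 0) = 0 := by
      apply count_zero
      rintro t ht ⟨-, h2⟩
      rcases eq_or_lt_of_le (show t + 1 ≤ L by omega) with h3 | h3
      · rw [h3, hvL] at h2
        exact hx 0 (by omega) h2
      · exact hx (t+1) h3 h2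
    have e2 : (∑ t ∈ Finset.range L, if dbl t = false ∧ x = v t then (1:ℕ) else 0) = 0 := by
      apply count_zero
      rintro t ht ⟨-, h2⟩
      exact hx t ht h2
    rw [e1, e2, if_neg (fun h => hx 0 (by omega) h.2), if_neg (fun h => hx 0 (by omega) h.2)]

private lemma col_balance
    (halt : ∀ t, t + 1 < L → dbl (t+1) = !dbl t)
    (h2col : (if dbl 0 = true then (1:ℕ) else 0) + (if du = true then 1 else 0)
      = (if dbl (L-1) = false then 1 else 0) + (if dd = true then 1 else 0))
    (y : V) :
    (∑ t ∈ Finset.range L, if dbl t = true ∧ y = v t then (1:ℕ) else 0)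
      + (if du = true ∧ y = v 0 then 1 else 0)
    = (∑ t ∈ Finset.range L, if dbl t = false ∧ y = v (t+1) then (1:ℕ) else 0)
      + (if dd = true ∧ y = v 0 then 1 else 0) := by
  by_cases hy : ∃ s, s < L ∧ y = v s
  · obtain ⟨s, hs, hye⟩ := hy
    subst hye
    rcases Nat.eq_zero_or_pos s with hs0 | hs0
    · subst hs0
      have e1 : (∑ t ∈ Finset.range L, if dbl t = true ∧ v 0 = v t then (1:ℕ) else 0)
          = if dbl 0 = true then 1 else 0 := by
        rw [count_le L _ 0 (by omega)]
        · exact if_congr (and_iff_left rfl) rfl rfl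
        · rintro t ht ⟨-, h2⟩
          exact (hinj 0 t (by omega) ht h2).symm
      have e2 : (∑ t ∈ Finset.range L, if dbl t = false ∧ v 0 = v (t+1) then (1:ℕ) else 0)
          = if dbl (L-1) = false then 1 else 0 := by
        rw [count_le L _ (L-1) (by omega)]
        · apply if_congr _ rfl rfl
          constructor
          · exact fun h => h.1
          · intro h
            refine ⟨h, ?_⟩
            rw [show L - 1 + 1 = L by omega, hvL]
        · rintro t ht ⟨-, h2⟩
          have := vmod hL hvL hinj 0 (t+1) (by omega) (by omega) h2
          rw [Nat.mod_eq_of_lt (by omega)] at this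
          rcases eq_or_lt_of_le (show t + 1 ≤ L by omega) with h3 | h3
          · omega
          · rw [Nat.mod_eq_of_lt h3] at this
            omega
      rw [e1, e2, if_congr (and_iff_left rfl) rfl rfl, if_congr (and_iff_left rfl) rfl rfl]
      exact h2col
    · have e1 : (∑ t ∈ Finset.range L, if dbl t = true ∧ v s = v t then (1:ℕ) else 0)
          = if dbl s = true then 1 else 0 := by
        rw [count_le L _ s hs]
        · exact if_congr (and_iff_left rfl) rfl rfl
        · rintro t ht ⟨-, h2⟩
          exact (hinj s t hs ht h2).symm
      have e2 : (∑ t ∈ Finset.range L, if dbl t = false ∧ v s = v (t+1) then (1:ℕ) else 0)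
          = if dbl (s-1) = false then 1 else 0 := by
        rw [count_le L _ (s-1) (by omega)]
        · apply if_congr _ rfl rfl
          constructor
          · exact fun h => h.1
          · intro h
            refine ⟨h, ?_⟩
            rw [show s - 1 + 1 = s by omega]
        · rintro t ht ⟨-, h2⟩
          have := vmod hL hvL hinj s (t+1) (by omega) (by omega) h2
          rw [Nat.mod_eq_of_lt (by omega)] at this
          rcases eq_or_lt_of_le (show t + 1 ≤ L by omega) with h3 | h3
          · rw [h3, Nat.mod_self] at this
            omega
          · rw [Nat.mod_eq_of_lt h3] at this
            omega
      have e3 : ¬ (v s = v 0) := fun h => by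
        have := hinj s 0 hs (by omega) h
        omega
      have e4 : ¬ (du = true ∧ v s = v 0) := fun h => e3 h.2
      have e5 : ¬ (dd = true ∧ v s = v 0) := fun h => e3 h.2
      have h4 := halt (s-1) (by omega)
      rw [show s - 1 + 1 = s by omega] at h4
      rw [e1, e2, if_neg e4, if_neg e5, h4]
      cases dbl (s-1) <;> simp
  · push_neg at hy
    have e1 : (∑ t ∈ Finset.range L, if dbl t = true ∧ y = v t then (1:ℕ) else 0) = 0 := by
      apply count_zero
      rintro t ht ⟨-, h2⟩
      exact hy t ht h2
    have e2 : (∑ t ∈ Finset.range L, if dbl t = false ∧ y = v (t+1) then (1:ℕ) else 0) = 0 := by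
      apply count_zero
      rintro t ht ⟨-, h2⟩
      rcases eq_or_lt_of_le (show t + 1 ≤ L by omega) with h3 | h3
      · rw [h3, hvL] at h2
        exact hy 0 (by omega) h2
      · exact hy (t+1) h3 h2
    rw [e1, e2, if_neg (fun h => hy 0 (by omega) h.2), if_neg (fun h => hy 0 (by omega) h.2)]

end SwitchVals

private lemma switch_aux (c : V → V → ℕ) (hcs : ∀ i j, c i j = c j i)
    (Z : V → V → ℕ) (R : V → ℕ)
    (hZc : ∀ i j, Z i j ≤ c i j)
    (hrow : ∀ i, ∑ j, Z i j = R i) (hcol : ∀ j, ∑ i, Z i j = R j)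
    (hL : 3 ≤ L) (hvL : v L = v 0)
    (hedge : ∀ t, t < L → Z (v (t+1)) (v t) < Z (v t) (v (t+1)))
    (hinj : ∀ s t, s < L → t < L → v s = v t → s = t)
    (halt : ∀ t, t + 1 < L → dbl (t+1) = !dbl t)
    (h2row : (if dbl (L-1) = true then (1:ℕ) else 0) + (if du = true then 1 else 0)
      = (if dbl 0 = false then 1 else 0) + (if dd = true then 1 else 0))
    (h2col : (if dbl 0 = true then (1:ℕ) else 0) + (if du = true then 1 else 0)
      = (if dbl (L-1) = false then 1 else 0) + (if dd = true then 1 else 0))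
    (hdu : du = true → Z (v 0) (v 0) < c (v 0) (v 0))
    (hdd : dd = true → 1 ≤ Z (v 0) (v 0))
    (hnand : ¬ (du = true ∧ dd = true)) :
    ∃ Z' : V → V → ℕ, (∀ i j, Z' i j ≤ c i j) ∧ (∀ i, ∑ j, Z' i j = R i) ∧
      (∀ j, ∑ i, Z' i j = R j) ∧ mu Z' < mu Z := by
  classical
  have hnl := no_loop hL hvL hinj
  have hnr := no_reverse hL hvL hinj
  set Z' : V → V → ℕ := fun x y => Z x y + PP L v dbl du x y - MM L v dbl dd x y with hZ'def
  have hZ'eq : ∀ x y, Z' x y = Z x y + PP L v dbl du x y - MM L v dbl dd x y := fun x y => rfl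
  -- M is bounded by Z
  have hM_le : ∀ x y, MM L v dbl dd x y ≤ Z x y := by
    intro x y
    by_cases hE : ∃ t, t < L ∧ x = v t ∧ y = v (t+1)
    · obtain ⟨t, ht, hx, hy⟩ := hE
      rw [MM_eq_of_edge hL hvL hinj t ht hx hy]
      have h1 := hedge t ht
      rw [← hx, ← hy] at h1
      split <;> omega
    · by_cases hD : x = v 0 ∧ y = v 0
      · rw [MM_eq_of_diag hL hvL hinj hD.1 hD.2]
        have := hdd
        cases dd
        · simp
        · rw [hD.1, hD.2]
          simpa using hdd rfl
      · rw [MM_eq_zero hL hvL hinj (fun s hs h => hE ⟨s, hs, h.1, h.2⟩) hD]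
        exact Nat.zero_le _
  -- capacity
  have hcap : ∀ x y, Z' x y ≤ c x y := by
    intro x y
    rw [hZ'eq]
    by_cases hE : ∃ t, t < L ∧ x = v (t+1) ∧ y = v t
    · obtain ⟨t, ht, hx, hy⟩ := hE
      rw [PP_eq_of_edge hL hvL hinj t ht hx hy,
        MM_eq_zero hL hvL hinj
          (fun s hs h => hnr s t hs ht (hy.symm.trans h.2) (hx.symm.trans h.1))
          (fun h => hnl t ht ((hy.symm.trans h.2).trans (h.1.symm.trans hx)))]
      have h1 := hedge t ht
      rw [← hx, ← hy] at h1
      have h2 := hZc y x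
      have h3 := hcs y x
      split <;> omega
    · by_cases hD : x = v 0 ∧ y = v 0
      · rw [PP_eq_of_diag hL hvL hinj hD.1 hD.2]
        have h2 := hZc x y
        have h4 := hM_le x y
        cases du
        · simp only [Bool.false_eq_true, if_false]
          omega
        · have h3 := hdu rfl
          rw [hD.1, hD.2] at h2 h4 ⊢
          rw [if_pos rfl]
          omega
      · rw [PP_eq_zero hL hvL hinj (fun s hs h => hE ⟨s, hs, h.1, h.2⟩) hD]
        have h2 := hZc x y
        omega
  -- row sums
  have hrow' : ∀ x, ∑ y, Z' x y = R x := by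
    intro x
    have e0 : ∀ y, Z' x y + MM L v dbl dd x y = Z x y + PP L v dbl du x y := by
      intro y
      rw [hZ'eq]
      have := hM_le x y
      omega
    have e1 : ∑ y, Z' x y + ∑ y, MM L v dbl dd x y = ∑ y, Z x y + ∑ y, PP L v dbl du x y := by
      rw [← Finset.sum_add_distrib, ← Finset.sum_add_distrib]
      exact Finset.sum_congr rfl fun y _ => e0 y
    have e2 := rowPP hL hvL hinj (dbl := dbl) (du := du) x
    have e3 := rowMM hL hvL hinj (dbl := dbl) (dd := dd) x
    have e4 := row_balance hL hvL hinj halt h2row x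
    have e5 := hrow x
    omega
  -- col sums
  have hcol' : ∀ y, ∑ x, Z' x y = R y := by
    intro y
    have e0 : ∀ x, Z' x y + MM L v dbl dd x y = Z x y + PP L v dbl du x y := by
      intro x
      rw [hZ'eq]
      have := hM_le x y
      omega
    have e1 : ∑ x, Z' x y + ∑ x, MM L v dbl dd x y = ∑ x, Z x y + ∑ x, PP L v dbl du x y := by
      rw [← Finset.sum_add_distrib, ← Finset.sum_add_distrib]
      exact Finset.sum_congr rfl fun x _ => e0 x
    have e2 := colPP hL hvL hinj (dbl := dbl) (du := du) y
    have e3 := colMM hL hvL hinj (dbl := dbl) (dd := dd) y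
    have e4 := col_balance hL hvL hinj halt h2col y
    have e5 := hcol y
    omega
  -- measure decreases
  have hval : ∀ t, t < L →
      Z' (v t) (v (t+1)) = Z (v t) (v (t+1)) - (if dbl t = false then 1 else 0) ∧
      Z' (v (t+1)) (v t) = Z (v (t+1)) (v t) + (if dbl t = true then 1 else 0) := by
    intro t ht
    have hA : PP L v dbl du (v t) (v (t+1)) = 0 := by
      apply PP_eq_zero hL hvL hinj
      · rintro s hs ⟨h1, h2⟩
        exact hnr s t hs ht h1 h2
      · rintro ⟨h1, h2⟩
        exact hnl t ht (h1.trans h2.symm)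
    have hB : MM L v dbl dd (v t) (v (t+1)) = if dbl t = false then 1 else 0 :=
      MM_eq_of_edge hL hvL hinj t ht rfl rfl
    have hC : PP L v dbl du (v (t+1)) (v t) = if dbl t = true then 1 else 0 :=
      PP_eq_of_edge hL hvL hinj t ht rfl rfl
    have hD : MM L v dbl dd (v (t+1)) (v t) = 0 := by
      apply MM_eq_zero hL hvL hinj
      · rintro s hs ⟨h1, h2⟩
        exact hnr s t hs ht h2 h1
      · rintro ⟨h1, h2⟩
        exact hnl t ht (h2.trans h1.symm)
    constructor
    · rw [hZ'eq, hA, hB]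
      omega
    · rw [hZ'eq, hC, hD]
      have h1 := hedge t ht
      split <;> omega
  have hpt : ∀ p : V × V, Z' p.1 p.2 - Z' p.2 p.1 ≤ Z p.1 p.2 - Z p.2 p.1 := by
    rintro ⟨x, y⟩
    dsimp only
    by_cases hxy : x = y
    · subst hxy
      simp
    by_cases hE1 : ∃ t, t < L ∧ x = v t ∧ y = v (t+1)
    · obtain ⟨t, ht, hx, hy⟩ := hE1
      subst hx; subst hy
      obtain ⟨h1, h2⟩ := hval t ht
      have h3 := hedge t ht
      rw [h1, h2]
      cases hb : dbl t <;> simp [hb] <;> omega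
    by_cases hE2 : ∃ t, t < L ∧ y = v t ∧ x = v (t+1)
    · obtain ⟨t, ht, hy, hx⟩ := hE2
      subst hx; subst hy
      obtain ⟨h1, h2⟩ := hval t ht
      have h3 := hedge t ht
      rw [h1, h2]
      cases hb : dbl t <;> simp [hb] <;> omega
    · have hA : PP L v dbl du x y = 0 := by
        apply PP_eq_zero hL hvL hinj
        · rintro s hs ⟨h1, h2⟩
          exact hE2 ⟨s, hs, h2, h1⟩
        · rintro ⟨h1, h2⟩
          exact hxy (h1.trans h2.symm)
      have hB : MM L v dbl dd x y = 0 := by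
        apply MM_eq_zero hL hvL hinj
        · rintro s hs ⟨h1, h2⟩
          exact hE1 ⟨s, hs, h1, h2⟩
        · rintro ⟨h1, h2⟩
          exact hxy (h1.trans h2.symm)
      have hC : PP L v dbl du y x = 0 := by
        apply PP_eq_zero hL hvL hinj
        · rintro s hs ⟨h1, h2⟩
          exact hE1 ⟨s, hs, h2, h1⟩
        · rintro ⟨h1, h2⟩
          exact hxy (h2.trans h1.symm)
      have hD : MM L v dbl dd y x = 0 := by
        apply MM_eq_zero hL hvL hinj
        · rintro s hs ⟨h1, h2⟩
          exact hE2 ⟨s, hs, h1, h2⟩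
        · rintro ⟨h1, h2⟩
          exact hxy (h2.trans h1.symm)
      rw [hZ'eq, hZ'eq, hA, hB, hC, hD]
      omega
  have hstrict : Z' (v 0) (v 1) - Z' (v 1) (v 0) < Z (v 0) (v 1) - Z (v 1) (v 0) := by
    obtain ⟨h1, h2⟩ := hval 0 (by omega)
    have h3 := hedge 0 (by omega)
    simp only [Nat.zero_add] at h1 h2 h3
    rw [h1, h2]
    cases hb : dbl 0 <;> simp [hb] <;> omega
  refine ⟨Z', hcap, hrow', hcol', ?_⟩
  unfold mu
  apply Finset.sum_lt_sum (fun p _ => hpt p)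
  exact ⟨(v 0, v 1), Finset.mem_univ _, hstrict⟩

private lemma switch (c : V → V → ℕ) (hcs : ∀ i j, c i j = c j i)
    (Z : V → V → ℕ) (R : V → ℕ)
    (hZc : ∀ i j, Z i j ≤ c i j)
    (hrow : ∀ i, ∑ j, Z i j = R i) (hcol : ∀ j, ∑ i, Z i j = R j)
    (hL : 3 ≤ L) (hvL : v L = v 0)
    (hedge : ∀ t, t < L → Z (v (t+1)) (v t) < Z (v t) (v (t+1)))
    (hinj : ∀ s t, s < L → t < L → v s = v t → s = t)
    (hgood : 1 ≤ c (v 0) (v 0)) :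
    ∃ Z' : V → V → ℕ, (∀ i j, Z' i j ≤ c i j) ∧ (∀ i, ∑ j, Z' i j = R i) ∧
      (∀ j, ∑ i, Z' i j = R j) ∧ mu Z' < mu Z := by
  classical
  rcases Nat.even_or_odd L with hpar | hpar
  · -- even cycle: double at even positions, no defect
    have hL1 : (L - 1) % 2 = 1 := by
      obtain ⟨k, hk⟩ := hpar
      omega
    apply switch_aux L v (fun t => decide (t % 2 = 0)) false false c hcs Z R hZc hrow hcol
      hL hvL hedge hinj
    · intro t _
      rcases Nat.mod_two_eq_zero_or_one t with h | h <;>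
        simp [Nat.add_mod, h]
    · simp [hL1]
    · simp [hL1]
    · simp
    · simp
    · simp
  · by_cases hz : 1 ≤ Z (v 0) (v 0)
    · -- odd cycle, decrement the diagonal at v 0
      have hL1 : (L - 1) % 2 = 0 := by
        obtain ⟨k, hk⟩ := hpar
        omega
      apply switch_aux L v (fun t => decide (t % 2 = 0)) false true c hcs Z R hZc hrow hcol
        hL hvL hedge hinj
      · intro t _
        rcases Nat.mod_two_eq_zero_or_one t with h | h <;>
          simp [Nat.add_mod, h]
      · simp [hL1]
      · simp [hL1]
      · simp
      · exact fun _ => hz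
      · simp
    · -- odd cycle, increment the diagonal at v 0
      have hL1 : (L - 1) % 2 = 0 := by
        obtain ⟨k, hk⟩ := hpar
        omega
      apply switch_aux L v (fun t => decide (t % 2 = 1)) true false c hcs Z R hZc hrow hcol
        hL hvL hedge hinj
      · intro t _
        rcases Nat.mod_two_eq_zero_or_one t with h | h <;>
          simp [Nat.add_mod, h]
      · simp [hL1]
      · simp [hL1]
      · intro _
        omega
      · simp
      · simp

private lemma core (c : V → V → ℕ) (hcs : ∀ i j, c i j = c j i)
    (hbad : ∀ v w : V, c v v = 0 → c w w = 0 → v = w) (R : V → ℕ)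
    (Z : V → V → ℕ)
    (hZc : ∀ i j, Z i j ≤ c i j)
    (hrow : ∀ i, ∑ j, Z i j = R i) (hcol : ∀ j, ∑ i, Z i j = R j) :
    ∃ Z' : V → V → ℕ, (∀ i j, Z' i j ≤ c i j) ∧ (∀ i, ∑ j, Z' i j = R i) ∧
      (∀ j, ∑ i, Z' i j = R j) ∧ (∀ i j, Z' i j = Z' j i) := by
  classical
  suffices h : ∀ N, ∀ Z : V → V → ℕ, mu Z ≤ N → (∀ i j, Z i j ≤ c i j) →
      (∀ i, ∑ j, Z i j = R i) → (∀ j, ∑ i, Z i j = R j) →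
      ∃ Z' : V → V → ℕ, (∀ i j, Z' i j ≤ c i j) ∧ (∀ i, ∑ j, Z' i j = R i) ∧
        (∀ j, ∑ i, Z' i j = R j) ∧ (∀ i j, Z' i j = Z' j i) by
    exact h (mu Z) Z le_rfl hZc hrow hcol
  intro N
  induction N with
  | zero =>
    intro Z hmu hZc hrow hcol
    refine ⟨Z, hZc, hrow, hcol, ?_⟩
    intro i j
    have h0 : mu Z = 0 := by omega
    unfold mu at h0
    rw [Finset.sum_eq_zero_iff] at h0
    have a := h0 (i, j) (Finset.mem_univ _)
    have b := h0 (j, i) (Finset.mem_univ _)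
    simp only at a b
    omega
  | succ N IH =>
    intro Z hmu hZc hrow hcol
    by_cases h0 : mu Z = 0
    · exact IH Z (by omega) hZc hrow hcol
    · have hex : ∃ p : V × V, Z p.2 p.1 < Z p.1 p.2 := by
        by_contra hc
        push_neg at hc
        apply h0
        unfold mu
        apply Finset.sum_eq_zero
        intro p _
        have := hc p
        omega
      obtain ⟨⟨i0, j0⟩, hij⟩ := hex
      simp only at hij
      obtain ⟨L, v, hL, hvL, hedge, hinj, hgood⟩ :=
        exists_cycle Z R c hbad hrow hcol i0 j0 hij
      obtain ⟨Z'', hZ''c, hrow'', hcol'', hmu''⟩ :=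
        switch L v c hcs Z R hZc hrow hcol hL hvL hedge hinj hgood
      exact IH Z'' (by omega) hZ''c hrow'' hcol''

end Switch

section Reduce

private def emb1 (n : ℕ) (i : Fin (n / 2)) : Fin n := ⟨i.val, by have := i.isLt; omega⟩
private def emb2 (n : ℕ) (i : Fin (n / 2)) : Fin n := ⟨n - 1 - i.val, by have := i.isLt; omega⟩
private def embc (n : ℕ) (k : Fin (n % 2)) : Fin n := ⟨n / 2, by have := k.isLt; omega⟩

private def eqvFun (n : ℕ) : (Fin (n/2) ⊕ Fin (n%2)) ⊕ Fin (n/2) → Fin n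
  | .inl (.inl i) => emb1 n i
  | .inl (.inr k) => embc n k
  | .inr i => emb2 n i

private def eqvInv (n : ℕ) (r : Fin n) : (Fin (n/2) ⊕ Fin (n%2)) ⊕ Fin (n/2) :=
  if h : r.val < n/2 then .inl (.inl ⟨r.val, h⟩)
  else if h2 : n/2 + n%2 ≤ r.val then .inr ⟨n - 1 - r.val, by have := r.isLt; omega⟩
  else .inl (.inr ⟨0, by have := r.isLt; omega⟩)

private def eqv (n : ℕ) : ((Fin (n/2) ⊕ Fin (n%2)) ⊕ Fin (n/2)) ≃ Fin n where
  toFun := eqvFun n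
  invFun := eqvInv n
  left_inv := by
    rintro ((i | k) | i)
    · simp only [eqvFun, eqvInv, emb1]
      exact dif_pos i.isLt
    · simp only [eqvFun, eqvInv, embc]
      exact (dif_neg (show ¬ (n/2 < n/2) by omega)).trans
        ((dif_neg (show ¬ (n/2 + n%2 ≤ n/2) by have := k.isLt; omega)).trans
          (congrArg (fun x => (Sum.inl (Sum.inr x) : ((Fin (n/2) ⊕ Fin (n%2)) ⊕ Fin (n/2))))
            (Fin.ext (show (0:ℕ) = k.val by have := k.isLt; omega))))
    · simp only [eqvFun, eqvInv, emb2]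
      exact (dif_neg (show ¬ (n - 1 - i.val < n/2) by have := i.isLt; omega)).trans
        ((dif_pos (show n/2 + n%2 ≤ n - 1 - i.val by have := i.isLt; omega)).trans
          (congrArg (fun x => (Sum.inr x : ((Fin (n/2) ⊕ Fin (n%2)) ⊕ Fin (n/2))))
            (Fin.ext (show n - 1 - (n - 1 - i.val) = i.val by have := i.isLt; omega))))
  right_inv := by
    intro r
    simp only [eqvInv]
    split_ifs with h1 h2
    · rfl
    · exact Fin.ext (show n - 1 - (n - 1 - r.val) = r.val by have := r.isLt; omega)
    · exact Fin.ext (show n/2 = r.val by have := r.isLt; omega)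

private lemma sum_part (n : ℕ) (F : Fin n → ℕ) :
    ∑ r, F r = (∑ i : Fin (n/2), F (emb1 n i) + ∑ k : Fin (n%2), F (embc n k))
      + ∑ i : Fin (n/2), F (emb2 n i) := by
  rw [← Fintype.sum_equiv (eqv n) (fun x => F (eqvFun n x)) F (fun x => rfl)]
  rw [Fintype.sum_sum_type, Fintype.sum_sum_type]
  rfl

private lemma rev1 (n : ℕ) (i : Fin (n/2)) : (emb1 n i).rev = emb2 n i :=
  Fin.ext (by simp only [Fin.val_rev, emb1, emb2]; have := i.isLt; omega)

private lemma rev2 (n : ℕ) (i : Fin (n/2)) : (emb2 n i).rev = emb1 n i :=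
  Fin.ext (by simp only [Fin.val_rev, emb1, emb2]; have := i.isLt; omega)

private lemma revc (n : ℕ) (k : Fin (n%2)) : (embc n k).rev = embc n k :=
  Fin.ext (by simp only [Fin.val_rev, embc]; have := k.isLt; omega)

private def capY (n : ℕ) : (Fin (n/2) ⊕ Fin (n%2)) → (Fin (n/2) ⊕ Fin (n%2)) → ℕ
  | .inl _, .inl _ => 2
  | .inl _, .inr _ => 1
  | .inr _, .inl _ => 1
  | .inr _, .inr _ => 0

private def Ymat (n : ℕ) (A : Matrix (Fin n) (Fin n) ℕ) :
    (Fin (n/2) ⊕ Fin (n%2)) → (Fin (n/2) ⊕ Fin (n%2)) → ℕ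
  | .inl i, .inl j => A (emb1 n i) (emb1 n j) + A (emb1 n i) (emb2 n j)
  | .inl i, .inr k => A (emb1 n i) (embc n k)
  | .inr k, .inl j => A (embc n k) (emb1 n j)
  | .inr _, .inr _ => 0

private def Rp (n : ℕ) (R : Fin n → ℕ) : (Fin (n/2) ⊕ Fin (n%2)) → ℕ
  | .inl i => R (emb1 n i)
  | .inr k => R (embc n k) / 2

private def recon (n : ℕ) (q : ℕ) (Y' : (Fin (n/2) ⊕ Fin (n%2)) → (Fin (n/2) ⊕ Fin (n%2)) → ℕ)
    (r s : Fin n) : ℕ :=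
  if hr : r.val < n/2 then
    if hs : s.val < n/2 then (if 1 ≤ Y' (.inl ⟨r.val, hr⟩) (.inl ⟨s.val, hs⟩) then 1 else 0)
    else if hs2 : n/2 + n%2 ≤ s.val then
      (if 2 ≤ Y' (.inl ⟨r.val, hr⟩) (.inl ⟨n - 1 - s.val, by have := s.isLt; omega⟩) then 1 else 0)
    else Y' (.inl ⟨r.val, hr⟩) (.inr ⟨0, by have := s.isLt; omega⟩)
  else if hr2 : n/2 + n%2 ≤ r.val then
    if hs : s.val < n/2 then
      (if 2 ≤ Y' (.inl ⟨n - 1 - r.val, by have := r.isLt; omega⟩) (.inl ⟨s.val, hs⟩) then 1 else 0)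
    else if hs2 : n/2 + n%2 ≤ s.val then
      (if 1 ≤ Y' (.inl ⟨n - 1 - r.val, by have := r.isLt; omega⟩)
        (.inl ⟨n - 1 - s.val, by have := s.isLt; omega⟩) then 1 else 0)
    else Y' (.inl ⟨n - 1 - r.val, by have := r.isLt; omega⟩) (.inr ⟨0, by have := s.isLt; omega⟩)
  else
    if hs : s.val < n/2 then Y' (.inr ⟨0, by have := r.isLt; omega⟩) (.inl ⟨s.val, hs⟩)
    else if hs2 : n/2 + n%2 ≤ s.val then
      Y' (.inr ⟨0, by have := r.isLt; omega⟩) (.inl ⟨n - 1 - s.val, by have := s.isLt; omega⟩)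
    else q

section ReconEval

variable {n : ℕ} (q : ℕ) (Y' : (Fin (n/2) ⊕ Fin (n%2)) → (Fin (n/2) ⊕ Fin (n%2)) → ℕ)

private lemma rE1 (i j : Fin (n/2)) :
    recon n q Y' (emb1 n i) (emb1 n j) = (if 1 ≤ Y' (.inl i) (.inl j) then 1 else 0) := by
  unfold recon
  rw [dif_pos (show (emb1 n i).val < n/2 from i.isLt),
    dif_pos (show (emb1 n j).val < n/2 from j.isLt)]
  rfl


private lemma rE2 (i j : Fin (n/2)) :
    recon n q Y' (emb1 n i) (emb2 n j) = (if 2 ≤ Y' (.inl i) (.inl j) then 1 else 0) := by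
  unfold recon
  rw [dif_pos (show (emb1 n i).val < n/2 from i.isLt),
    dif_neg (show ¬ (emb2 n j).val < n/2 from
      (show ¬ (n - 1 - j.val < n/2) by have := j.isLt; omega)),
    dif_pos (show n/2 + n%2 ≤ (emb2 n j).val from
      (show n/2 + n%2 ≤ n - 1 - j.val by have := j.isLt; omega))]
  have hk : ∀ h, (⟨n - 1 - (emb2 n j).val, h⟩ : Fin (n/2)) = j := fun h =>
    Fin.ext (show n - 1 - (n - 1 - j.val) = j.val by have := j.isLt; omega)
  rw [hk]
  rfl


private lemma rE3 (i : Fin (n/2)) (k : Fin (n%2)) :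
    recon n q Y' (emb1 n i) (embc n k) = Y' (.inl i) (.inr k) := by
  unfold recon
  rw [dif_pos (show (emb1 n i).val < n/2 from i.isLt),
    dif_neg (show ¬ (embc n k).val < n/2 from (show ¬ (n/2 < n/2) by omega)),
    dif_neg (show ¬ n/2 + n%2 ≤ (embc n k).val from
      (show ¬ (n/2 + n%2 ≤ n/2) by have := k.isLt; omega))]
  have hk : ∀ h, (⟨0, h⟩ : Fin (n%2)) = k := fun h =>
    Fin.ext (show (0:ℕ) = k.val by have := k.isLt; omega)
  rw [hk]
  rfl


private lemma rE4 (i j : Fin (n/2)) :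
    recon n q Y' (emb2 n i) (emb1 n j) = (if 2 ≤ Y' (.inl i) (.inl j) then 1 else 0) := by
  unfold recon
  rw [dif_neg (show ¬ (emb2 n i).val < n/2 from
      (show ¬ (n - 1 - i.val < n/2) by have := i.isLt; omega)),
    dif_pos (show n/2 + n%2 ≤ (emb2 n i).val from
      (show n/2 + n%2 ≤ n - 1 - i.val by have := i.isLt; omega)),
    dif_pos (show (emb1 n j).val < n/2 from j.isLt)]
  have hk : ∀ h, (⟨n - 1 - (emb2 n i).val, h⟩ : Fin (n/2)) = i := fun h =>
    Fin.ext (show n - 1 - (n - 1 - i.val) = i.val by have := i.isLt; omega)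
  rw [hk]
  rfl


private lemma rE5 (i j : Fin (n/2)) :
    recon n q Y' (emb2 n i) (emb2 n j) = (if 1 ≤ Y' (.inl i) (.inl j) then 1 else 0) := by
  unfold recon
  rw [dif_neg (show ¬ (emb2 n i).val < n/2 from
      (show ¬ (n - 1 - i.val < n/2) by have := i.isLt; omega)),
    dif_pos (show n/2 + n%2 ≤ (emb2 n i).val from
      (show n/2 + n%2 ≤ n - 1 - i.val by have := i.isLt; omega)),
    dif_neg (show ¬ (emb2 n j).val < n/2 from
      (show ¬ (n - 1 - j.val < n/2) by have := j.isLt; omega)),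
    dif_pos (show n/2 + n%2 ≤ (emb2 n j).val from
      (show n/2 + n%2 ≤ n - 1 - j.val by have := j.isLt; omega))]
  have hki : ∀ h, (⟨n - 1 - (emb2 n i).val, h⟩ : Fin (n/2)) = i := fun h =>
    Fin.ext (show n - 1 - (n - 1 - i.val) = i.val by have := i.isLt; omega)
  have hkj : ∀ h, (⟨n - 1 - (emb2 n j).val, h⟩ : Fin (n/2)) = j := fun h =>
    Fin.ext (show n - 1 - (n - 1 - j.val) = j.val by have := j.isLt; omega)
  rw [hki, hkj]


private lemma rE6 (i : Fin (n/2)) (k : Fin (n%2)) :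
    recon n q Y' (emb2 n i) (embc n k) = Y' (.inl i) (.inr k) := by
  unfold recon
  rw [dif_neg (show ¬ (emb2 n i).val < n/2 from
      (show ¬ (n - 1 - i.val < n/2) by have := i.isLt; omega)),
    dif_pos (show n/2 + n%2 ≤ (emb2 n i).val from
      (show n/2 + n%2 ≤ n - 1 - i.val by have := i.isLt; omega)),
    dif_neg (show ¬ (embc n k).val < n/2 from (show ¬ (n/2 < n/2) by omega)),
    dif_neg (show ¬ n/2 + n%2 ≤ (embc n k).val from
      (show ¬ (n/2 + n%2 ≤ n/2) by have := k.isLt; omega))]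
  have hki : ∀ h, (⟨n - 1 - (emb2 n i).val, h⟩ : Fin (n/2)) = i := fun h =>
    Fin.ext (show n - 1 - (n - 1 - i.val) = i.val by have := i.isLt; omega)
  have hk : ∀ h, (⟨0, h⟩ : Fin (n%2)) = k := fun h =>
    Fin.ext (show (0:ℕ) = k.val by have := k.isLt; omega)
  rw [hki, hk]


private lemma rE7 (k : Fin (n%2)) (j : Fin (n/2)) :
    recon n q Y' (embc n k) (emb1 n j) = Y' (.inr k) (.inl j) := by
  unfold recon
  rw [dif_neg (show ¬ (embc n k).val < n/2 from (show ¬ (n/2 < n/2) by omega)),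
    dif_neg (show ¬ n/2 + n%2 ≤ (embc n k).val from
      (show ¬ (n/2 + n%2 ≤ n/2) by have := k.isLt; omega)),
    dif_pos (show (emb1 n j).val < n/2 from j.isLt)]
  have hk : ∀ h, (⟨0, h⟩ : Fin (n%2)) = k := fun h =>
    Fin.ext (show (0:ℕ) = k.val by have := k.isLt; omega)
  rw [hk]
  rfl


private lemma rE8 (k : Fin (n%2)) (j : Fin (n/2)) :
    recon n q Y' (embc n k) (emb2 n j) = Y' (.inr k) (.inl j) := by
  unfold recon
  rw [dif_neg (show ¬ (embc n k).val < n/2 from (show ¬ (n/2 < n/2) by omega)),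
    dif_neg (show ¬ n/2 + n%2 ≤ (embc n k).val from
      (show ¬ (n/2 + n%2 ≤ n/2) by have := k.isLt; omega)),
    dif_neg (show ¬ (emb2 n j).val < n/2 from
      (show ¬ (n - 1 - j.val < n/2) by have := j.isLt; omega)),
    dif_pos (show n/2 + n%2 ≤ (emb2 n j).val from
      (show n/2 + n%2 ≤ n - 1 - j.val by have := j.isLt; omega))]
  have hk : ∀ h, (⟨0, h⟩ : Fin (n%2)) = k := fun h =>
    Fin.ext (show (0:ℕ) = k.val by have := k.isLt; omega)
  have hkj : ∀ h, (⟨n - 1 - (emb2 n j).val, h⟩ : Fin (n/2)) = j := fun h =>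
    Fin.ext (show n - 1 - (n - 1 - j.val) = j.val by have := j.isLt; omega)
  rw [hk, hkj]


private lemma rE9 (k k' : Fin (n%2)) :
    recon n q Y' (embc n k) (embc n k') = q := by
  unfold recon
  rw [dif_neg (show ¬ (embc n k).val < n/2 from (show ¬ (n/2 < n/2) by omega)),
    dif_neg (show ¬ n/2 + n%2 ≤ (embc n k).val from
      (show ¬ (n/2 + n%2 ≤ n/2) by have := k.isLt; omega)),
    dif_neg (show ¬ (embc n k').val < n/2 from (show ¬ (n/2 < n/2) by omega)),
    dif_neg (show ¬ n/2 + n%2 ≤ (embc n k').val from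
      (show ¬ (n/2 + n%2 ≤ n/2) by have := k'.isLt; omega))]

end ReconEval

private lemma hcases (n : ℕ) (r : Fin n) :
    (∃ i, r = emb1 n i) ∨ (∃ k, r = embc n k) ∨ (∃ i, r = emb2 n i) := by
  by_cases h1 : r.val < n/2
  · exact Or.inl ⟨⟨r.val, h1⟩, Fin.ext rfl⟩
  · by_cases h2 : n/2 + n%2 ≤ r.val
    · refine Or.inr (Or.inr ⟨⟨n - 1 - r.val, by have := r.isLt; omega⟩, Fin.ext ?_⟩)
      simp only [emb2]
      have := r.isLt
      omega
    · refine Or.inr (Or.inl ⟨⟨0, by have := r.isLt; omega⟩, Fin.ext ?_⟩)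
      simp only [embc]
      omega

end Reduce

/-- **(0,1)-matrices with `D_×` symmetry versus centrosymmetric ones.**
`𝒜^×(R,R) ≠ ∅` iff `𝒜^π(R,R) ≠ ∅`. -/
theorem klein_diagonal_zeroOne_iff_centrosymmetric (n : ℕ) (R : Fin n → ℕ)
    (hRle : ∀ i, R i ≤ n) :
    (∃ A : Matrix (Fin n) (Fin n) ℕ,
        (∀ i j, A i j = 0 ∨ A i j = 1) ∧
        (∀ i, ∑ j, A i j = R i) ∧
        (∀ j, ∑ i, A i j = R j) ∧
        (∀ i j, A i j = A j i) ∧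
        (∀ i j, A i j = A j.rev i.rev)) ↔
    (∃ A : Matrix (Fin n) (Fin n) ℕ,
        (∀ i j, A i j = 0 ∨ A i j = 1) ∧
        (∀ i, ∑ j, A i j = R i) ∧
        (∀ j, ∑ i, A i j = R j) ∧
        (∀ i j, A i j = A i.rev j.rev)) := by
  constructor
  · rintro ⟨A, h01, hr, hc, hsym, hanti⟩
    exact ⟨A, h01, hr, hc, fun i j => (hanti i j).trans (hsym _ _)⟩
  · rintro ⟨A, h01, hr, hc, hcen⟩
    classical
    have hA1 : ∀ r s, A r s ≤ 1 := fun r s => by rcases h01 r s with h | h <;> omega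
    have hpal : ∀ r : Fin n, R (Fin.rev r) = R r := by
      intro r
      rw [← hr r, ← hr (Fin.rev r)]
      calc ∑ s, A (Fin.rev r) s = ∑ s, A r (Fin.rev s) :=
            Finset.sum_congr rfl fun s _ => by rw [hcen (Fin.rev r) s, Fin.rev_rev]
        _ = ∑ s, A r s := Fintype.sum_equiv Fin.revPerm _ _ (fun s => rfl)
    have hcen2 : ∀ i j, A (emb1 n i) (emb2 n j) = A (emb2 n i) (emb1 n j) := by
      intro i j
      rw [hcen (emb1 n i) (emb2 n j), rev1, rev2]
    have hcenc1 : ∀ (k : Fin (n%2)) j, A (embc n k) (emb2 n j) = A (embc n k) (emb1 n j) := by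
      intro k j
      rw [hcen (embc n k) (emb2 n j), revc, rev2]
    have hcenc2 : ∀ (k : Fin (n%2)) i, A (emb2 n i) (embc n k) = A (emb1 n i) (embc n k) := by
      intro k i
      rw [hcen (emb2 n i) (embc n k), rev2, revc]
    -- capacities
    have hcsY : ∀ v w, capY n v w = capY n w v := by
      rintro (i | k) (j | k') <;> rfl
    have hbadY : ∀ v w, capY n v v = 0 → capY n w w = 0 → v = w := by
      rintro (i | k) (j | k') h1 h2 <;> simp only [capY] at h1 h2
      · omega
      · omega
      · omega
      · congr 1
        exact Fin.ext (by have := k.isLt; have := k'.isLt; omega)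
    have hYc : ∀ v w, Ymat n A v w ≤ capY n v w := by
      rintro (i | k) (j | k')
      · have a := hA1 (emb1 n i) (emb1 n j)
        have b := hA1 (emb1 n i) (emb2 n j)
        simp only [Ymat, capY]
        omega
      · simp only [Ymat, capY]
        exact hA1 _ _
      · simp only [Ymat, capY]
        exact hA1 _ _
      · simp only [Ymat, capY]
        exact le_refl 0
    have hsck : ∀ (F : Fin (n%2) → ℕ) (k : Fin (n%2)) (cst : ℕ), (∀ k', F k' = cst) →
        ∑ k' : Fin (n%2), F k' = cst := by
      intro F k cst hF
      have hp : n % 2 = 1 := by have := k.isLt; omega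
      rw [Finset.sum_congr rfl (fun k' _ => hF k'), Finset.sum_const, Finset.card_univ,
        Fintype.card_fin, hp, one_smul]
    have hcrow : ∀ k : Fin (n%2), R (embc n k)
        = (∑ j : Fin (n/2), A (embc n k) (emb1 n j)) * 2 + A (embc n k) (embc n k) := by
      intro k
      rw [← hr (embc n k), sum_part n (A (embc n k))]
      have e3 : ∑ j : Fin (n/2), A (embc n k) (emb2 n j)
          = ∑ j : Fin (n/2), A (embc n k) (emb1 n j) :=
        Finset.sum_congr rfl fun j _ => hcenc1 k j
      have e4 : ∑ k' : Fin (n%2), A (embc n k) (embc n k') = A (embc n k) (embc n k) :=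
        hsck _ k _ (fun k' => rfl)
      rw [e3, e4]
      ring
    have hccol : ∀ k : Fin (n%2), R (embc n k)
        = (∑ i : Fin (n/2), A (emb1 n i) (embc n k)) * 2 + A (embc n k) (embc n k) := by
      intro k
      rw [← hc (embc n k), sum_part n (fun r => A r (embc n k))]
      have e3 : ∑ i : Fin (n/2), A (emb2 n i) (embc n k)
          = ∑ i : Fin (n/2), A (emb1 n i) (embc n k) :=
        Finset.sum_congr rfl fun i _ => hcenc2 k i
      have e4 : ∑ k' : Fin (n%2), A (embc n k') (embc n k) = A (embc n k) (embc n k) :=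
        hsck _ k _ (fun k' => rfl)
      rw [e3, e4]
      ring
    have hYrow : ∀ v, ∑ w, Ymat n A v w = Rp n R v := by
      rintro (i | k)
      · rw [Fintype.sum_sum_type]
        simp only [Ymat, Rp]
        rw [← hr (emb1 n i), sum_part n (A (emb1 n i)), Finset.sum_add_distrib]
        ring
      · rw [Fintype.sum_sum_type]
        simp only [Ymat, Rp]
        have h1 := hcrow k
        have h2 := hA1 (embc n k) (embc n k)
        have h3 : ∑ _k' : Fin (n%2), (0:ℕ) = 0 := Finset.sum_const_zero
        omega
    have hYcol : ∀ w, ∑ v, Ymat n A v w = Rp n R w := by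
      rintro (j | k)
      · rw [Fintype.sum_sum_type]
        simp only [Ymat, Rp]
        rw [← hc (emb1 n j), sum_part n (fun r => A r (emb1 n j)), Finset.sum_add_distrib]
        have e2 : ∑ i : Fin (n/2), A (emb1 n i) (emb2 n j)
            = ∑ i : Fin (n/2), A (emb2 n i) (emb1 n j) :=
          Finset.sum_congr rfl fun i _ => hcen2 i j
        rw [e2]
        ring
      · rw [Fintype.sum_sum_type]
        simp only [Ymat, Rp]
        have h1 := hccol k
        have h2 := hA1 (embc n k) (embc n k)
        have h3 : ∑ _k' : Fin (n%2), (0:ℕ) = 0 := Finset.sum_const_zero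
        omega
    obtain ⟨Y', hY'c, hY'row, hY'col, hY'sym⟩ :=
      core (capY n) hcsY hbadY (Rp n R) (Ymat n A) hYc hYrow hYcol
    set q : ℕ := if h : 0 < n % 2 then R (embc n ⟨0, h⟩) % 2 else 0 with hqdef
    have hq1 : q ≤ 1 := by
      rw [hqdef]
      split
      · omega
      · omega
    have hqk : ∀ k : Fin (n%2), q = R (embc n k) % 2 := by
      intro k
      have hp : 0 < n % 2 := by have := k.isLt; omega
      rw [hqdef, dif_pos hp]
      rfl
    -- symmetry of the reconstruction
    have hsymA : ∀ r s, recon n q Y' r s = recon n q Y' s r := by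
      intro r s
      rcases hcases n r with ⟨i, rfl⟩ | ⟨k, rfl⟩ | ⟨i, rfl⟩ <;>
        rcases hcases n s with ⟨j, rfl⟩ | ⟨k', rfl⟩ | ⟨j, rfl⟩
      · rw [rE1, rE1, hY'sym]
      · rw [rE3, rE7, hY'sym]
      · rw [rE2, rE4, hY'sym]
      · rw [rE7, rE3, hY'sym]
      · rw [rE9 q Y' k k', rE9 q Y' k' k]
      · rw [rE8, rE6, hY'sym]
      · rw [rE4, rE2, hY'sym]
      · rw [rE6, rE8, hY'sym]
      · rw [rE5, rE5, hY'sym]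
    have hcenA : ∀ r s, recon n q Y' r s = recon n q Y' r.rev s.rev := by
      intro r s
      rcases hcases n r with ⟨i, rfl⟩ | ⟨k, rfl⟩ | ⟨i, rfl⟩ <;>
        rcases hcases n s with ⟨j, rfl⟩ | ⟨k', rfl⟩ | ⟨j, rfl⟩
      · rw [rev1, rev1, rE1, rE5]
      · rw [rev1, revc, rE3, rE6]
      · rw [rev1, rev2, rE2, rE4, hY'sym]
      · rw [revc, rev1, rE7, rE8]
      · rw [revc, revc]
      · rw [revc, rev2, rE8, rE7]
      · rw [rev2, rev1, rE4, rE2, hY'sym]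
      · rw [rev2, revc, rE6, rE3]
      · rw [rev2, rev2, rE5, rE1]
    -- row sums of the reconstruction
    have hrowA : ∀ r, ∑ s, recon n q Y' r s = R r := by
      intro r
      rcases hcases n r with ⟨i, rfl⟩ | ⟨k, rfl⟩ | ⟨i, rfl⟩
      · rw [sum_part n (fun s => recon n q Y' (emb1 n i) s)]
        have e1 : ∑ j : Fin (n/2), recon n q Y' (emb1 n i) (emb1 n j)
            = ∑ j : Fin (n/2), (if 1 ≤ Y' (.inl i) (.inl j) then 1 else 0) :=
          Finset.sum_congr rfl fun j _ => rE1 q Y' i j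
        have e2 : ∑ k : Fin (n%2), recon n q Y' (emb1 n i) (embc n k)
            = ∑ k : Fin (n%2), Y' (.inl i) (.inr k) :=
          Finset.sum_congr rfl fun k _ => rE3 q Y' i k
        have e3 : ∑ j : Fin (n/2), recon n q Y' (emb1 n i) (emb2 n j)
            = ∑ j : Fin (n/2), (if 2 ≤ Y' (.inl i) (.inl j) then 1 else 0) :=
          Finset.sum_congr rfl fun j _ => rE2 q Y' i j
        have e4 : (∑ j : Fin (n/2), (if 1 ≤ Y' (.inl i) (.inl j) then (1:ℕ) else 0))
            + ∑ j : Fin (n/2), (if 2 ≤ Y' (.inl i) (.inl j) then (1:ℕ) else 0)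
            = ∑ j : Fin (n/2), Y' (.inl i) (.inl j) := by
          rw [← Finset.sum_add_distrib]
          refine Finset.sum_congr rfl fun j _ => ?_
          have hb := hY'c (.inl i) (.inl j)
          simp only [capY] at hb
          split_ifs <;> omega
        have e5 := hY'row (.inl i)
        rw [Fintype.sum_sum_type] at e5
        simp only [Rp] at e5
        rw [e1, e2, e3]
        omega
      · rw [sum_part n (fun s => recon n q Y' (embc n k) s)]
        have e1 : ∑ j : Fin (n/2), recon n q Y' (embc n k) (emb1 n j)
            = ∑ j : Fin (n/2), Y' (.inr k) (.inl j) :=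
          Finset.sum_congr rfl fun j _ => rE7 q Y' k j
        have e2 : ∑ k' : Fin (n%2), recon n q Y' (embc n k) (embc n k') = q :=
          hsck _ k _ (fun k' => rE9 q Y' k k')
        have e3 : ∑ j : Fin (n/2), recon n q Y' (embc n k) (emb2 n j)
            = ∑ j : Fin (n/2), Y' (.inr k) (.inl j) :=
          Finset.sum_congr rfl fun j _ => rE8 q Y' k j
        have e5 := hY'row (.inr k)
        rw [Fintype.sum_sum_type] at e5
        simp only [Rp] at e5
        have e6 : ∑ k' : Fin (n%2), Y' (.inr k) (.inr k') = 0 := by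
          apply Finset.sum_eq_zero
          intro k' _
          have hb := hY'c (.inr k) (.inr k')
          simp only [capY] at hb
          omega
        have e7 := hqk k
        rw [e1, e2, e3]
        omega
      · rw [sum_part n (fun s => recon n q Y' (emb2 n i) s)]
        have e1 : ∑ j : Fin (n/2), recon n q Y' (emb2 n i) (emb1 n j)
            = ∑ j : Fin (n/2), (if 2 ≤ Y' (.inl i) (.inl j) then 1 else 0) :=
          Finset.sum_congr rfl fun j _ => rE4 q Y' i j
        have e2 : ∑ k : Fin (n%2), recon n q Y' (emb2 n i) (embc n k)
            = ∑ k : Fin (n%2), Y' (.inl i) (.inr k) :=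
          Finset.sum_congr rfl fun k _ => rE6 q Y' i k
        have e3 : ∑ j : Fin (n/2), recon n q Y' (emb2 n i) (emb2 n j)
            = ∑ j : Fin (n/2), (if 1 ≤ Y' (.inl i) (.inl j) then 1 else 0) :=
          Finset.sum_congr rfl fun j _ => rE5 q Y' i j
        have e4 : (∑ j : Fin (n/2), (if 1 ≤ Y' (.inl i) (.inl j) then (1:ℕ) else 0))
            + ∑ j : Fin (n/2), (if 2 ≤ Y' (.inl i) (.inl j) then (1:ℕ) else 0)
            = ∑ j : Fin (n/2), Y' (.inl i) (.inl j) := by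
          rw [← Finset.sum_add_distrib]
          refine Finset.sum_congr rfl fun j _ => ?_
          have hb := hY'c (.inl i) (.inl j)
          simp only [capY] at hb
          split_ifs <;> omega
        have e5 := hY'row (.inl i)
        rw [Fintype.sum_sum_type] at e5
        simp only [Rp] at e5
        have e8 : R (emb2 n i) = R (emb1 n i) := by
          rw [← rev1 n i, hpal]
        rw [e1, e2, e3, e8]
        omega
    refine ⟨fun r s => recon n q Y' r s, ?_, hrowA, ?_, hsymA, ?_⟩
    · intro r s
      dsimp only
      rcases hcases n r with ⟨i, rfl⟩ | ⟨k, rfl⟩ | ⟨i, rfl⟩ <;>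
        rcases hcases n s with ⟨j, rfl⟩ | ⟨k', rfl⟩ | ⟨j, rfl⟩
      · rw [rE1]
        split <;> simp
      · rw [rE3]
        have hb := hY'c (.inl i) (.inr k')
        simp only [capY] at hb
        omega
      · rw [rE2]
        split <;> simp
      · rw [rE7]
        have hb := hY'c (.inr k) (.inl j)
        simp only [capY] at hb
        omega
      · rw [rE9]
        omega
      · rw [rE8]
        have hb := hY'c (.inr k) (.inl j)
        simp only [capY] at hb
        omega
      · rw [rE4]
        split <;> simp
      · rw [rE6]
        have hb := hY'c (.inl i) (.inr k')
        simp only [capY] at hb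
        omega
      · rw [rE5]
        split <;> simp
    · intro s
      dsimp only
      calc ∑ r, recon n q Y' r s = ∑ r, recon n q Y' s r :=
            Finset.sum_congr rfl fun r _ => hsymA r s
        _ = R s := hrowA s
    · intro r s
      dsimp only
      rw [hsymA r s, hcenA s r]
end

section
/- Let R ∈ ℝ^m and S ∈ ℝ^n be nonnegative real vectors with equal component sums. There exists an m×n nonnegative real matrix A with row sum vector R and column sum vector S satisfying r_∞ A = A (i.e. a_{i,j} = a_{i, n+1−j} for all i,j) if and only if S is palindromic. -/
/-- **Real transportation with vertical-mirror symmetry (`r_∞`).**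
`𝒯^∞(R,S) ≠ ∅` iff `S` is palindromic. -/
theorem vertical_mirror_transportation (m n : ℕ) (R : Fin m → ℝ) (S : Fin n → ℝ)
    (hR : ∀ i, 0 ≤ R i) (hS : ∀ j, 0 ≤ S j)
    (hsum : ∑ i, R i = ∑ j, S j) :
    (∃ A : Matrix (Fin m) (Fin n) ℝ,
        (∀ i j, 0 ≤ A i j) ∧
        (∀ i, ∑ j, A i j = R i) ∧
        (∀ j, ∑ i, A i j = S j) ∧
        (∀ i j, A i j = A i j.rev)) ↔
      (∀ j, S j = S j.rev) := by
  constructor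
  · rintro ⟨A, _, _, hcol, hsym⟩ j
    rw [← hcol j, ← hcol j.rev]
    exact Finset.sum_congr rfl fun i _ => hsym i j
  · intro hpal
    set T := ∑ j, S j with hT
    by_cases hT0 : T = 0
    · have hSz : ∀ j, S j = 0 := by
        intro j
        have := (Finset.sum_eq_zero_iff_of_nonneg (fun j _ => hS j)).mp hT0
        exact this j (Finset.mem_univ j)
      have hRz : ∀ i, R i = 0 := by
        intro i
        have h : ∑ i, R i = 0 := by rw [hsum]; exact hT0
        exact (Finset.sum_eq_zero_iff_of_nonneg (fun i _ => hR i)).mp h i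
          (Finset.mem_univ i)
      exact ⟨0, fun i j => le_refl 0, fun i => by simp [hRz i],
        fun j => by simp [hSz j], fun i j => rfl⟩
    · refine ⟨fun i j => R i * S j / T, ?_, ?_, ?_, ?_⟩
      · intro i j
        exact div_nonneg (mul_nonneg (hR i) (hS j)) (by
          have : 0 ≤ T := Finset.sum_nonneg fun j _ => hS j
          linarith)
      · intro i
        rw [← Finset.sum_div, ← Finset.mul_sum, ← hT, mul_div_assoc,
          div_self hT0, mul_one]
      · intro j
        rw [← Finset.sum_div]
        rw [← Finset.sum_mul, hsum, mul_comm, mul_div_assoc,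
          div_self hT0, mul_one]
      · intro i j
        simp only []
        rw [hpal j]
end

section
/- Let R ∈ ℤ^m and S ∈ ℤ^n be nonnegative integer vectors with equal component sums. There exists an m×n nonnegative integer matrix A with row sum vector R and column sum vector S satisfying r_∞ A = A (i.e. a_{i,j} = a_{i, n+1−j} for all i,j) if and only if (a) S is palindromic, and (b) if n is even then every component of R is even, and if n is odd then s_⌈n/2⌉ ≥ o(R), where o(R) is the number of odd components of R. -/
lemma greedy (n : ℕ) : ∀ (S : Fin n → ℕ) (c : ℕ), c ≤ ∑ j, S j →
    ∃ T : Fin n → ℕ, (∀ j, T j ≤ S j) ∧ ∑ j, T j = c := by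
  induction n with
  | zero =>
    intro S c hc
    simp only [Finset.univ_eq_empty, Finset.sum_empty, Nat.le_zero] at hc
    exact ⟨fun _ => 0, fun j => Nat.zero_le _, by simp [hc]⟩
  | succ k ih =>
    intro S c hc
    rw [Fin.sum_univ_succ] at hc
    obtain ⟨T, hT, hTs⟩ := ih (fun j => S j.succ) (c - min c (S 0))
      (show c - min c (S 0) ≤ ∑ j : Fin k, S j.succ by omega)
    refine ⟨Fin.cons (min c (S 0)) T, ?_, ?_⟩
    · intro j
      refine Fin.cases ?_ ?_ j
      · simp
      · intro j'; simpa using hT j'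
    · rw [Fin.sum_univ_succ]
      simp only [Fin.cons_zero, Fin.cons_succ]
      rw [hTs]
      omega

lemma transport (m : ℕ) : ∀ (n : ℕ) (R : Fin m → ℕ) (S : Fin n → ℕ),
    (∑ i, R i) = ∑ j, S j →
    ∃ A : Fin m → Fin n → ℕ, (∀ i, ∑ j, A i j = R i) ∧ (∀ j, ∑ i, A i j = S j) := by
  induction m with
  | zero =>
    intro n R S hsum
    simp only [Finset.univ_eq_empty, Finset.sum_empty] at hsum
    have h0 : ∀ j, S j = 0 := by
      intro j
      exact Finset.sum_eq_zero_iff.mp hsum.symm j (Finset.mem_univ j)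
    exact ⟨fun _ _ => 0, fun i => Fin.elim0 i, fun j => by simp [h0 j]⟩
  | succ k ih =>
    intro n R S hsum
    rw [Fin.sum_univ_succ] at hsum
    have h0 : R 0 ≤ ∑ j, S j := by omega
    obtain ⟨T, hT, hTs⟩ := greedy n S (R 0) h0
    have h1 : (∑ i : Fin k, R i.succ) = ∑ j, (S j - T j) := by
      have h2 : ∑ j, (S j - T j) + ∑ j, T j = ∑ j, S j := by
        rw [← Finset.sum_add_distrib]
        exact Finset.sum_congr rfl fun j _ => by have := hT j; omega
      omega
    obtain ⟨A, hA1, hA2⟩ := ih n (fun i => R i.succ) (fun j => S j - T j) h1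
    refine ⟨Fin.cons T A, ?_, ?_⟩
    · intro i
      refine Fin.cases ?_ ?_ i
      · simpa using hTs
      · intro i'; simpa using hA1 i'
    · intro j
      rw [Fin.sum_univ_succ]
      simp only [Fin.cons_zero, Fin.cons_succ]
      rw [hA2 j]
      have := hT j
      omega

lemma sum_pair : ∀ (h : ℕ) (r : ℕ) (g : ℕ → ℕ), r < 2 →
    ∑ j ∈ Finset.range (2*h+r), g j
      = ∑ k ∈ Finset.range h, (g k + g (2*h+r-1-k)) + (if r = 1 then g h else 0) := by
  intro h
  induction h with
  | zero =>
    intro r g hr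
    interval_cases r <;> simp
  | succ p ih =>
    intro r g hr
    rw [show 2*(p+1)+r = (2*p+r)+1+1 by ring, Finset.sum_range_succ, Finset.sum_range_succ',
        ih r (fun i => g (i+1)) hr, Finset.sum_range_succ']

    have hcg : ∀ k ∈ Finset.range p,
        (g (k+1) + g (2*p+r-1-k+1))
          = (g (k+1) + g ((2*p+r)+1+1-1-(k+1))) := by
      intro k hk
      simp only [Finset.mem_range] at hk
      congr 2
      omega
    rw [Finset.sum_congr rfl hcg]
    by_cases hr1 : r = 1 <;> simp [hr1] <;> omega


lemma middle (m : ℕ) (R : Fin m → ℕ) (c : ℕ)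
    (h1 : (Finset.univ.filter fun i => R i % 2 = 1).card ≤ c)
    (h2 : c ≤ ∑ i, R i) (h3 : c % 2 = (∑ i, R i) % 2) :
    ∃ t : Fin m → ℕ, (∀ i, t i ≤ R i ∧ t i % 2 = R i % 2) ∧ ∑ i, t i = c := by
  have ho : (Finset.univ.filter fun i => R i % 2 = 1).card = ∑ i, R i % 2 := by
    rw [Finset.card_filter]
    exact Finset.sum_congr rfl fun i _ => by
      rcases Nat.mod_two_eq_zero_or_one (R i) with h | h <;> simp [h]
  have hRsplit : ∑ i, R i = ∑ i, R i % 2 + 2 * ∑ i, R i / 2 := by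
    rw [Finset.mul_sum, ← Finset.sum_add_distrib]
    exact Finset.sum_congr rfl fun i _ => by omega
  obtain ⟨u, hu, hus⟩ := greedy m (fun i => R i / 2) ((c - ∑ i, R i % 2) / 2)
    (show (c - ∑ i, R i % 2) / 2 ≤ ∑ i : Fin m, R i / 2 by omega)
  refine ⟨fun i => R i % 2 + 2 * u i, fun i => ?_, ?_⟩
  · have h4 := hu i
    change u i ≤ R i / 2 at h4
    refine ⟨show R i % 2 + 2 * u i ≤ R i by omega,
      show (R i % 2 + 2 * u i) % 2 = R i % 2 by omega⟩
  · show ∑ i, (R i % 2 + 2 * u i) = c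
    rw [Finset.sum_add_distrib, ← Finset.mul_sum]
    omega



/-- **Integral transportation with vertical-mirror symmetry (`r_∞`).**
`𝒯^∞_ℤ(R,S) ≠ ∅` iff (a) `S` is palindromic, and (b) if `n` is even then `R`
is even, while if `n` is odd then `s_{⌈n/2⌉} ≥ o(R)`, the number of odd
components of `R`. -/
theorem vertical_mirror_transportation_int (m n : ℕ) (R : Fin m → ℕ) (S : Fin n → ℕ)
    (hsum : ∑ i, R i = ∑ j, S j) :
    (∃ A : Matrix (Fin m) (Fin n) ℕ,
        (∀ i, ∑ j, A i j = R i) ∧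
        (∀ j, ∑ i, A i j = S j) ∧
        (∀ i j, A i j = A i j.rev)) ↔
      ((∀ j, S j = S j.rev) ∧
        (n % 2 = 0 → ∀ i, R i % 2 = 0) ∧
        (∀ hn : n % 2 = 1,
          (Finset.univ.filter fun i => R i % 2 = 1).card ≤ S ⟨n / 2, by omega⟩)) := by
  constructor
  · rintro ⟨A, hrow, hcol, hsym⟩
    have hrowdec : ∀ i, ∃ Bv : ℕ,
        R i = 2 * Bv + (if hn : n % 2 = 1 then A i ⟨n / 2, by omega⟩ else 0) := by
      intro i
      set g : ℕ → ℕ := fun x => if hx : x < n then A i ⟨x, hx⟩ else 0 with hg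
      have e1 : ∀ j : Fin n, g (j : ℕ) = A i j := by
        intro j
        simp only [hg, dif_pos j.isLt, Fin.eta]
      have hsum1 : ∑ j, A i j = ∑ x ∈ Finset.range n, g x := by
        rw [← Fin.sum_univ_eq_sum_range]
        exact Finset.sum_congr rfl fun j _ => (e1 j).symm
      have hpairs := sum_pair (n / 2) (n % 2) g (by omega)
      rw [show 2 * (n / 2) + n % 2 = n by omega] at hpairs
      have hgr : ∀ k ∈ Finset.range (n / 2), g k + g (n - 1 - k) = 2 * g k := by
        intro k hk
        simp only [Finset.mem_range] at hk
        have hk1 : k < n := by omega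
        have hk2 : n - 1 - k < n := by omega
        have hrev : (⟨k, hk1⟩ : Fin n).rev = ⟨n - 1 - k, hk2⟩ := by
          apply Fin.ext
          rw [Fin.val_rev]
          show n - (k + 1) = n - 1 - k
          omega
        have hs := hsym i ⟨k, hk1⟩
        rw [hrev] at hs
        simp only [hg, dif_pos hk1, dif_pos hk2]
        rw [← hs]
        ring
      rw [Finset.sum_congr rfl hgr] at hpairs
      refine ⟨∑ k ∈ Finset.range (n / 2), g k, ?_⟩
      rw [← hrow i, hsum1, hpairs, ← Finset.mul_sum]
      congr 1
      by_cases hn : n % 2 = 1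
      · rw [if_pos hn, dif_pos hn]
        simp only [hg, dif_pos (show n / 2 < n by omega)]
      · rw [if_neg hn, dif_neg hn]
    refine ⟨?_, ?_, ?_⟩
    · intro j
      rw [← hcol j, ← hcol j.rev]
      exact Finset.sum_congr rfl fun i _ => hsym i j
    · intro hn i
      obtain ⟨Bv, hB⟩ := hrowdec i
      rw [dif_neg (by omega)] at hB
      omega
    · intro hn
      have hmid : ∀ i ∈ Finset.univ.filter (fun i => R i % 2 = 1),
          1 ≤ A i ⟨n / 2, by omega⟩ := by
        intro i hi
        simp only [Finset.mem_filter] at hi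
        obtain ⟨Bv, hB⟩ := hrowdec i
        rw [dif_pos hn] at hB
        omega
      calc (Finset.univ.filter fun i => R i % 2 = 1).card
          = ∑ _i ∈ Finset.univ.filter (fun i => R i % 2 = 1), 1 := by
            rw [Finset.card_eq_sum_ones]
        _ ≤ ∑ i ∈ Finset.univ.filter (fun i => R i % 2 = 1), A i ⟨n / 2, by omega⟩ :=
            Finset.sum_le_sum hmid
        _ ≤ ∑ i, A i ⟨n / 2, by omega⟩ :=
            Finset.sum_le_sum_of_subset (Finset.filter_subset _ _)
        _ = S ⟨n / 2, by omega⟩ := hcol _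
  · rintro ⟨hpal, heven, hodd⟩
    classical
    set gS : ℕ → ℕ := fun x => if hx : x < n then S ⟨x, hx⟩ else 0 with hgS
    have hgSrev : ∀ x, x < n → gS (n - 1 - x) = gS x := by
      intro x hx
      simp only [hgS, dif_pos (show n - 1 - x < n by omega), dif_pos hx]
      have hp := hpal ⟨x, hx⟩
      have hrev : (⟨x, hx⟩ : Fin n).rev = ⟨n - 1 - x, by omega⟩ := by
        apply Fin.ext
        rw [Fin.val_rev]
        show n - (x + 1) = n - 1 - x
        omega
      rw [hp, hrev]
    set c : ℕ := if n % 2 = 1 then gS (n / 2) else 0 with hc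
    have hSsum : ∑ j, S j = 2 * (∑ k ∈ Finset.range (n / 2), gS k) + c := by
      have e1 : ∑ j, S j = ∑ x ∈ Finset.range n, gS x := by
        rw [← Fin.sum_univ_eq_sum_range]
        refine Finset.sum_congr rfl fun j _ => ?_
        simp only [hgS, dif_pos j.isLt, Fin.eta]
      have hpairs := sum_pair (n / 2) (n % 2) gS (by omega)
      rw [show 2 * (n / 2) + n % 2 = n by omega] at hpairs
      have hgr : ∀ k ∈ Finset.range (n / 2), gS k + gS (n - 1 - k) = 2 * gS k := by
        intro k hk
        simp only [Finset.mem_range] at hk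
        rw [hgSrev k (by omega)]
        ring
      rw [Finset.sum_congr rfl hgr, ← Finset.mul_sum] at hpairs
      rw [e1, hpairs, hc]
    obtain ⟨t, ht, hts⟩ : ∃ t : Fin m → ℕ,
        (∀ i, t i ≤ R i ∧ t i % 2 = R i % 2) ∧ ∑ i, t i = c := by
      by_cases hn : n % 2 = 1
      · refine middle m R c ?_ (by omega) (by omega)
        have hceq : c = S ⟨n / 2, by omega⟩ := by
          rw [hc, if_pos hn]
          simp only [hgS, dif_pos (show n / 2 < n by omega)]
        rw [hceq]
        exact hodd hn
      · refine ⟨fun _ => 0, fun i => ⟨Nat.zero_le _, by simp [heven (by omega) i]⟩, ?_⟩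
        simp [hc, hn]
    have ht0 : n % 2 = 0 → ∀ i, t i = 0 := by
      intro hn i
      have h0 : ∑ i, t i = 0 := by rw [hts, hc, if_neg (by omega)]
      exact Finset.sum_eq_zero_iff.mp h0 i (Finset.mem_univ i)
    have hsum2 : (∑ i, (R i - t i) / 2) = ∑ k : Fin (n / 2), gS (k : ℕ) := by
      have e1 : 2 * ∑ i, (R i - t i) / 2 = ∑ i, (R i - t i) := by
        rw [Finset.mul_sum]
        exact Finset.sum_congr rfl fun i _ => by have := ht i; omega
      have e2 : ∑ i, (R i - t i) + ∑ i, t i = ∑ i, R i := by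
        rw [← Finset.sum_add_distrib]
        exact Finset.sum_congr rfl fun i _ => by have := (ht i).1; omega
      have e3 : (∑ k : Fin (n / 2), gS (k : ℕ)) = ∑ k ∈ Finset.range (n / 2), gS k :=
        Fin.sum_univ_eq_sum_range gS (n / 2)
      omega
    obtain ⟨B, hB1, hB2⟩ :=
      transport m (n / 2) (fun i => (R i - t i) / 2) (fun k => gS (k : ℕ)) hsum2
    set F : Fin m → ℕ → ℕ := fun i x =>
      if hx : min x (n - 1 - x) < n / 2 then B i ⟨min x (n - 1 - x), hx⟩ else t i with hF
    have hFcongr : ∀ i a b, min a (n - 1 - a) = min b (n - 1 - b) → F i a = F i b := by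
      intro i a b hab
      simp only [hF]
      rw [hab]
    refine ⟨fun i j => F i (j : ℕ), ?_, ?_, ?_⟩
    · intro i
      show (∑ j : Fin n, F i (j : ℕ)) = R i
      rw [Fin.sum_univ_eq_sum_range (F i) n]
      have hpairs := sum_pair (n / 2) (n % 2) (F i) (by omega)
      rw [show 2 * (n / 2) + n % 2 = n by omega] at hpairs
      have hgr : ∀ k ∈ Finset.range (n / 2), F i k + F i (n - 1 - k) = 2 * F i k := by
        intro k hk
        simp only [Finset.mem_range] at hk
        rw [hFcongr i (n - 1 - k) k (by omega)]
        ring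
      rw [Finset.sum_congr rfl hgr, ← Finset.mul_sum] at hpairs
      rw [hpairs]
      have e2 : (∑ k ∈ Finset.range (n / 2), F i k) = (R i - t i) / 2 := by
        rw [← Fin.sum_univ_eq_sum_range (F i) (n / 2), ← hB1 i]
        refine Finset.sum_congr rfl fun k _ => ?_
        have hk : (k : ℕ) < n / 2 := k.isLt
        have hmin : min (k : ℕ) (n - 1 - (k : ℕ)) = (k : ℕ) := by omega
        simp only [hF, hmin, dif_pos hk, Fin.eta]
      rw [e2]
      have e3 : (if n % 2 = 1 then F i (n / 2) else 0) = t i := by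
        by_cases hn : n % 2 = 1
        · rw [if_pos hn]
          have hmin : min (n / 2) (n - 1 - n / 2) = n / 2 := by omega
          simp only [hF, hmin]
          rw [dif_neg (lt_irrefl _)]
        · rw [if_neg hn, ht0 (by omega) i]
      rw [e3]
      have := ht i
      omega
    · intro j
      show (∑ i, F i (j : ℕ)) = S j
      have hjlt := j.isLt
      by_cases hv : min (j : ℕ) (n - 1 - (j : ℕ)) < n / 2
      · have e1 : ∀ i : Fin m, F i (j : ℕ) = B i ⟨min (j : ℕ) (n - 1 - (j : ℕ)), hv⟩ := by
          intro i
          simp only [hF]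
          rw [dif_pos hv]
        rw [Finset.sum_congr rfl fun i _ => e1 i, hB2]
        show gS (min (j : ℕ) (n - 1 - (j : ℕ))) = S j
        have ej : gS (j : ℕ) = S j := by simp only [hgS, dif_pos j.isLt, Fin.eta]
        rcases le_total (j : ℕ) (n - 1 - (j : ℕ)) with hle | hle
        · rw [min_eq_left hle, ej]
        · rw [min_eq_right hle, hgSrev (j : ℕ) j.isLt, ej]
      · have hn1 : n % 2 = 1 ∧ (j : ℕ) = n / 2 := by omega
        have e1 : ∀ i : Fin m, F i (j : ℕ) = t i := by
          intro i
          simp only [hF]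
          rw [dif_neg hv]
        rw [Finset.sum_congr rfl fun i _ => e1 i, hts, hc, if_pos hn1.1]
        have hj : j = ⟨n / 2, by omega⟩ := Fin.ext hn1.2
        rw [hj]
        simp only [hgS, dif_pos (show n / 2 < n by omega)]
    · intro i j
      show F i (j : ℕ) = F i ((j.rev : Fin n) : ℕ)
      apply hFcongr
      have := j.isLt
      rw [Fin.val_rev]
      omega
end

section
/- Let R ∈ ℝ^m and S ∈ ℝ^n be nonnegative real vectors with equal component sums. (I) There exists an m×n nonnegative real matrix A with row sum vector R and column sum vector S satisfying r_0 A = A (i.e. a_{i,j} = a_{m+1−i, j} for all i,j) if and only if R is palindromic. (II) If R and S are nonnegative integer vectors, there exists such a matrix with nonnegative integer entries if and only if R is palindromic and, in addition, if m is even then every component of S is even, and if m is odd then r_⌈m/2⌉ ≥ o(S), where o(S) is the number of odd components of S. -/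
lemma rev_fixed_iff {m : ℕ} (i : Fin m) : i.rev = i ↔ 2 * i.val + 1 = m := by
  rw [Fin.ext_iff, Fin.val_rev]
  have := i.isLt
  omega

lemma rev_mid {m : ℕ} (hm : m % 2 = 1) : (Fin.rev ⟨m / 2, by have := 0; omega⟩ : Fin m) = ⟨m / 2, by have := 0; omega⟩ := by
  apply Fin.val_injective
  rw [Fin.val_rev]
  show m - (m / 2 + 1) = m / 2
  omega

lemma sum_symm_even {m : ℕ} (f : Fin m → ℕ) (hf : ∀ i, f i = f i.rev) (hm : m % 2 = 0) :
    (∑ i, f i) % 2 = 0 := by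
  have h : ((∑ i, f i : ℕ) : ZMod 2) = ((0 : ℕ) : ZMod 2) := by
    push_cast
    refine Finset.sum_involution (fun a _ => a.rev) (fun a _ => ?_) (fun a _ _ => ?_)
      (fun a _ => Finset.mem_univ _) (fun a _ => Fin.rev_rev a)
    · rw [← hf a, CharTwo.add_self_eq_zero]
    · intro h
      rw [rev_fixed_iff] at h
      omega
  have := (ZMod.natCast_eq_natCast_iff _ _ _).mp h
  simpa [Nat.ModEq] using this

lemma sum_symm_odd {m : ℕ} (f : Fin m → ℕ) (hf : ∀ i, f i = f i.rev) (hm : m % 2 = 1) :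
    (∑ i, f i) % 2 = f ⟨m / 2, by have := 0; omega⟩ % 2 := by
  set mid : Fin m := ⟨m / 2, by have := 0; omega⟩ with hmid
  have h : ((∑ i, f i : ℕ) : ZMod 2) = ((f mid : ℕ) : ZMod 2) := by
    push_cast
    rw [← Finset.add_sum_erase Finset.univ _ (Finset.mem_univ mid)]
    have hz : ∑ x ∈ Finset.univ.erase mid, ((f x : ZMod 2)) = 0 := by
      refine Finset.sum_involution (fun a _ => a.rev) (fun a _ => ?_) (fun a ha hfa => ?_)
        (fun a ha => ?_) (fun a _ => Fin.rev_rev a)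
      · rw [← hf a, CharTwo.add_self_eq_zero]
      · intro h
        rw [rev_fixed_iff] at h
        have : a = mid := by rw [Fin.ext_iff]; simp [hmid]; omega
        exact (Finset.mem_erase.mp ha).1 this
      · rw [Finset.mem_erase]
        refine ⟨?_, Finset.mem_univ _⟩
        intro h
        have : a = mid := by rw [← Fin.rev_rev a, h, hmid, rev_mid hm]
        exact (Finset.mem_erase.mp ha).1 this
    rw [hz, add_zero]
  exact (ZMod.natCast_eq_natCast_iff _ _ _).mp h

lemma sum_update_sub {p : ℕ} (f : Fin p → ℕ) (i : Fin p) (c : ℕ) (h : c ≤ f i) :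
    (∑ x, Function.update f i (f i - c) x) + c = ∑ x, f x := by
  rw [Finset.sum_update_of_mem (Finset.mem_univ i), ← Finset.erase_eq]
  have := Finset.add_sum_erase Finset.univ f (Finset.mem_univ i)
  omega

lemma sum_ind_single {p : ℕ} (i : Fin p) (c : ℕ) :
    ∑ x, (if x = i then c else 0) = c := by
  simp

lemma sum_ind_pair {p : ℕ} (i k : Fin p) (hik : i ≠ k) (c : ℕ) :
    ∑ x, (if x = i ∨ x = k then c else 0) = 2 * c := by
  have h : ∀ x : Fin p, (if x = i ∨ x = k then c else 0)
      = (if x = i then c else 0) + (if x = k then c else 0) := by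
    intro x
    by_cases h1 : x = i <;> by_cases h2 : x = k <;> simp_all
  rw [Finset.sum_congr rfl fun x _ => h x, Finset.sum_add_distrib, sum_ind_single, sum_ind_single]
  ring

lemma key (T : ℕ) : ∀ {m n : ℕ} (R' : Fin m → ℕ) (S' : Fin n → ℕ),
    ∑ i, R' i = T → ∑ i, R' i = ∑ j, S' j →
    (∀ i, R' i = R' i.rev) →
    (m % 2 = 0 → ∀ j, S' j % 2 = 0) →
    (∀ _ : m % 2 = 1, (Finset.univ.filter fun j => S' j % 2 = 1).card ≤ R' ⟨m / 2, by have := 0; omega⟩) →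
    ∃ A : Matrix (Fin m) (Fin n) ℕ,
      (∀ i, ∑ j, A i j = R' i) ∧ (∀ j, ∑ i, A i j = S' j) ∧ (∀ i j, A i j = A i.rev j) := by
  induction T using Nat.strong_induction_on with
  | _ T ih =>
  intro m n R' S' hT hsum hpal heven hmidc
  rcases Nat.eq_zero_or_pos T with h0 | hpos
  · subst h0
    have hR0 : ∀ i, R' i = 0 := fun i =>
      Finset.sum_eq_zero_iff.mp hT i (Finset.mem_univ i)
    have hS0 : ∀ j, S' j = 0 := fun j =>
      Finset.sum_eq_zero_iff.mp (hsum ▸ hT) j (Finset.mem_univ j)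
    exact ⟨fun _ _ => 0, fun i => by simp [hR0], fun j => by simp [hS0], fun _ _ => rfl⟩
  by_cases hodd : ∃ j, S' j % 2 = 1
  · -- odd column exists: m must be odd, decrement middle row
    obtain ⟨j, hj⟩ := hodd
    have hm : m % 2 = 1 := by
      rcases Nat.mod_two_eq_zero_or_one m with h | h
      · exact absurd (heven h j) (by omega)
      · exact h
    set mid : Fin m := ⟨m / 2, by have := 0; omega⟩ with hmiddef
    have hjmem : j ∈ Finset.univ.filter fun j' => S' j' % 2 = 1 := by
      simp [hj]
    have hcard1 : 1 ≤ (Finset.univ.filter fun j' => S' j' % 2 = 1).card :=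
      Finset.card_pos.mpr ⟨j, hjmem⟩
    have hmidc' : (Finset.univ.filter fun j' => S' j' % 2 = 1).card ≤ R' mid := hmidc hm
    have hRmid : 1 ≤ R' mid := le_trans hcard1 hmidc'
    set R'' := Function.update R' mid (R' mid - 1) with hR''def
    set S'' := Function.update S' j (S' j - 1) with hS''def
    have hSj1 : 1 ≤ S' j := by omega
    have hsR : (∑ i, R'' i) + 1 = ∑ i, R' i := sum_update_sub R' mid 1 hRmid
    have hsS : (∑ j', S'' j') + 1 = ∑ j', S' j' := sum_update_sub S' j 1 hSj1
    have hrevmid : Fin.rev mid = mid := rev_mid hm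
    have hpal'' : ∀ i, R'' i = R'' i.rev := by
      intro i
      by_cases hi : i = mid
      · rw [hi, hrevmid]
      · have hir : i.rev ≠ mid := by
          intro h
          exact hi (by rw [← Fin.rev_rev i, h, hrevmid])
        rw [hR''def, Function.update_of_ne hi, Function.update_of_ne hir]
        exact hpal i
    have hfilter : (Finset.univ.filter fun j' => S'' j' % 2 = 1)
        = (Finset.univ.filter fun j' => S' j' % 2 = 1).erase j := by
      ext j'
      simp only [Finset.mem_filter, Finset.mem_erase, Finset.mem_univ, true_and,
        hS''def, Function.update_apply]
      split_ifs with h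
      · subst h
        simp only [ne_eq, not_true_eq_false, false_and, iff_false]
        omega
      · simp [h]
    have hmid'' : ∀ _ : m % 2 = 1,
        (Finset.univ.filter fun j' => S'' j' % 2 = 1).card ≤ R'' ⟨m / 2, by have := 0; omega⟩ := by
      intro _
      have : R'' mid = R' mid - 1 := by rw [hR''def, Function.update_self]
      rw [hfilter]
      have hc := Finset.card_erase_of_mem hjmem
      show ((Finset.univ.filter fun j' => S' j' % 2 = 1).erase j).card ≤ R'' mid
      omega
    obtain ⟨A, hrow, hcol, hsymm⟩ := ih (T - 1) (by omega) R'' S''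
      (by omega) (by omega) hpal'' (fun h => by omega) hmid''
    refine ⟨fun i' j' => A i' j' + if i' = mid ∧ j' = j then 1 else 0, ?_, ?_, ?_⟩
    · intro i'
      rw [Finset.sum_add_distrib, hrow]
      by_cases hi : i' = mid
      · have : ∑ j', (if i' = mid ∧ j' = j then 1 else 0) = 1 := by
          simp [hi]
        rw [this, hi, hR''def, Function.update_self]
        omega
      · have : ∑ j', (if i' = mid ∧ j' = j then 1 else 0) = 0 := by
          simp [hi]
        rw [this, hR''def, Function.update_of_ne hi]
        simp
    · intro j'
      rw [Finset.sum_add_distrib, hcol]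
      by_cases hjj : j' = j
      · have : ∑ i', (if i' = mid ∧ j' = j then 1 else 0) = 1 := by
          simp [hjj]
        rw [this, hjj, hS''def, Function.update_self]
        omega
      · have : ∑ i', (if i' = mid ∧ j' = j then 1 else 0) = 0 := by
          simp [hjj]
        rw [this, hS''def, Function.update_of_ne hjj]
        simp
    · intro i' j'
      have hiff : i' = mid ↔ i'.rev = mid := by
        constructor
        · intro h; rw [h, hrevmid]
        · intro h; rw [← Fin.rev_rev i', h, hrevmid]
      have : (i' = mid ∧ j' = j) ↔ (i'.rev = mid ∧ j' = j) := by
        rw [hiff]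
      dsimp only
      rw [hsymm i' j']
      congr 1
      exact if_congr this rfl rfl
  · -- all columns even
    push_neg at hodd
    have hSev : ∀ j, S' j % 2 = 0 := fun j => by have := hodd j; omega
    have hexj : ∃ j, 0 < S' j := by
      by_contra h
      push_neg at h
      have : ∑ j, S' j = 0 := Finset.sum_eq_zero fun j _ => by have := h j; omega
      omega
    obtain ⟨j, hjpos⟩ := hexj
    have hSj2 : 2 ≤ S' j := by have := hSev j; omega
    have hexi : ∃ i, 0 < R' i := by
      by_contra h
      push_neg at h
      have : ∑ i, R' i = 0 := Finset.sum_eq_zero fun i _ => by have := h i; omega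
      omega
    obtain ⟨i, hipos⟩ := hexi
    set S'' := Function.update S' j (S' j - 2) with hS''def
    have hsS : (∑ j', S'' j') + 2 = ∑ j', S' j' := sum_update_sub S' j 2 hSj2
    have hSev'' : ∀ j', S'' j' % 2 = 0 := by
      intro j'
      rw [hS''def, Function.update_apply]
      split_ifs with h
      · have := hSev j; omega
      · exact hSev j'
    have hfilter'' : (Finset.univ.filter fun j' => S'' j' % 2 = 1) = ∅ := by
      ext j'
      simp [hSev'' j']
    by_cases hfix : i.rev = i
    · -- fixed row: m odd, i is the middle, R' i is even hence ≥ 2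
      have h2i : 2 * i.val + 1 = m := (rev_fixed_iff i).mp hfix
      have hm : m % 2 = 1 := by omega
      have hival : i.val = m / 2 := by omega
      have hRiev : R' i % 2 = 0 := by
        have hpar := sum_symm_odd R' hpal hm
        have hSpar : (∑ j', S' j') % 2 = 0 := by
          rw [Finset.sum_nat_mod]
          simp [hSev]
        have hie : i = (⟨m / 2, by have := 0; omega⟩ : Fin m) := by
          apply Fin.val_injective; exact hival
        rw [← hie] at hpar
        omega
      have hRi2 : 2 ≤ R' i := by omega
      set R'' := Function.update R' i (R' i - 2) with hR''def
      have hsR : (∑ x, R'' x) + 2 = ∑ x, R' x := sum_update_sub R' i 2 hRi2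
      have hpal'' : ∀ x, R'' x = R'' x.rev := by
        intro x
        by_cases hx : x = i
        · rw [hx, hfix]
        · have hxr : x.rev ≠ i := by
            intro h
            exact hx (by rw [← Fin.rev_rev x, h, hfix])
          rw [hR''def, Function.update_of_ne hx, Function.update_of_ne hxr]
          exact hpal x
      obtain ⟨A, hrow, hcol, hsymm⟩ := ih (T - 2) (by omega) R'' S''
        (by omega) (by omega) hpal'' (fun h => hSev'')
        (fun _ => by rw [hfilter'']; simp)
      refine ⟨fun i' j' => A i' j' + if i' = i ∧ j' = j then 2 else 0, ?_, ?_, ?_⟩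
      · intro i'
        rw [Finset.sum_add_distrib, hrow]
        by_cases hi' : i' = i
        · have : ∑ j', (if i' = i ∧ j' = j then 2 else 0) = 2 := by simp [hi']
          rw [this, hi', hR''def, Function.update_self]
          omega
        · have : ∑ j', (if i' = i ∧ j' = j then 2 else 0) = 0 := by simp [hi']
          rw [this, hR''def, Function.update_of_ne hi']
          simp
      · intro j'
        rw [Finset.sum_add_distrib, hcol]
        by_cases hjj : j' = j
        · have : ∑ i', (if i' = i ∧ j' = j then 2 else 0) = 2 := by simp [hjj]
          rw [this, hjj, hS''def, Function.update_self]
          omega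
        · have : ∑ i', (if i' = i ∧ j' = j then 2 else 0) = 0 := by simp [hjj]
          rw [this, hS''def, Function.update_of_ne hjj]
          simp
      · intro i' j'
        have hiff : i' = i ↔ i'.rev = i := by
          constructor
          · intro h; rw [h, hfix]
          · intro h; rw [← Fin.rev_rev i', h, hfix]
        dsimp only
        rw [hsymm i' j']
        congr 1
        exact if_congr (and_congr_left' hiff) rfl rfl
    · -- non-fixed row: decrement the pair (i, i.rev)
      have hpair : i ≠ i.rev := fun h => hfix h.symm
      have hRrev : R' i.rev = R' i := (hpal i).symm
      set g := Function.update R' i (R' i - 1) with hgdef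
      have hgrev : g i.rev = R' i.rev := Function.update_of_ne (fun h => hpair h.symm) _ _
      set R'' := Function.update g i.rev (g i.rev - 1) with hR''def
      have hsg : (∑ x, g x) + 1 = ∑ x, R' x := sum_update_sub R' i 1 hipos
      have hsR : (∑ x, R'' x) + 1 = ∑ x, g x := by
        have : 1 ≤ g i.rev := by rw [hgrev, hRrev]; omega
        exact sum_update_sub g i.rev 1 this
      have hR''eq : ∀ x, R'' x = R' x - (if x = i ∨ x = i.rev then 1 else 0) := by
        intro x
        rw [hR''def, hgdef]
        by_cases h1 : x = i.rev
        · subst h1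
          rw [Function.update_self, Function.update_of_ne fun h => hpair h.symm]
          simp
        · rw [Function.update_of_ne h1, Function.update_apply]
          by_cases h2 : x = i
          · subst h2
            simp
          · simp [h1, h2]
      have hpal'' : ∀ x, R'' x = R'' x.rev := by
        intro x
        rw [hR''eq x, hR''eq x.rev, ← hpal x]
        have : (x.rev = i ∨ x.rev = i.rev) ↔ (x = i ∨ x = i.rev) := by
          constructor
          · rintro (h | h)
            · right; rw [← Fin.rev_rev x, h]
            · left; rw [← Fin.rev_rev x, h, Fin.rev_rev]
          · rintro (h | h)
            · right; rw [h]
            · left; rw [h, Fin.rev_rev]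
        rw [if_congr this rfl rfl]
      have hmid'' : ∀ _ : m % 2 = 1,
          (Finset.univ.filter fun j' => S'' j' % 2 = 1).card ≤ R'' ⟨m / 2, by have := 0; omega⟩ := by
        intro _
        rw [hfilter'']
        simp
      obtain ⟨A, hrow, hcol, hsymm⟩ := ih (T - 2) (by omega) R'' S''
        (by omega) (by omega) hpal'' (fun h => hSev'') hmid''
      refine ⟨fun i' j' => A i' j' + if (i' = i ∨ i' = i.rev) ∧ j' = j then 1 else 0,
        ?_, ?_, ?_⟩
      · intro i'
        rw [Finset.sum_add_distrib, hrow, hR''eq i']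
        by_cases hi' : i' = i ∨ i' = i.rev
        · have : ∑ j', (if (i' = i ∨ i' = i.rev) ∧ j' = j then 1 else 0) = 1 := by
            simp [hi']
          rw [this, if_pos hi']
          have : 0 < R' i' := by
            rcases hi' with h | h
            · rw [h]; exact hipos
            · rw [h, hRrev]; exact hipos
          omega
        · have : ∑ j', (if (i' = i ∨ i' = i.rev) ∧ j' = j then 1 else 0) = 0 := by
            simp [hi']
          rw [this, if_neg hi']
          omega
      · intro j'
        rw [Finset.sum_add_distrib, hcol]
        by_cases hjj : j' = j
        · have : ∑ i', (if (i' = i ∨ i' = i.rev) ∧ j' = j then 1 else 0) = 2 := by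
            have he : ∀ i' : Fin m, (if (i' = i ∨ i' = i.rev) ∧ j' = j then 1 else 0)
                = (if i' = i ∨ i' = i.rev then 1 else 0) := by
              intro i'; simp [hjj]
            rw [Finset.sum_congr rfl fun x _ => he x]
            have := sum_ind_pair i i.rev hpair 1
            omega
          rw [this, hjj, hS''def, Function.update_self]
          omega
        · have : ∑ i', (if (i' = i ∨ i' = i.rev) ∧ j' = j then 1 else 0) = 0 := by
            simp [hjj]
          rw [this, hS''def, Function.update_of_ne hjj]
          simp
      · intro i' j'
        have hiff : (i' = i ∨ i' = i.rev) ↔ (i'.rev = i ∨ i'.rev = i.rev) := by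
          constructor
          · rintro (h | h)
            · right; rw [h]
            · left; rw [h, Fin.rev_rev]
          · rintro (h | h)
            · right; rw [← Fin.rev_rev i', h]
            · left; rw [← Fin.rev_rev i', h, Fin.rev_rev]
        dsimp only
        rw [hsymm i' j']
        congr 1
        exact if_congr (and_congr_left' hiff) rfl rfl

/-- **Transportation with horizontal-mirror symmetry (`r_0`).**
(I) `𝒯^0(R,S) ≠ ∅` iff `R` is palindromic.
(II) For nonnegative integer `R`, `S`: `𝒯^0_ℤ(R,S) ≠ ∅` iff `R` is palindromic
and, in addition, if `m` is even then `S` is even, while if `m` is odd then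
`r_{⌈m/2⌉} ≥ o(S)`. -/
theorem horizontal_mirror_transportation (m n : ℕ) (R : Fin m → ℝ) (S : Fin n → ℝ)
    (hR : ∀ i, 0 ≤ R i) (hS : ∀ j, 0 ≤ S j)
    (hsum : ∑ i, R i = ∑ j, S j) :
    ((∃ A : Matrix (Fin m) (Fin n) ℝ,
        (∀ i j, 0 ≤ A i j) ∧
        (∀ i, ∑ j, A i j = R i) ∧
        (∀ j, ∑ i, A i j = S j) ∧
        (∀ i j, A i j = A i.rev j)) ↔
      (∀ i, R i = R i.rev))
    ∧ (∀ (R' : Fin m → ℕ) (S' : Fin n → ℕ),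
        (∀ i, (R' i : ℝ) = R i) → (∀ j, (S' j : ℝ) = S j) →
        ((∃ A : Matrix (Fin m) (Fin n) ℕ,
            (∀ i, ∑ j, A i j = R' i) ∧
            (∀ j, ∑ i, A i j = S' j) ∧
            (∀ i j, A i j = A i.rev j)) ↔
          ((∀ i, R' i = R' i.rev) ∧
            (m % 2 = 0 → ∀ j, S' j % 2 = 0) ∧
            (∀ hm : m % 2 = 1,
              (Finset.univ.filter fun j => S' j % 2 = 1).card ≤ R' ⟨m / 2, by omega⟩)))) := by
  constructor
  · constructor
    · rintro ⟨A, _, hrow, _, hsymm⟩ i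
      rw [← hrow i, ← hrow i.rev]
      exact Finset.sum_congr rfl fun j _ => hsymm i j
    · intro hpal
      by_cases hT : ∑ i, R i = 0
      · have hR0 : ∀ i, R i = 0 := fun i =>
          (Finset.sum_eq_zero_iff_of_nonneg fun i _ => hR i).mp hT i (Finset.mem_univ i)
        have hS0 : ∀ j, S j = 0 := fun j =>
          (Finset.sum_eq_zero_iff_of_nonneg fun j _ => hS j).mp (by rw [← hsum, hT]) j
            (Finset.mem_univ j)
        exact ⟨fun _ _ => 0, fun _ _ => le_refl 0, fun i => by simp [hR0],
          fun j => by simp [hS0], fun _ _ => rfl⟩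
      · refine ⟨fun i j => R i * S j / (∑ i, R i), fun i j => ?_, ?_, ?_, ?_⟩
        · have hTnn : 0 ≤ ∑ i, R i := Finset.sum_nonneg fun i _ => hR i
          exact div_nonneg (mul_nonneg (hR i) (hS j)) hTnn
        · intro i
          rw [← Finset.sum_div, ← Finset.mul_sum, ← hsum, mul_div_assoc, div_self hT, mul_one]
        · intro j
          rw [← Finset.sum_div, ← Finset.sum_mul, mul_comm, mul_div_assoc, div_self hT, mul_one]
        · intro i j
          dsimp only
          rw [hpal i]
  · intro R' S' hR' hS'
    constructor
    · rintro ⟨A, hrow, hcol, hsymm⟩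
      refine ⟨?_, ?_, ?_⟩
      · intro i
        rw [← hrow i, ← hrow i.rev]
        exact Finset.sum_congr rfl fun j _ => hsymm i j
      · intro hm j
        rw [← hcol j]
        exact sum_symm_even (fun i => A i j) (fun i => hsymm i j) hm
      · intro hm
        set mid : Fin m := ⟨m / 2, by omega⟩ with hmiddef
        have hmidrow : ∀ j, S' j % 2 = (A mid j) % 2 := fun j => by
          rw [← hcol j]
          exact sum_symm_odd (fun i => A i j) (fun i => hsymm i j) hm
        calc (Finset.univ.filter fun j => S' j % 2 = 1).card
            = ∑ j ∈ Finset.univ.filter fun j => S' j % 2 = 1, 1 := by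
              rw [Finset.card_eq_sum_ones]
          _ ≤ ∑ j ∈ Finset.univ.filter fun j => S' j % 2 = 1, A mid j := by
              refine Finset.sum_le_sum fun j hj => ?_
              have h1 := hmidrow j
              have h2 : S' j % 2 = 1 := (Finset.mem_filter.mp hj).2
              omega
          _ ≤ ∑ j, A mid j :=
              Finset.sum_le_sum_of_subset (Finset.filter_subset _ _)
          _ = R' mid := hrow mid
    · rintro ⟨hpal', heven', hmid'⟩
      have hns : ∑ i, R' i = ∑ j, S' j := by
        have h : ((∑ i, R' i : ℕ) : ℝ) = ((∑ j, S' j : ℕ) : ℝ) := by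
          push_cast
          rw [Finset.sum_congr rfl fun i _ => hR' i, Finset.sum_congr rfl fun j _ => hS' j]
          exact hsum
        exact_mod_cast h
      exact key (∑ i, R' i) R' S' rfl hns hpal' heven' hmid'
end

section
/- Let R ∈ ℝ^m and S ∈ ℝ^n be nonnegative real vectors with equal component sums. There exists an m×n nonnegative real matrix with row sum vector R and column sum vector S invariant under both r_0 and r_∞ if and only if there exists such a matrix invariant under r_∞ and there exists such a matrix invariant under r_0. The same equivalence holds for nonnegative integer matrices when R and S are nonnegative integer vectors. -/
open Finset

/-- Folding sum: summing a rev-invariant-shaped function over `range n`. -/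
lemma kat_sum_fold : ∀ (b : ℕ) (n : ℕ) (g : ℕ → ℕ), n = 2*b + n % 2 →
    ∑ j ∈ range n, g (min j (n-1-j)) = 2 * ∑ j ∈ range b, g j + n % 2 * g b := by
  intro b
  induction b with
  | zero =>
    intro n g hn
    have h2 : n < 2 := by omega
    interval_cases n
    · simp
    · simp
  | succ b ih =>
    intro n g hn
    obtain ⟨n', rfl⟩ : ∃ n', n = n' + 2 := ⟨n - 2, by omega⟩
    have hn' : n' = 2*b + n' % 2 := by omega
    have key := ih n' (fun t => g (t+1)) hn'
    rw [Finset.sum_range_succ, Finset.sum_range_succ']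
    have e1 : ∀ j ∈ range n', (fun j => g (min (j+1) (n' + 2 - 1 - (j+1)))) j
        = (fun t => g (min t (n'-1-t) + 1)) j := by
      intro j hj
      simp only [mem_range] at hj
      show g (min (j+1) (n' + 2 - 1 - (j+1))) = g (min j (n'-1-j) + 1)
      congr 1
      omega
    rw [Finset.sum_congr rfl e1]
    have e2 : ∑ j ∈ range n', g (min j (n'-1-j) + 1)
        = 2 * ∑ j ∈ range b, g (j+1) + n' % 2 * g (b+1) := key
    have e3 : min (n'+1) (n' + 2 - 1 - (n'+1)) = 0 := by omega
    have e4 : min 0 (n'+2-1-0) = 0 := by omega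
    rw [e3, e4, e2, Finset.sum_range_succ' g b]
    have : (n'+2) % 2 = n' % 2 := by omega
    rw [this]
    ring

/-- Sum of a rev-symmetric function over `Fin n`. -/
lemma kat_sym_sum (n b : ℕ) (hn : n = 2*b + n % 2) (f : Fin n → ℕ) (g : ℕ → ℕ)
    (hg : ∀ j : Fin n, g j.val = f j) (hf : ∀ j, f j = f j.rev) :
    ∑ j, f j = 2 * ∑ j ∈ range b, g j + n % 2 * g b := by
  have e : ∀ j : Fin n, f j = g (min j.val (n-1-j.val)) := by
    intro j
    have hj := j.isLt
    rcases Nat.le_total j.val (n-1-j.val) with h | h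
    · have : min j.val (n-1-j.val) = j.val := by omega
      simp only [this, hg]
    · have h1 : min j.val (n-1-j.val) = (j.rev).val := by
        rw [Fin.val_rev]; omega
      simp only [h1, hg, ← hf]
  have h2 := Fin.sum_univ_eq_sum_range (fun t => g (min t (n-1-t))) n
  calc ∑ j, f j = ∑ j : Fin n, g (min j.val (n-1-j.val)) :=
        Finset.sum_congr rfl (fun j _ => e j)
    _ = ∑ j ∈ range n, g (min j (n-1-j)) := h2
    _ = _ := kat_sum_fold b n g hn

/-- Select values below caps with a prescribed total. -/
lemma kat_select_le : ∀ (a : ℕ) (c : ℕ → ℕ) (t : ℕ), t ≤ ∑ i ∈ range a, c i →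
    ∃ u : ℕ → ℕ, (∀ i, i < a → u i ≤ c i) ∧ ∑ i ∈ range a, u i = t := by
  intro a
  induction a with
  | zero => intro c t ht; simp at ht; exact ⟨0, by simp, by simp [ht]⟩
  | succ a ih =>
    intro c t ht
    rw [Finset.sum_range_succ] at ht
    set t' := min t (∑ i ∈ range a, c i) with ht'
    obtain ⟨u', hu1, hu2⟩ := ih c t' (min_le_right _ _)
    refine ⟨fun i => if i = a then t - t' else u' i, ?_, ?_⟩
    · intro i hi
      by_cases h : i = a
      · subst h; simp only [eq_self_iff_true, if_true]; omega
      · simp only [if_neg h]; exact hu1 i (by omega)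
    · rw [Finset.sum_range_succ, if_pos rfl]
      have : ∑ i ∈ range a, (if i = a then t - t' else u' i) = ∑ i ∈ range a, u' i := by
        apply Finset.sum_congr rfl
        intro i hi
        simp only [mem_range] at hi
        rw [if_neg (by omega)]
      rw [this, hu2]
      omega

/-- Select values with prescribed parities, below caps, with a prescribed total. -/
lemma kat_select_parity (a s : ℕ) (r : ℕ → ℕ)
    (hlo : ∑ i ∈ range a, r i % 2 ≤ s) (hhi : s ≤ ∑ i ∈ range a, r i)
    (hpar : s % 2 = (∑ i ∈ range a, r i) % 2) :
    ∃ x : ℕ → ℕ, (∀ i, i < a → x i ≤ r i ∧ x i % 2 = r i % 2) ∧ ∑ i ∈ range a, x i = s := by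
  set α := ∑ i ∈ range a, r i % 2 with hα
  have hsum2 : 2 * ∑ i ∈ range a, (r i / 2) + α = ∑ i ∈ range a, r i := by
    rw [Finset.mul_sum, ← Finset.sum_add_distrib]
    exact Finset.sum_congr rfl (fun i _ => by omega)
  have hmod : α % 2 = (∑ i ∈ range a, r i) % 2 := by
    rw [hα, Finset.sum_nat_mod]
    conv_rhs => rw [Finset.sum_nat_mod]
    congr 1
    exact Finset.sum_congr rfl (fun i _ => by omega)
  have hle : (s - α)/2 ≤ ∑ i ∈ range a, r i / 2 := by omega
  obtain ⟨u, hu1, hu2⟩ := kat_select_le a (fun i => r i / 2) ((s - α)/2) hle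
  refine ⟨fun i => r i % 2 + 2 * u i, ?_, ?_⟩
  · intro i hi
    have := hu1 i hi
    constructor
    · show r i % 2 + 2 * u i ≤ r i; omega
    · show (r i % 2 + 2 * u i) % 2 = r i % 2; omega
  · rw [Finset.sum_add_distrib, ← hα, ← Finset.mul_sum, hu2]
    omega

/-- Existence of a nonnegative integer transportation matrix. -/
lemma kat_transport (a b : ℕ) (r s : ℕ → ℕ)
    (h : ∑ i ∈ range a, r i = ∑ j ∈ range b, s j) :
    ∃ Q : ℕ → ℕ → ℕ, (∀ i, i < a → ∑ j ∈ range b, Q i j = r i) ∧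
      (∀ j, j < b → ∑ i ∈ range a, Q i j = s j) := by
  classical
  set F : ℕ → ℤ := fun i => ∑ k ∈ range (min i a), (r k : ℤ) with hF
  set G : ℕ → ℤ := fun j => ∑ k ∈ range (min j b), (s k : ℤ) with hG
  have hFmono : ∀ i i', i ≤ i' → F i ≤ F i' := by
    intro i i' hii
    apply Finset.sum_le_sum_of_subset_of_nonneg
    · exact Finset.range_subset_range.2 (by omega)
    · intro k _ _; positivity
  have hGmono : ∀ j j', j ≤ j' → G j ≤ G j' := by
    intro j j' hjj
    apply Finset.sum_le_sum_of_subset_of_nonneg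
    · exact Finset.range_subset_range.2 (by omega)
    · intro k _ _; positivity
  have hF0 : F 0 = 0 := by simp [hF]
  have hG0 : G 0 = 0 := by simp [hG]
  have hFnn : ∀ i, 0 ≤ F i := fun i => hF0 ▸ hFmono 0 i (Nat.zero_le _)
  have hGnn : ∀ j, 0 ≤ G j := fun j => hG0 ▸ hGmono 0 j (Nat.zero_le _)
  have hFG : F a = G b := by
    have h' : ((∑ i ∈ range a, r i : ℕ) : ℤ) = ((∑ j ∈ range b, s j : ℕ) : ℤ) := by
      exact_mod_cast h
    push_cast at h'
    simpa [hF, hG, min_self] using h'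
  have hFtop : ∀ i, F i ≤ F a := fun i => by
    by_cases hia : i ≤ a
    · exact hFmono i a hia
    · simp only [hF]; rw [min_eq_right (by omega : a ≤ i), min_self]
  have hGtop : ∀ j, G j ≤ G b := fun j => by
    by_cases hjb : j ≤ b
    · exact hGmono j b hjb
    · simp only [hG]; rw [min_eq_right (by omega : b ≤ j), min_self]
  have hFstep : ∀ i, i < a → F (i+1) = F i + r i := by
    intro i hia
    simp only [hF]
    rw [min_eq_left (by omega), min_eq_left (by omega), Finset.sum_range_succ]
  have hGstep : ∀ j, j < b → G (j+1) = G j + s j := by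
    intro j hjb
    simp only [hG]
    rw [min_eq_left (by omega), min_eq_left (by omega), Finset.sum_range_succ]
  set q : ℕ → ℕ → ℤ := fun i j =>
    (min (F (i+1)) (G (j+1)) + min (F i) (G j)) - (min (F i) (G (j+1)) + min (F (i+1)) (G j))
    with hq
  have hqnn : ∀ i j, 0 ≤ q i j := by
    intro i j
    have h1 : F i ≤ F (i+1) := hFmono i (i+1) (by omega)
    have h2 : G j ≤ G (j+1) := hGmono j (j+1) (by omega)
    simp only [hq, min_def]
    split_ifs <;> omega
  have hrow : ∀ i, i < a → ∑ j ∈ range b, q i j = r i := by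
    intro i hia
    have e : ∀ j ∈ range b, q i j =
        (fun j => min (F (i+1)) (G j) - min (F i) (G j)) (j+1)
        - (fun j => min (F (i+1)) (G j) - min (F i) (G j)) j := by
      intro j _
      simp only [hq]
      ring
    have hts := Finset.sum_range_sub (fun j => min (F (i+1)) (G j) - min (F i) (G j)) b
    rw [Finset.sum_congr rfl e, hts]
    have h1 : min (F (i+1)) (G b) = F (i+1) := min_eq_left (hFG ▸ hFtop (i+1))
    have h2 : min (F i) (G b) = F i := min_eq_left (hFG ▸ hFtop i)
    have h3 : min (F (i+1)) (G 0) = 0 := by rw [hG0, min_eq_right (hFnn _)]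
    have h4 : min (F i) (G 0) = 0 := by rw [hG0, min_eq_right (hFnn _)]
    rw [h1, h2, h3, h4, hFstep i hia]
    ring
  have hcol : ∀ j, j < b → ∑ i ∈ range a, q i j = s j := by
    intro j hjb
    have e : ∀ i ∈ range a, q i j =
        (fun i => min (F i) (G (j+1)) - min (F i) (G j)) (i+1)
        - (fun i => min (F i) (G (j+1)) - min (F i) (G j)) i := by
      intro i _
      simp only [hq]
      ring
    have hts := Finset.sum_range_sub (fun i => min (F i) (G (j+1)) - min (F i) (G j)) a
    rw [Finset.sum_congr rfl e, hts]
    have h1 : min (F a) (G (j+1)) = G (j+1) := min_eq_right (hFG ▸ hGtop (j+1))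
    have h2 : min (F a) (G j) = G j := min_eq_right (hFG ▸ hGtop j)
    have h3 : min (F 0) (G (j+1)) = 0 := by rw [hF0, min_eq_left (hGnn _)]
    have h4 : min (F 0) (G j) = 0 := by rw [hF0, min_eq_left (hGnn _)]
    rw [h1, h2, h3, h4, hGstep j hjb]
    ring
  refine ⟨fun i j => (q i j).toNat, ?_, ?_⟩
  · intro i hia
    have : ((∑ j ∈ range b, (q i j).toNat : ℕ) : ℤ) = (r i : ℤ) := by
      push_cast
      rw [Finset.sum_congr rfl (fun j _ => Int.toNat_of_nonneg (hqnn i j))]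
      exact hrow i hia
    exact_mod_cast this
  · intro j hjb
    have : ((∑ i ∈ range a, (q i j).toNat : ℕ) : ℤ) = (s j : ℤ) := by
      push_cast
      rw [Finset.sum_congr rfl (fun i _ => Int.toNat_of_nonneg (hqnn i j))]
      exact hcol j hjb
    exact_mod_cast this

/-- Assemble a `D₊`-invariant matrix from quadrant data. -/
lemma kat_assemble (m n a b : ℕ) (hm : m = 2*a + m % 2) (hn : n = 2*b + n % 2)
    (R : Fin m → ℕ) (S : Fin n → ℕ)
    (hRsym : ∀ i, R i = R i.rev) (hSsym : ∀ j, S j = S j.rev)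
    (Q : ℕ → ℕ → ℕ) (x y : ℕ → ℕ) (z : ℕ)
    (hrow : ∀ i : Fin m, i.val < a →
      2 * (∑ j ∈ range b, Q i.val j) + n % 2 * x i.val = R i)
    (hrowm : m % 2 = 1 → ∀ i : Fin m, i.val = a →
      2 * (∑ j ∈ range b, y j) + n % 2 * z = R i)
    (hcol : ∀ j : Fin n, j.val < b →
      2 * (∑ i ∈ range a, Q i j.val) + m % 2 * y j.val = S j)
    (hcolm : n % 2 = 1 → ∀ j : Fin n, j.val = b →
      2 * (∑ i ∈ range a, x i) + m % 2 * z = S j) :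
    ∃ A : Matrix (Fin m) (Fin n) ℕ,
      (∀ i, ∑ j, A i j = R i) ∧ (∀ j, ∑ i, A i j = S j) ∧
      (∀ i j, A i j = A i j.rev) ∧ (∀ i j, A i j = A i.rev j) := by
  classical
  set G : ℕ → ℕ → ℕ := fun p q =>
    if p < a then (if q < b then Q p q else x p) else (if q < b then y q else z) with hG
  refine ⟨fun i j => G (min i.val (m-1-i.val)) (min j.val (n-1-j.val)), ?_, ?_, ?_, ?_⟩
  · -- row sums
    intro i
    have hfold := kat_sum_fold b n (fun t => G (min i.val (m-1-i.val)) t) hn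
    have e1 : (∑ j : Fin n, G (min i.val (m-1-i.val)) (min j.val (n-1-j.val)))
        = ∑ j ∈ range n, (fun t => G (min i.val (m-1-i.val)) (min t (n-1-t))) j := by
      have := Fin.sum_univ_eq_sum_range
        (fun t => G (min i.val (m-1-i.val)) (min t (n-1-t))) n
      simp only at this ⊢
      exact this
    simp only
    rw [e1, hfold]
    set p := min i.val (m-1-i.val) with hp
    have hpi : p = i.val ∨ p = (i.rev).val := by
      rw [Fin.val_rev]
      have := i.isLt
      omega
    have hplt : p < m := by have := i.isLt; omega
    have hRp : R ⟨p, hplt⟩ = R i := by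
      rcases hpi with h | h
      · congr 1; exact Fin.ext h
      · rw [show (⟨p, hplt⟩ : Fin m) = i.rev from Fin.ext h, ← hRsym]
    by_cases hpa : p < a
    · have h1 : ∑ j ∈ range b, G p j = ∑ j ∈ range b, Q p j := by
        apply Finset.sum_congr rfl
        intro j hj
        simp only [mem_range] at hj
        simp only [hG, if_pos hpa, if_pos hj]
      have h2 : G p b = x p := by
        simp only [hG, if_pos hpa, if_neg (lt_irrefl b)]
      rw [h1, h2, ← hRp]
      exact hrow ⟨p, hplt⟩ hpa
    · have hpa' : p = a ∧ m % 2 = 1 := by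
        have := i.isLt
        omega
      have h1 : ∑ j ∈ range b, G p j = ∑ j ∈ range b, y j := by
        apply Finset.sum_congr rfl
        intro j hj
        simp only [mem_range] at hj
        simp only [hG, if_neg hpa, if_pos hj]
      have h2 : G p b = z := by
        simp only [hG, if_neg hpa, if_neg (lt_irrefl b)]
      rw [h1, h2, ← hRp]
      exact hrowm hpa'.2 ⟨p, hplt⟩ hpa'.1
  · -- column sums
    intro j
    have hfold := kat_sum_fold a m (fun t => G t (min j.val (n-1-j.val))) hm
    have e1 : (∑ i : Fin m, G (min i.val (m-1-i.val)) (min j.val (n-1-j.val)))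
        = ∑ i ∈ range m, (fun t => G (min t (m-1-t)) (min j.val (n-1-j.val))) i := by
      have := Fin.sum_univ_eq_sum_range
        (fun t => G (min t (m-1-t)) (min j.val (n-1-j.val))) m
      simp only at this ⊢
      exact this
    simp only
    rw [e1, hfold]
    set q := min j.val (n-1-j.val) with hq
    have hqj : q = j.val ∨ q = (j.rev).val := by
      rw [Fin.val_rev]
      have := j.isLt
      omega
    have hqlt : q < n := by have := j.isLt; omega
    have hSq : S ⟨q, hqlt⟩ = S j := by
      rcases hqj with h | h
      · congr 1; exact Fin.ext h
      · rw [show (⟨q, hqlt⟩ : Fin n) = j.rev from Fin.ext h, ← hSsym]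
    by_cases hqb : q < b
    · have h1 : ∑ i ∈ range a, G i q = ∑ i ∈ range a, Q i q := by
        apply Finset.sum_congr rfl
        intro i hi
        simp only [mem_range] at hi
        simp only [hG, if_pos hi, if_pos hqb]
      have h2 : G a q = y q := by
        simp only [hG, if_neg (lt_irrefl a), if_pos hqb]
      rw [h1, h2, ← hSq]
      exact hcol ⟨q, hqlt⟩ hqb
    · have hqb' : q = b ∧ n % 2 = 1 := by
        have := j.isLt
        omega
      have h1 : ∑ i ∈ range a, G i q = ∑ i ∈ range a, x i := by
        apply Finset.sum_congr rfl
        intro i hi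
        simp only [mem_range] at hi
        simp only [hG, if_pos hi, if_neg hqb]
      have h2 : G a q = z := by
        simp only [hG, if_neg (lt_irrefl a), if_neg hqb]
      rw [h1, h2, ← hSq]
      exact hcolm hqb'.2 ⟨q, hqlt⟩ hqb'.1
  · -- r_infty symmetry
    intro i j
    have hj := j.isLt
    have e : min j.val (n-1-j.val) = min (j.rev).val (n-1-(j.rev).val) := by
      rw [Fin.val_rev]; omega
    simp only [e]
  · -- r_0 symmetry
    intro i j
    have hi := i.isLt
    have e : min i.val (m-1-i.val) = min (i.rev).val (m-1-(i.rev).val) := by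
      rw [Fin.val_rev]; omega
    simp only [e]

/-- Combine an `r_∞`-invariant and an `r_0`-invariant integer transportation
matrix into a `D₊`-invariant one. -/
lemma kat_nat_combine (m n : ℕ) (R : Fin m → ℕ) (S : Fin n → ℕ)
    (hsum : ∑ i, R i = ∑ j, S j)
    (A : Matrix (Fin m) (Fin n) ℕ) (hA1 : ∀ i, ∑ j, A i j = R i)
    (hA2 : ∀ j, ∑ i, A i j = S j) (hA3 : ∀ i j, A i j = A i j.rev)
    (B : Matrix (Fin m) (Fin n) ℕ) (hB1 : ∀ i, ∑ j, B i j = R i)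
    (hB2 : ∀ j, ∑ i, B i j = S j) (hB3 : ∀ i j, B i j = B i.rev j) :
    ∃ C : Matrix (Fin m) (Fin n) ℕ,
      (∀ i, ∑ j, C i j = R i) ∧ (∀ j, ∑ i, C i j = S j) ∧
      (∀ i j, C i j = C i j.rev) ∧ (∀ i j, C i j = C i.rev j) := by
  classical
  set a := m / 2 with ha
  set b := n / 2 with hb
  have hm : m = 2*a + m % 2 := by omega
  have hn : n = 2*b + n % 2 := by omega
  set R' : ℕ → ℕ := fun t => if h : t < m then R ⟨t, h⟩ else 0 with hR'def
  set S' : ℕ → ℕ := fun t => if h : t < n then S ⟨t, h⟩ else 0 with hS'def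
  have hR' : ∀ i : Fin m, R' i.val = R i := fun i => by
    rw [hR'def]; exact dif_pos i.isLt
  have hS' : ∀ j : Fin n, S' j.val = S j := fun j => by
    rw [hS'def]; exact dif_pos j.isLt
  have hR'lt : ∀ (p) (hp : p < m), R' p = R ⟨p, hp⟩ := fun p hp => dif_pos hp
  have hS'lt : ∀ (q) (hq : q < n), S' q = S ⟨q, hq⟩ := fun q hq => dif_pos hq
  have hSsym : ∀ j, S j = S j.rev := by
    intro j
    rw [← hA2, ← hA2]
    exact Finset.sum_congr rfl (fun i _ => hA3 i j)
  have hRsym : ∀ i, R i = R i.rev := by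
    intro i
    rw [← hB1, ← hB1]
    exact Finset.sum_congr rfl (fun j _ => hB3 i j)
  -- totals
  have hT1 : ∑ i, R i = 2 * ∑ i ∈ range a, R' i + m % 2 * R' a :=
    kat_sym_sum m a hm R R' hR' hRsym
  have hT2 : ∑ j, S j = 2 * ∑ j ∈ range b, S' j + n % 2 * S' b :=
    kat_sym_sum n b hn S S' hS' hSsym
  have hM1 : ∑ i, (R i % 2) = 2 * ∑ i ∈ range a, R' i % 2 + m % 2 * (R' a % 2) :=
    kat_sym_sum m a hm (fun i => R i % 2) (fun t => R' t % 2)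
      (fun i => by show R' i.val % 2 = R i % 2; rw [hR' i])
      (fun i => by show R i % 2 = R i.rev % 2; rw [← hRsym i])
  have hM2 : ∑ j, (S j % 2) = 2 * ∑ j ∈ range b, S' j % 2 + n % 2 * (S' b % 2) :=
    kat_sym_sum n b hn (fun j => S j % 2) (fun t => S' t % 2)
      (fun j => by show S' j.val % 2 = S j % 2; rw [hS' j])
      (fun j => by show S j % 2 = S j.rev % 2; rw [← hSsym j])
  have hαρ : (∑ i ∈ range a, R' i % 2) ≤ ∑ i ∈ range a, R' i :=
    Finset.sum_le_sum (fun i _ => Nat.mod_le _ _)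
  have hβσ : (∑ j ∈ range b, S' j % 2) ≤ ∑ j ∈ range b, S' j :=
    Finset.sum_le_sum (fun j _ => Nat.mod_le _ _)
  have hρmod : (∑ i ∈ range a, R' i) % 2 = (∑ i ∈ range a, R' i % 2) % 2 :=
    Finset.sum_nat_mod _ _ _
  have hσmod : (∑ j ∈ range b, S' j) % 2 = (∑ j ∈ range b, S' j % 2) % 2 :=
    Finset.sum_nat_mod _ _ _
  -- facts extracted from A
  have factA : ∀ i : Fin m, R i = 2 * (∑ t ∈ range b,
      (fun t => if h : t < n then A i ⟨t, h⟩ else 0) t) +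
      n % 2 * (if h : b < n then A i ⟨b, h⟩ else 0) := by
    intro i
    rw [← hA1 i]
    exact kat_sym_sum n b hn (fun j => A i j)
      (fun t => if h : t < n then A i ⟨t, h⟩ else 0)
      (fun j => by show (if h : (j:ℕ) < n then A i ⟨(j:ℕ), h⟩ else 0) = A i j; rw [dif_pos j.isLt]) (fun j => hA3 i j)
  have hneven : n % 2 = 0 → ∀ i : Fin m, R i % 2 = 0 := by
    intro h i
    have h2 := factA i
    rw [h] at h2
    omega
  have hnodd : n % 2 = 1 → (∑ i, (R i % 2)) ≤ S' b := by
    intro h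
    have hbn : b < n := by omega
    have e : ∀ i : Fin m, R i % 2 ≤ A i ⟨b, hbn⟩ := by
      intro i
      have h2 := factA i
      rw [h, dif_pos hbn] at h2
      omega
    calc ∑ i, (R i % 2) ≤ ∑ i, A i ⟨b, hbn⟩ := Finset.sum_le_sum (fun i _ => e i)
      _ = S ⟨b, hbn⟩ := hA2 ⟨b, hbn⟩
      _ = S' b := (hS'lt b hbn).symm
  -- facts extracted from B
  have factB : ∀ j : Fin n, S j = 2 * (∑ t ∈ range a,
      (fun t => if h : t < m then B ⟨t, h⟩ j else 0) t) +
      m % 2 * (if h : a < m then B ⟨a, h⟩ j else 0) := by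
    intro j
    rw [← hB2 j]
    exact kat_sym_sum m a hm (fun i => B i j)
      (fun t => if h : t < m then B ⟨t, h⟩ j else 0)
      (fun i => by show (if h : (i:ℕ) < m then B ⟨(i:ℕ), h⟩ j else 0) = B i j; rw [dif_pos i.isLt]) (fun i => hB3 i j)
  have hmeven : m % 2 = 0 → ∀ j : Fin n, S j % 2 = 0 := by
    intro h j
    have h2 := factB j
    rw [h] at h2
    omega
  have hmodd : m % 2 = 1 → (∑ j, (S j % 2)) ≤ R' a := by
    intro h
    have ham : a < m := by omega
    have e : ∀ j : Fin n, S j % 2 ≤ B ⟨a, ham⟩ j := by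
      intro j
      have h2 := factB j
      rw [h, dif_pos ham] at h2
      omega
    calc ∑ j, (S j % 2) ≤ ∑ j, B ⟨a, ham⟩ j := Finset.sum_le_sum (fun j _ => e j)
      _ = R ⟨a, ham⟩ := hB1 ⟨a, ham⟩
      _ = R' a := (hR'lt a ham).symm
  -- evenness of folded margins, when applicable
  have hR'evens : n % 2 = 0 → ∀ p, p < m → R' p % 2 = 0 := by
    intro h p hp
    rw [hR'lt p hp]
    exact hneven h ⟨p, hp⟩
  have hS'evens : m % 2 = 0 → ∀ q, q < n → S' q % 2 = 0 := by
    intro h q hq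
    rw [hS'lt q hq]
    exact hmeven h ⟨q, hq⟩
  rcases Nat.mod_two_eq_zero_or_one m with hm2 | hm2 <;>
    rcases Nat.mod_two_eq_zero_or_one n with hn2 | hn2
  · -- m even, n even
    have hqr : ∀ p, p < a → 2 * (R' p / 2) = R' p := by
      intro p hp
      have := hR'evens hn2 p (by omega)
      omega
    have hqc : ∀ q, q < b → 2 * (S' q / 2) = S' q := by
      intro q hq
      have := hS'evens hm2 q (by omega)
      omega
    have htot : ∑ p ∈ range a, R' p / 2 = ∑ q ∈ range b, S' q / 2 := by
      have e1 : ∑ p ∈ range a, 2 * (R' p / 2) = ∑ p ∈ range a, R' p :=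
        Finset.sum_congr rfl (fun p hp => hqr p (mem_range.1 hp))
      have e2 : ∑ q ∈ range b, 2 * (S' q / 2) = ∑ q ∈ range b, S' q :=
        Finset.sum_congr rfl (fun q hq => hqc q (mem_range.1 hq))
      rw [← Finset.mul_sum] at e1 e2
      rw [hT1, hT2, hm2, hn2] at hsum
      omega
    obtain ⟨Q, hQ1, hQ2⟩ := kat_transport a b (fun p => R' p / 2) (fun q => S' q / 2) htot
    refine kat_assemble m n a b hm hn R S hRsym hSsym Q 0 0 0 ?_ ?_ ?_ ?_
    · intro i hi
      rw [hQ1 i.val hi, ← hR' i, hn2]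
      have := hqr i.val hi
      omega
    · intro h; omega
    · intro j hj
      rw [hQ2 j.val hj, ← hS' j, hm2]
      have := hqc j.val hj
      omega
    · intro h; omega
  · -- m even, n odd
    have hSb2 : S' b % 2 = 0 := hS'evens hm2 b (by omega)
    have hσ2 : (∑ j ∈ range b, S' j) % 2 = 0 := by
      rw [hσmod]
      have : ∀ q ∈ range b, S' q % 2 = 0 :=
        fun q hq => hS'evens hm2 q (by have := mem_range.1 hq; omega)
      rw [Finset.sum_congr rfl this]
      simp
    have hlow : 2 * (∑ i ∈ range a, R' i % 2) ≤ S' b := by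
      have h1 := hnodd hn2
      rw [hM1, hm2] at h1
      omega
    obtain ⟨x, hx, hSumx⟩ := kat_select_parity a (S' b / 2) R'
      (by omega)
      (by rw [hT1, hT2, hm2, hn2] at hsum; omega)
      (by rw [hT1, hT2, hm2, hn2] at hsum; omega)
    have hqr : ∀ p, p < a → 2 * ((R' p - x p) / 2) + x p = R' p := by
      intro p hp
      have := hx p hp
      omega
    have htot : ∑ p ∈ range a, (R' p - x p) / 2 = ∑ q ∈ range b, S' q / 2 := by
      have e1 : ∑ p ∈ range a, (2 * ((R' p - x p) / 2) + x p) = ∑ p ∈ range a, R' p :=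
        Finset.sum_congr rfl (fun p hp => hqr p (mem_range.1 hp))
      rw [Finset.sum_add_distrib, ← Finset.mul_sum, hSumx] at e1
      have e2 : ∑ q ∈ range b, 2 * (S' q / 2) = ∑ q ∈ range b, S' q :=
        Finset.sum_congr rfl (fun q hq => by
          have := hS'evens hm2 q (by have := mem_range.1 hq; omega)
          omega)
      rw [← Finset.mul_sum] at e2
      rw [hT1, hT2, hm2, hn2] at hsum
      omega
    obtain ⟨Q, hQ1, hQ2⟩ := kat_transport a b (fun p => (R' p - x p) / 2)
      (fun q => S' q / 2) htot
    refine kat_assemble m n a b hm hn R S hRsym hSsym Q x 0 0 ?_ ?_ ?_ ?_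
    · intro i hi
      rw [hQ1 i.val hi, ← hR' i, hn2]
      have := hqr i.val hi
      omega
    · intro h; omega
    · intro j hj
      rw [hQ2 j.val hj, ← hS' j, hm2]
      have := hS'evens hm2 j.val (by omega)
      omega
    · intro _ j hj
      rw [← hS' j, hj, hSumx]
      omega
  · -- m odd, n even
    have hRa2 : R' a % 2 = 0 := hR'evens hn2 a (by omega)
    have hρ2 : (∑ i ∈ range a, R' i) % 2 = 0 := by
      rw [hρmod]
      have : ∀ p ∈ range a, R' p % 2 = 0 :=
        fun p hp => hR'evens hn2 p (by have := mem_range.1 hp; omega)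
      rw [Finset.sum_congr rfl this]
      simp
    have hlow : 2 * (∑ j ∈ range b, S' j % 2) ≤ R' a := by
      have h1 := hmodd hm2
      rw [hM2, hn2] at h1
      omega
    obtain ⟨y, hy, hSumy⟩ := kat_select_parity b (R' a / 2) S'
      (by omega)
      (by rw [hT1, hT2, hm2, hn2] at hsum; omega)
      (by rw [hT1, hT2, hm2, hn2] at hsum; omega)
    have hqc : ∀ q, q < b → 2 * ((S' q - y q) / 2) + y q = S' q := by
      intro q hq
      have := hy q hq
      omega
    have htot : ∑ p ∈ range a, R' p / 2 = ∑ q ∈ range b, (S' q - y q) / 2 := by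
      have e2 : ∑ q ∈ range b, (2 * ((S' q - y q) / 2) + y q) = ∑ q ∈ range b, S' q :=
        Finset.sum_congr rfl (fun q hq => hqc q (mem_range.1 hq))
      rw [Finset.sum_add_distrib, ← Finset.mul_sum, hSumy] at e2
      have e1 : ∑ p ∈ range a, 2 * (R' p / 2) = ∑ p ∈ range a, R' p :=
        Finset.sum_congr rfl (fun p hp => by
          have := hR'evens hn2 p (by have := mem_range.1 hp; omega)
          omega)
      rw [← Finset.mul_sum] at e1
      rw [hT1, hT2, hm2, hn2] at hsum
      omega
    obtain ⟨Q, hQ1, hQ2⟩ := kat_transport a b (fun p => R' p / 2)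
      (fun q => (S' q - y q) / 2) htot
    refine kat_assemble m n a b hm hn R S hRsym hSsym Q 0 y 0 ?_ ?_ ?_ ?_
    · intro i hi
      rw [hQ1 i.val hi, ← hR' i, hn2]
      have := hR'evens hn2 i.val (by omega)
      omega
    · intro _ i hi
      rw [← hR' i, hi, hSumy]
      omega
    · intro j hj
      rw [hQ2 j.val hj, ← hS' j, hm2]
      have := hqc j.val hj
      omega
    · intro h; omega
  · -- m odd, n odd
    have hfA : 2 * (∑ i ∈ range a, R' i % 2) + R' a % 2 ≤ S' b := by
      have h1 := hnodd hn2
      rw [hM1, hm2] at h1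
      omega
    have hfB : 2 * (∑ j ∈ range b, S' j % 2) + S' b % 2 ≤ R' a := by
      have h1 := hmodd hm2
      rw [hM2, hn2] at h1
      omega
    have hTT : 2 * (∑ i ∈ range a, R' i) + R' a = 2 * (∑ j ∈ range b, S' j) + S' b := by
      rw [hT1, hT2, hm2, hn2] at hsum
      omega
    obtain ⟨z, sx, sy, hsx1, hsx2, hsx3, hzb, hsy1, hsy2, hsy3, hza⟩ :
        ∃ z sx sy,
          (∑ i ∈ range a, R' i % 2) ≤ sx ∧ sx ≤ ∑ i ∈ range a, R' i ∧
          sx % 2 = (∑ i ∈ range a, R' i) % 2 ∧ 2 * sx + z = S' b ∧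
          (∑ j ∈ range b, S' j % 2) ≤ sy ∧ sy ≤ ∑ j ∈ range b, S' j ∧
          sy % 2 = (∑ j ∈ range b, S' j) % 2 ∧ 2 * sy + z = R' a := by
      rcases lt_or_ge (S' b) (2 * ∑ i ∈ range a, R' i) with hcase | hcase
      · refine ⟨(S' b - 2 * ∑ i ∈ range a, R' i % 2) % 4,
          (S' b - (S' b - 2 * ∑ i ∈ range a, R' i % 2) % 4) / 2,
          (R' a - (S' b - 2 * ∑ i ∈ range a, R' i % 2) % 4) / 2,
          ?_, ?_, ?_, ?_, ?_, ?_, ?_, ?_⟩ <;> omega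
      · exact ⟨S' b - 2 * ∑ i ∈ range a, R' i, ∑ i ∈ range a, R' i,
          ∑ j ∈ range b, S' j, by omega, by omega, by omega, by omega,
          by omega, by omega, by omega, by omega⟩
    obtain ⟨x, hx, hSumx⟩ := kat_select_parity a sx R' hsx1 hsx2 hsx3
    obtain ⟨y, hy, hSumy⟩ := kat_select_parity b sy S' hsy1 hsy2 hsy3
    have hqr : ∀ p, p < a → 2 * ((R' p - x p) / 2) + x p = R' p := by
      intro p hp
      have := hx p hp
      omega
    have hqc : ∀ q, q < b → 2 * ((S' q - y q) / 2) + y q = S' q := by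
      intro q hq
      have := hy q hq
      omega
    have htot : ∑ p ∈ range a, (R' p - x p) / 2 = ∑ q ∈ range b, (S' q - y q) / 2 := by
      have e1 : ∑ p ∈ range a, (2 * ((R' p - x p) / 2) + x p) = ∑ p ∈ range a, R' p :=
        Finset.sum_congr rfl (fun p hp => hqr p (mem_range.1 hp))
      have e2 : ∑ q ∈ range b, (2 * ((S' q - y q) / 2) + y q) = ∑ q ∈ range b, S' q :=
        Finset.sum_congr rfl (fun q hq => hqc q (mem_range.1 hq))
      rw [Finset.sum_add_distrib, ← Finset.mul_sum, hSumx] at e1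
      rw [Finset.sum_add_distrib, ← Finset.mul_sum, hSumy] at e2
      omega
    obtain ⟨Q, hQ1, hQ2⟩ := kat_transport a b (fun p => (R' p - x p) / 2)
      (fun q => (S' q - y q) / 2) htot
    refine kat_assemble m n a b hm hn R S hRsym hSsym Q x y z ?_ ?_ ?_ ?_
    · intro i hi
      rw [hQ1 i.val hi, ← hR' i, hn2]
      have := hqr i.val hi
      omega
    · intro _ i hi
      rw [← hR' i, hi, hSumy, hn2]
      omega
    · intro j hj
      rw [hQ2 j.val hj, ← hS' j, hm2]
      have := hqc j.val hj
      omega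
    · intro _ j hj
      rw [← hS' j, hj, hSumx, hm2]
      omega

/-- **Transportation with the Klein four-group symmetry `D_+`.**
`𝒯^+(R,S) ≠ ∅` iff `𝒯^∞(R,S) ≠ ∅` and `𝒯^0(R,S) ≠ ∅`; the same equivalence
holds in the integral case. -/
theorem klein_axes_transportation (m n : ℕ) (R : Fin m → ℝ) (S : Fin n → ℝ)
    (hR : ∀ i, 0 ≤ R i) (hS : ∀ j, 0 ≤ S j)
    (hsum : ∑ i, R i = ∑ j, S j) :
    ((∃ A : Matrix (Fin m) (Fin n) ℝ,
        (∀ i j, 0 ≤ A i j) ∧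
        (∀ i, ∑ j, A i j = R i) ∧
        (∀ j, ∑ i, A i j = S j) ∧
        (∀ i j, A i j = A i j.rev) ∧
        (∀ i j, A i j = A i.rev j)) ↔
      ((∃ A : Matrix (Fin m) (Fin n) ℝ,
          (∀ i j, 0 ≤ A i j) ∧
          (∀ i, ∑ j, A i j = R i) ∧
          (∀ j, ∑ i, A i j = S j) ∧
          (∀ i j, A i j = A i j.rev)) ∧
        (∃ A : Matrix (Fin m) (Fin n) ℝ,
          (∀ i j, 0 ≤ A i j) ∧
          (∀ i, ∑ j, A i j = R i) ∧
          (∀ j, ∑ i, A i j = S j) ∧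
          (∀ i j, A i j = A i.rev j))))
    ∧ ((∀ i, ∃ k : ℕ, R i = k) → (∀ j, ∃ k : ℕ, S j = k) →
      ((∃ A : Matrix (Fin m) (Fin n) ℕ,
          (∀ i, ((∑ j, A i j : ℕ) : ℝ) = R i) ∧
          (∀ j, ((∑ i, A i j : ℕ) : ℝ) = S j) ∧
          (∀ i j, A i j = A i j.rev) ∧
          (∀ i j, A i j = A i.rev j)) ↔
        ((∃ A : Matrix (Fin m) (Fin n) ℕ,
            (∀ i, ((∑ j, A i j : ℕ) : ℝ) = R i) ∧
            (∀ j, ((∑ i, A i j : ℕ) : ℝ) = S j) ∧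
            (∀ i j, A i j = A i j.rev)) ∧
          (∃ A : Matrix (Fin m) (Fin n) ℕ,
            (∀ i, ((∑ j, A i j : ℕ) : ℝ) = R i) ∧
            (∀ j, ((∑ i, A i j : ℕ) : ℝ) = S j) ∧
            (∀ i j, A i j = A i.rev j))))) := by
  constructor
  · -- real case
    constructor
    · rintro ⟨A, h0, h1, h2, h3, h4⟩
      exact ⟨⟨A, h0, h1, h2, h3⟩, ⟨A, h0, h1, h2, h4⟩⟩
    · rintro ⟨⟨A, hA0, hA1, hA2, hA3⟩, ⟨B, hB0, hB1, hB2, hB3⟩⟩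
      have hSsym : ∀ j, S j = S j.rev := by
        intro j
        rw [← hA2, ← hA2]
        exact Finset.sum_congr rfl (fun i _ => hA3 i j)
      have hRsym : ∀ i, R i = R i.rev := by
        intro i
        rw [← hB1, ← hB1]
        exact Finset.sum_congr rfl (fun j _ => hB3 i j)
      by_cases hT : (∑ i, R i) = 0
      · have hR0 : ∀ i, R i = 0 := by
          intro i
          have := (Finset.sum_eq_zero_iff_of_nonneg (fun i _ => hR i)).1 hT
          exact this i (mem_univ i)
        have hS0 : ∀ j, S j = 0 := by
          intro j
          have h0 : ∑ j, S j = 0 := by rw [← hsum, hT]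
          have := (Finset.sum_eq_zero_iff_of_nonneg (fun j _ => hS j)).1 h0
          exact this j (mem_univ j)
        exact ⟨0, fun i j => le_refl 0, fun i => by simp [hR0],
          fun j => by simp [hS0], fun i j => rfl, fun i j => rfl⟩
      · refine ⟨fun i j => R i * S j / (∑ i, R i), ?_, ?_, ?_, ?_, ?_⟩
        · intro i j
          have h1 : (0:ℝ) ≤ ∑ i, R i := Finset.sum_nonneg (fun i _ => hR i)
          exact div_nonneg (mul_nonneg (hR i) (hS j)) h1
        · intro i
          rw [← Finset.sum_div, ← Finset.mul_sum, ← hsum, mul_div_assoc,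
            div_self hT, mul_one]
        · intro j
          rw [← Finset.sum_div, ← Finset.sum_mul, mul_comm, mul_div_assoc,
            div_self hT, mul_one]
        · intro i j
          show R i * S j / _ = R i * S j.rev / _
          rw [← hSsym j]
        · intro i j
          show R i * S j / _ = R i.rev * S j / _
          rw [← hRsym i]
  · -- integral case
    intro hRnat hSnat
    constructor
    · rintro ⟨A, h1, h2, h3, h4⟩
      exact ⟨⟨A, h1, h2, h3⟩, ⟨A, h1, h2, h4⟩⟩
    · rintro ⟨⟨A, hA1, hA2, hA3⟩, ⟨B, hB1, hB2, hB3⟩⟩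
      choose R' hR' using hRnat
      choose S' hS' using hSnat
      have hA1' : ∀ i, ∑ j, A i j = R' i := by
        intro i
        have : ((∑ j, A i j : ℕ) : ℝ) = ((R' i : ℕ) : ℝ) := by rw [hA1 i, hR' i]
        exact_mod_cast this
      have hA2' : ∀ j, ∑ i, A i j = S' j := by
        intro j
        have : ((∑ i, A i j : ℕ) : ℝ) = ((S' j : ℕ) : ℝ) := by rw [hA2 j, hS' j]
        exact_mod_cast this
      have hB1' : ∀ i, ∑ j, B i j = R' i := by
        intro i
        have : ((∑ j, B i j : ℕ) : ℝ) = ((R' i : ℕ) : ℝ) := by rw [hB1 i, hR' i]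
        exact_mod_cast this
      have hB2' : ∀ j, ∑ i, B i j = S' j := by
        intro j
        have : ((∑ i, B i j : ℕ) : ℝ) = ((S' j : ℕ) : ℝ) := by rw [hB2 j, hS' j]
        exact_mod_cast this
      have hsum' : ∑ i, R' i = ∑ j, S' j := by
        have : ((∑ i, R' i : ℕ) : ℝ) = ((∑ j, S' j : ℕ) : ℝ) := by
          push_cast
          rw [show ∑ i, ((R' i : ℕ) : ℝ) = ∑ i, R i from
            Finset.sum_congr rfl (fun i _ => (hR' i).symm),
            show ∑ j, ((S' j : ℕ) : ℝ) = ∑ j, S j from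
            Finset.sum_congr rfl (fun j _ => (hS' j).symm), hsum]
        exact_mod_cast this
      obtain ⟨C, hC1, hC2, hC3, hC4⟩ :=
        kat_nat_combine m n R' S' hsum' A hA1' hA2' hA3 B hB1' hB2' hB3
      exact ⟨C, fun i => by rw [hC1 i, ← hR' i], fun j => by rw [hC2 j, ← hS' j],
        hC3, hC4⟩
end

section
/- Let R ∈ ℤ^m and S ∈ ℤ^n be nonnegative integer vectors with equal component sums, every component of R at most n and every component of S at most m. There exists an m×n (0,1)-matrix A with row sum vector R and column sum vector S satisfying r_0 A = A if and only if (a) R is palindromic, (b) if m is even then every component of S is even, and if m is odd then r_⌈m/2⌉ ≥ o(S), and (c) S̄ ⪯ R̄*, where S̄ is obtained from S by subtracting one from every odd component, and R̄ equals R if m is even and equals R with its middle component r_⌈m/2⌉ removed if m is odd. -/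
/-- The multiset of components of a vector. -/
def vecMS {n : ℕ} (v : Fin n → ℕ) : Multiset ℕ := Multiset.map v Finset.univ.val

/-- The sum of the `k` largest elements of a multiset of natural numbers. -/
def topSum (M : Multiset ℕ) (k : ℕ) : ℕ := ((M.sort (· ≤ ·)).reverse.take k).sum

/-- `MajorizedBy S R` means `S ⪯ R`: the component sums agree and every
partial sum of the weakly decreasing rearrangement of `R` dominates the
corresponding partial sum for `S`. -/
def MajorizedBy (S R : Multiset ℕ) : Prop := S.sum = R.sum ∧ ∀ k, topSum S k ≤ topSum R k

/-- The conjugate `R*` of (the weakly decreasing rearrangement of) `R`,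
viewed as an integer partition. -/
def conjMS (M : Multiset ℕ) : Multiset ℕ :=
  (Multiset.range M.sum).map fun j => (M.filter (fun x => j + 1 ≤ x)).card



lemma sortEq (M : Multiset ℕ) (l : List ℕ) (hs : l.Pairwise (· ≤ ·)) (hp : (l : Multiset ℕ) = M) :
    M.sort (· ≤ ·) = l := by
  refine List.Perm.eq_of_pairwise' (Multiset.pairwise_sort _ _) hs ?_
  rw [← Multiset.coe_eq_coe, Multiset.sort_eq, hp]

lemma mem_le_sum {M : Multiset ℕ} {x : ℕ} (h : x ∈ M) : x ≤ M.sum := by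
  rw [← Multiset.cons_erase h, Multiset.sum_cons]; exact Nat.le_add_right _ _

lemma exists_max (M : Multiset ℕ) (h : M ≠ 0) : ∃ b ∈ M, ∀ x ∈ M, x ≤ b := by
  induction M using Multiset.induction with
  | empty => exact absurd rfl h
  | cons a s ih =>
    rcases eq_or_ne s 0 with rfl | hs
    · exact ⟨a, Multiset.mem_cons_self _ _, by simp⟩
    · obtain ⟨b, hb, hball⟩ := ih hs
      refine ⟨max a b, ?_, ?_⟩
      · rcases Nat.le_total a b with h' | h'
        · rw [max_eq_right h']; exact Multiset.mem_cons_of_mem hb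
        · rw [max_eq_left h']; exact Multiset.mem_cons_self _ _
      · intro x hx
        rcases Multiset.mem_cons.1 hx with rfl | hx
        · exact le_max_left _ _
        · exact le_trans (hball x hx) (le_max_right _ _)

lemma sort_max_split {M : Multiset ℕ} {b : ℕ} (hb : b ∈ M) (hmax : ∀ x ∈ M, x ≤ b) :
    M.sort (· ≤ ·) = (M.erase b).sort (· ≤ ·) ++ [b] := by
  refine sortEq M _ ?_ ?_
  · refine List.pairwise_append.2 ⟨Multiset.pairwise_sort _ _, List.pairwise_singleton _ _, ?_⟩
    intro x hx y hy
    rw [List.mem_singleton] at hy; subst hy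
    exact hmax x (Multiset.mem_of_le (Multiset.erase_le _ _) (by rwa [Multiset.mem_sort] at hx))
  · rw [← Multiset.coe_add]
    have : ((M.erase b).sort (· ≤ ·) : Multiset ℕ) = M.erase b := Multiset.sort_eq _ _
    rw [this]
    have : ([b] : Multiset ℕ) = {b} := rfl
    rw [this]
    rw [add_comm, Multiset.singleton_add, Multiset.cons_erase hb]

lemma topSum_zero (M : Multiset ℕ) : topSum M 0 = 0 := rfl

lemma topSum_succ_max {M : Multiset ℕ} {b : ℕ} (hb : b ∈ M) (hmax : ∀ x ∈ M, x ≤ b) (k : ℕ) :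
    topSum M (k + 1) = b + topSum (M.erase b) k := by
  unfold topSum
  rw [sort_max_split hb hmax, List.reverse_append]
  simp

lemma take_sum_succ_le {l : List ℕ} {c : ℕ} (hl : ∀ x ∈ l, x ≤ c) (k : ℕ) :
    (l.take (k + 1)).sum ≤ c + (l.take k).sum := by
  induction l generalizing k with
  | nil => simp
  | cons x l ih =>
    cases k with
    | zero => simpa using Nat.add_le_add_right (hl x List.mem_cons_self) 0
    | succ k =>
      simp only [List.take_succ_cons, List.sum_cons]
      have := ih (fun y hy => hl y (List.mem_cons_of_mem _ hy)) k
      omega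

lemma topSum_succ_le {M : Multiset ℕ} {c : ℕ} (hc : ∀ x ∈ M, x ≤ c) (k : ℕ) :
    topSum M (k + 1) ≤ c + topSum M k := by
  apply take_sum_succ_le
  intro x hx
  exact hc x (by rwa [← Multiset.mem_sort (· ≤ ·), ← List.mem_reverse])

lemma sum_le_topSum {M' M : Multiset ℕ} (h : M' ≤ M) : M'.sum ≤ topSum M M'.card := by
  induction M using Multiset.strongInductionOn generalizing M' with
  | _ M ih =>
  rcases eq_or_ne M' 0 with rfl | hM'
  · simp [topSum_zero]
  have hM : M ≠ 0 := fun h0 => hM' (le_antisymm (h0 ▸ h) (Multiset.zero_le _))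
  obtain ⟨b, hb, hmax⟩ := exists_max M hM
  by_cases hbM' : b ∈ M'
  · have h' : M'.erase b ≤ M.erase b := Multiset.erase_le_erase _ h
    have hcard : M'.card = (M'.erase b).card + 1 := by
      have hpos : 0 < Multiset.card M' := Multiset.card_pos.2 hM'
      rw [Multiset.card_erase_of_mem hbM', Nat.pred_eq_sub_one]
      omega
    rw [hcard, topSum_succ_max hb hmax]
    have := ih (M.erase b) (Multiset.erase_lt.2 hb) h'
    calc M'.sum = b + (M'.erase b).sum := by
          rw [← Multiset.sum_cons, Multiset.cons_erase hbM']
      _ ≤ b + topSum (M.erase b) (M'.erase b).card := Nat.add_le_add_left this _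
  · have h' : M' ≤ M.erase b := by
      rw [Multiset.le_iff_count] at h ⊢
      intro a
      rcases eq_or_ne a b with rfl | hab
      · simp [Multiset.count_eq_zero_of_notMem hbM']
      · rw [Multiset.count_erase_of_ne hab]; exact h a
    have := ih (M.erase b) (Multiset.erase_lt.2 hb) h'
    refine this.trans ?_
    cases hk : M'.card with
    | zero => simp [hk, topSum_zero]
    | succ k =>
      rw [topSum_succ_max hb hmax]
      refine (topSum_succ_le (c := b) ?_ k).trans (Nat.le_refl _)
      exact fun x hx => hmax x (Multiset.mem_of_le (Multiset.erase_le _ _) hx)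

lemma topSum_achieved (M : Multiset ℕ) (k : ℕ) :
    ∃ M' ≤ M, M'.card ≤ k ∧ M'.sum = topSum M k := by
  induction k generalizing M with
  | zero => exact ⟨0, Multiset.zero_le _, le_refl _, rfl⟩
  | succ k ih =>
    rcases eq_or_ne M 0 with rfl | hM
    · refine ⟨0, le_refl _, Nat.zero_le _, ?_⟩
      simp [topSum]
    obtain ⟨b, hb, hmax⟩ := exists_max M hM
    obtain ⟨M'', hle, hcard, hsum⟩ := ih (M.erase b)
    refine ⟨b ::ₘ M'', ?_, ?_, ?_⟩
    · calc b ::ₘ M'' ≤ b ::ₘ M.erase b := Multiset.cons_le_cons _ hle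
        _ = M := Multiset.cons_erase hb
    · simpa using Nat.add_le_add_right hcard 1
    · rw [Multiset.sum_cons, hsum, topSum_succ_max hb hmax]




-- (P): increment lemma
lemma map_min_succ_sum (M : Multiset ℕ) (k : ℕ) :
    (M.map (fun x => min x (k+1))).sum
      = (M.map (fun x => min x k)).sum + (M.filter (fun x => k + 1 ≤ x)).card := by
  induction M using Multiset.induction with
  | empty => simp
  | cons a s ih =>
    simp only [Nat.add_one_le_iff] at ih ⊢
    by_cases h : k < a <;>
      simp [Multiset.filter_cons, h, ih] <;> omega

lemma sum_min_range (M : Multiset ℕ) (k : ℕ) :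
    ∑ j ∈ Finset.range (min k M.sum), (M.filter (fun x => j + 1 ≤ x)).card
      = (M.map (fun x => min x k)).sum := by
  induction k with
  | zero => simp
  | succ k ih =>
    rw [map_min_succ_sum M k, ← ih]
    by_cases h : k < M.sum
    · rw [min_eq_left (by omega), min_eq_left (by omega), Finset.sum_range_succ]
    · have h1 : min k M.sum = M.sum := by omega
      have h2 : min (k+1) M.sum = M.sum := by omega
      rw [h1, h2]
      have : (M.filter (fun x => k + 1 ≤ x)) = 0 := by
        rw [Multiset.filter_eq_nil]
        intro a ha
        have := mem_le_sum ha
        omega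
      rw [this]
      simp

lemma conjMS_coe (M : Multiset ℕ) :
    conjMS M = ((List.range M.sum).map fun j => (M.filter (fun x => j + 1 ≤ x)).card : List ℕ) := by
  rfl

lemma conjMS_sort (M : Multiset ℕ) :
    (conjMS M).sort (· ≤ ·)
      = ((List.range M.sum).map fun j => (M.filter (fun x => j + 1 ≤ x)).card).reverse := by
  apply sortEq
  · rw [List.pairwise_reverse, List.pairwise_map]
    refine (List.pairwise_lt_range (n := _)).imp ?_
    intro i j hij
    exact Multiset.card_le_card (Multiset.monotone_filter_right _ (fun x hx => by omega))
  · rw [conjMS_coe]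
    exact (Multiset.coe_reverse _)


lemma list_range_map_sum (n : ℕ) (f : ℕ → ℕ) :
    ((List.range n).map f).sum = ∑ j ∈ Finset.range n, f j := by
  rw [Finset.sum_range]
  induction n with
  | zero => simp
  | succ n ih => rw [List.range_succ]; simp [ih, Fin.sum_univ_castSucc]

lemma topSum_conjMS (M : Multiset ℕ) (k : ℕ) :
    topSum (conjMS M) k = (M.map (fun x => min x k)).sum := by
  unfold topSum
  rw [conjMS_sort, List.reverse_reverse, ← List.map_take, List.take_range, list_range_map_sum,
    sum_min_range]

lemma conjMS_sum (M : Multiset ℕ) : (conjMS M).sum = M.sum := by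
  have h := topSum_conjMS M M.sum
  have h2 : topSum (conjMS M) M.sum = (conjMS M).sum := by
    unfold topSum
    rw [List.take_of_length_le, ← Multiset.sum_coe]
    · rw [Multiset.coe_reverse, Multiset.sort_eq]
    · rw [List.length_reverse, Multiset.length_sort]
      rw [conjMS_coe]
      simp
  rw [h2] at h
  rw [h]
  have heq : M.map (fun x => min x M.sum) = M.map id :=
    Multiset.map_congr rfl (fun x hx => by simp [min_eq_left (mem_le_sum hx)])
  rw [heq, Multiset.map_id]

lemma topSum_double (M : Multiset ℕ) (k : ℕ) :
    topSum (M.map (fun x => 2 * x)) k = 2 * topSum M k := by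
  have hsort : (M.map (fun x => 2 * x)).sort (· ≤ ·)
      = (M.sort (· ≤ ·)).map (fun x => 2 * x) := by
    apply sortEq
    · exact List.Pairwise.map _ (fun a b hab => by omega) (Multiset.pairwise_sort _ _)
    · rw [← Multiset.map_coe, Multiset.sort_eq]
  unfold topSum
  rw [hsort, ← List.map_reverse, ← List.map_take]
  induction ((M.sort (· ≤ ·)).reverse.take k) with
  | nil => simp
  | cons a l ih => simp [ih]; ring

lemma exists_preimage {α β : Type*} [DecidableEq α] [DecidableEq β]
    {f : α → β} {s : Multiset α} {M' : Multiset β} (h : M' ≤ s.map f) :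
    ∃ t ≤ s, t.map f = M' := by
  induction M' using Multiset.induction generalizing s with
  | empty => exact ⟨0, Multiset.zero_le _, rfl⟩
  | cons x M'' ih =>
    have hx : x ∈ s.map f := Multiset.mem_of_le h (Multiset.mem_cons_self _ _)
    obtain ⟨a, ha, rfl⟩ := Multiset.mem_map.1 hx
    have h2 : M'' ≤ (s.map f).erase (f a) := by
      rw [Multiset.le_iff_count] at h ⊢
      intro b
      have := h b
      rcases eq_or_ne b (f a) with rfl | hb
      · rw [Multiset.count_erase_self]
        rw [Multiset.count_cons_self] at this
        omega
      · rw [Multiset.count_erase_of_ne hb]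
        rw [Multiset.count_cons_of_ne hb] at this
        exact this
    have h3 : (s.map f).erase (f a) = (s.erase a).map f := by
      conv_lhs => rw [← Multiset.cons_erase ha]
      rw [Multiset.map_cons, Multiset.erase_cons_head]
    rw [h3] at h2
    obtain ⟨t, ht, rfl⟩ := ih h2
    exact ⟨a ::ₘ t, by
      calc a ::ₘ t ≤ a ::ₘ s.erase a := Multiset.cons_le_cons _ ht
        _ = s := Multiset.cons_erase ha, by rw [Multiset.map_cons]⟩

lemma vecMS_map_sum {n : ℕ} (v : Fin n → ℕ) (g : ℕ → ℕ) :
    ((vecMS v).map g).sum = ∑ i, g (v i) := by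
  rw [vecMS, Multiset.map_map]
  rfl

lemma vecMS_sum {n : ℕ} (v : Fin n → ℕ) : (vecMS v).sum = ∑ i, v i := by
  have := vecMS_map_sum v id
  rwa [Multiset.map_id] at this


lemma finset_sum_le_topSum {n : ℕ} (T : Fin n → ℕ) (K : Finset (Fin n)) :
    ∑ j ∈ K, T j ≤ topSum (vecMS T) K.card := by
  have hle : K.val.map T ≤ vecMS T :=
    Multiset.map_le_map (Finset.val_le_iff.mpr (K.subset_univ))
  have := sum_le_topSum hle
  simpa using this

lemma topSum_eq_finset_sum {n : ℕ} (T : Fin n → ℕ) (k : ℕ) :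
    ∃ K : Finset (Fin n), K.card ≤ k ∧ topSum (vecMS T) k = ∑ j ∈ K, T j := by
  obtain ⟨M', hle, hcard, hsum⟩ := topSum_achieved (vecMS T) k
  obtain ⟨t, ht, rfl⟩ := exists_preimage hle
  have hnodup : t.Nodup := Multiset.nodup_of_le ht Finset.univ.nodup
  refine ⟨⟨t, hnodup⟩, ?_, ?_⟩
  · simpa using (Multiset.card_map _ _ ▸ hcard)
  · rw [← hsum]
    rfl


lemma minsum_succ {p : ℕ} (R : Fin p → ℕ) (k : ℕ) :
    ∑ i, min (R i) (k + 1)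
      = ∑ i, min (R i) k + (Finset.univ.filter (fun i => k + 1 ≤ R i)).card := by
  rw [Finset.card_filter, ← Finset.sum_add_distrib]
  apply Finset.sum_congr rfl
  intro i _
  by_cases h : k + 1 ≤ R i <;> simp [h] <;> omega

lemma minsum_one {p : ℕ} (R : Fin p → ℕ) :
    ∑ i, min (R i) 1 = (Finset.univ.filter (fun i => 1 ≤ R i)).card := by
  have := minsum_succ R 0
  simpa using this

lemma topset {p : ℕ} (R : Fin p → ℕ) (s : ℕ) (hs : s ≤ p) :
    ∃ I : Finset (Fin p), I.card = s ∧ ∀ i ∈ I, ∀ i' ∉ I, R i' ≤ R i := by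
  induction s with
  | zero => exact ⟨∅, rfl, by simp⟩
  | succ s ih =>
    obtain ⟨I, hcard, htop⟩ := ih (by omega)
    have hne : (Finset.univ \ I).Nonempty := by
      rw [← Finset.card_pos, Finset.card_sdiff_of_subset (Finset.subset_univ _)]
      simp [hcard]
      omega
    obtain ⟨i0, hi0, hi0max⟩ := Finset.exists_max_image _ R hne
    have hi0I : i0 ∉ I := (Finset.mem_sdiff.1 hi0).2
    refine ⟨insert i0 I, ?_, ?_⟩
    · rw [Finset.card_insert_of_notMem hi0I, hcard]
    · intro i hi i' hi'
      have hi'I : i' ∉ I := fun h => hi' (Finset.mem_insert_of_mem h)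
      rcases Finset.mem_insert.1 hi with rfl | hiI
      · exact hi0max i' (Finset.mem_sdiff.2 ⟨Finset.mem_univ _, hi'I⟩)
      · exact htop i hiI i' hi'I

lemma galeRyser_nec {p n : ℕ} (R : Fin p → ℕ) (T : Fin n → ℕ)
    (B : Fin p → Fin n → ℕ)
    (h01 : ∀ i j, B i j = 0 ∨ B i j = 1)
    (hrow : ∀ i, ∑ j, B i j = R i) (hcol : ∀ j, ∑ i, B i j = T j)
    (K : Finset (Fin n)) : ∑ j ∈ K, T j ≤ ∑ i, min (R i) K.card := by
  calc ∑ j ∈ K, T j = ∑ j ∈ K, ∑ i, B i j := by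
        exact Finset.sum_congr rfl fun j _ => (hcol j).symm
    _ = ∑ i, ∑ j ∈ K, B i j := Finset.sum_comm
    _ ≤ ∑ i, min (R i) K.card := by
        apply Finset.sum_le_sum
        intro i _
        apply le_min
        · rw [← hrow i]
          exact Finset.sum_le_sum_of_subset (Finset.subset_univ K)
        · calc ∑ j ∈ K, B i j ≤ ∑ j ∈ K, 1 := Finset.sum_le_sum fun j _ => by
                rcases h01 i j with h | h <;> omega
            _ = K.card := by simp

lemma galeRyser_suff : ∀ (n p : ℕ) (R : Fin p → ℕ) (T : Fin n → ℕ),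
    (∀ i, R i ≤ n) → (∑ i, R i = ∑ j, T j) →
    (∀ K : Finset (Fin n), ∑ j ∈ K, T j ≤ ∑ i, min (R i) K.card) →
    ∃ B : Fin p → Fin n → ℕ,
      (∀ i j, B i j = 0 ∨ B i j = 1) ∧ (∀ i, ∑ j, B i j = R i) ∧ (∀ j, ∑ i, B i j = T j) := by
  intro n
  induction n with
  | zero =>
    intro p R T hR hsum _
    refine ⟨fun _ _ => 0, fun i j => Or.inl rfl, fun i => ?_, fun j => j.elim0⟩
    have := hR i
    simp only [Finset.univ_eq_empty, Finset.sum_empty]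
    omega
  | succ n ih =>
    intro p R T hR hsum hcond
    obtain ⟨j0, -, hj0max⟩ := Finset.exists_max_image Finset.univ T ⟨0, Finset.mem_univ 0⟩
    set t := T j0 with ht
    have htp : t ≤ p := by
      have h1 := hcond {j0}
      rw [Finset.sum_singleton, Finset.card_singleton, minsum_one] at h1
      calc t ≤ _ := h1
        _ ≤ p := by
          simpa using Finset.card_le_card (Finset.subset_univ
            (Finset.univ.filter (fun i => 1 ≤ R i)))
    obtain ⟨I, hIcard, hItop⟩ := topset R t htp
    have hI1 : ∀ i ∈ I, 1 ≤ R i := by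
      intro i0 hi0
      by_contra hc
      have hR0 : R i0 = 0 := by omega
      have hsub : Finset.univ.filter (fun i => 1 ≤ R i) ⊆ I.erase i0 := by
        intro i hi
        rw [Finset.mem_filter] at hi
        rw [Finset.mem_erase]
        constructor
        · rintro rfl; omega
        · by_contra hiI
          have := hItop i0 hi0 i hiI
          omega
      have h1 := hcond {j0}
      rw [Finset.sum_singleton, Finset.card_singleton, minsum_one] at h1
      have h2 := Finset.card_le_card hsub
      rw [Finset.card_erase_of_mem hi0, hIcard] at h2
      have ht1 : 1 ≤ t := by
        rw [← hIcard]
        exact Finset.card_pos.2 ⟨i0, hi0⟩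
      omega
    set R' : Fin p → ℕ := fun i => R i - (if i ∈ I then 1 else 0) with hR'def
    set T' : Fin n → ℕ := fun j => T (j0.succAbove j) with hT'def
    have hind : ∑ i, (if i ∈ I then 1 else 0) = t := by
      rw [Finset.sum_ite_mem, Finset.univ_inter, Finset.sum_const, hIcard]
      simp
    have hR'sum : (∑ i, R' i) + t = ∑ i, R i := by
      rw [← hind, ← Finset.sum_add_distrib]
      apply Finset.sum_congr rfl
      intro i _
      by_cases h : i ∈ I
      · have h1 := hI1 i h
        simp only [hR'def, h, if_true]
        omega
      · simp only [hR'def, h, if_false]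
        omega
    have hT'sum : t + ∑ j, T' j = ∑ j, T j := by
      rw [Fin.sum_univ_succAbove T j0]
    have hR' : ∀ i, R' i ≤ n := by
      intro i
      by_cases hiI : i ∈ I
      · have := hR i; simp only [hR'def, hiI, if_true]; omega
      · simp only [hR'def, hiI, if_false]
        by_contra hc
        have hRi : R i = n + 1 := by have := hR i; omega
        have hall : ∀ i' ∈ I, R i' = n + 1 := by
          intro i' hi'
          have h1 := hItop i' hi' i hiI
          have := hR i'
          omega
        have hbig : ∑ i' ∈ insert i I, R i' = (t + 1) * (n + 1) := by
          rw [Finset.sum_insert hiI, hRi,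
            Finset.sum_congr rfl (fun i' hi' => hall i' hi'), Finset.sum_const, hIcard,
            smul_eq_mul]
          ring
        have hle1 : ∑ i' ∈ insert i I, R i' ≤ ∑ i', R i' :=
          Finset.sum_le_sum_of_subset (Finset.subset_univ _)
        have hle2 : ∑ j, T j ≤ (n + 1) * t := by
          calc ∑ j, T j ≤ ∑ _j : Fin (n+1), t :=
                Finset.sum_le_sum fun j _ => hj0max j (Finset.mem_univ j)
            _ = (n + 1) * t := by
              rw [Finset.sum_const, Finset.card_univ, Fintype.card_fin, smul_eq_mul]
        rw [hbig] at hle1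
        rw [hsum] at hle1
        nlinarith [hle1, hle2]
    have hcond' : ∀ K' : Finset (Fin n), ∑ j ∈ K', T' j ≤ ∑ i, min (R' i) K'.card := by
      intro K'
      set k := K'.card with hk
      set H := Finset.univ.filter (fun i => k + 1 ≤ R i) with hH
      set c := H.card with hc
      set D := I.filter (fun i => ¬ (k + 1 ≤ R i)) with hD
      set ICH := I.filter (fun i => k + 1 ≤ R i) with hICH
      have hsplit : ICH.card + D.card = t := by
        rw [← hIcard, hICH, hD]
        exact Finset.card_filter_add_card_filter_not _
      have key1 : ∑ i, min (R i) k = ∑ i, min (R' i) k + D.card := by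
        have : D.card = ∑ i, (if i ∈ D then 1 else 0) := by
          rw [Finset.sum_ite_mem, Finset.univ_inter, Finset.sum_const]; simp
        rw [this, ← Finset.sum_add_distrib]
        apply Finset.sum_congr rfl
        intro i _
        have hmemD : i ∈ D ↔ (i ∈ I ∧ ¬ (k + 1 ≤ R i)) := by
          rw [hD, Finset.mem_filter]
        by_cases hiI : i ∈ I
        · have h1 := hI1 i hiI
          by_cases h2 : k + 1 ≤ R i
          · rw [if_neg (fun h => (hmemD.1 h).2 h2)]
            simp only [hR'def, hiI, if_true]
            omega
          · rw [if_pos (hmemD.2 ⟨hiI, h2⟩)]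
            simp only [hR'def, hiI, if_true]
            omega
        · rw [if_neg (fun h => hiI (hmemD.1 h).1)]
          simp only [hR'def, hiI, if_false]
          omega
      have hdich : ICH.card = min t c := by
        by_cases hcase : ∀ i ∈ I, k + 1 ≤ R i
        · have hIH : ICH = I := by
            rw [hICH, Finset.filter_eq_self]
            exact hcase
          have hIsubH : I ⊆ H := fun i hi => Finset.mem_filter.2 ⟨Finset.mem_univ _, hcase i hi⟩
          have : t ≤ c := by rw [← hIcard, hc]; exact Finset.card_le_card hIsubH
          rw [hIH, hIcard, min_eq_left this]
        · push_neg at hcase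
          obtain ⟨iw, hiwI, hiw⟩ := hcase
          have hHsub : H = ICH := by
            apply Finset.Subset.antisymm
            · intro h hh
              rw [hH, Finset.mem_filter] at hh
              rw [hICH, Finset.mem_filter]
              refine ⟨?_, hh.2⟩
              by_contra hhI
              have := hItop iw hiwI h hhI
              omega
            · intro h hh
              rw [hICH, Finset.mem_filter] at hh
              exact Finset.mem_filter.2 ⟨Finset.mem_univ _, hh.2⟩
          have hcle : c ≤ t := by
            rw [hc, hHsub, ← hIcard]
            exact Finset.card_le_card (Finset.filter_subset _ _)
          rw [← hHsub, min_eq_right hcle, hc]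
      set K := K'.image (j0.succAbove) with hK
      have hKcard : K.card = k := by
        rw [hK, Finset.card_image_of_injective _ (Fin.succAbove_right_injective), hk]
      have hKsum : ∑ j ∈ K, T j = ∑ j' ∈ K', T' j' := by
        rw [hK, Finset.sum_image (fun a _ b _ h => Fin.succAbove_right_injective h)]
      have hj0K : j0 ∉ K := by
        rw [hK]
        intro h
        obtain ⟨z, _, hz⟩ := Finset.mem_image.1 h
        exact Fin.succAbove_ne j0 z hz
      by_cases hcase : c < t
      · have h1 := hcond (insert j0 K)
        rw [Finset.sum_insert hj0K, Finset.card_insert_of_notMem hj0K, hKcard,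
          minsum_succ R k, ← hH, hKsum] at h1
        have hd : ICH.card = c := by rw [hdich, min_eq_right (Nat.le_of_lt hcase)]
        omega
      · have h1 := hcond K
        rw [hKcard, hKsum] at h1
        have hd : ICH.card = t := by rw [hdich, min_eq_left (by omega)]
        omega
    obtain ⟨B', h01', hrow', hcol'⟩ := ih p R' T' hR' (by omega) hcond'
    have hrow2 : ∀ (x : ℕ) (g : Fin n → ℕ), ∑ j, Fin.insertNth (α := fun _ => ℕ) j0 x g j = x + ∑ j, g j := by
      intro x g
      rw [Fin.sum_univ_succAbove (Fin.insertNth (α := fun _ => ℕ) j0 x g) j0, Fin.insertNth_apply_same]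
      congr 1
      exact Finset.sum_congr rfl fun z _ => by simp
    refine ⟨fun i => Fin.insertNth (α := fun _ => ℕ) j0 (if i ∈ I then 1 else 0) (B' i), ?_, ?_, ?_⟩
    · intro i j
      show Fin.insertNth (α := fun _ => ℕ) j0 (if i ∈ I then 1 else 0) (B' i) j = 0 ∨
        Fin.insertNth (α := fun _ => ℕ) j0 (if i ∈ I then 1 else 0) (B' i) j = 1
      rcases eq_or_ne j j0 with rfl | hj
      · rw [Fin.insertNth_apply_same]
        by_cases h : i ∈ I <;> simp [h]
      · obtain ⟨z, hz⟩ := Fin.exists_succAbove_eq hj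
        rw [← hz, Fin.insertNth_apply_succAbove]
        exact h01' i z
    · intro i
      show ∑ j, Fin.insertNth (α := fun _ => ℕ) j0 (if i ∈ I then 1 else 0) (B' i) j = R i
      rw [hrow2, hrow' i]
      by_cases h : i ∈ I
      · have h1 := hI1 i h
        simp only [hR'def, h, if_true]
        omega
      · simp only [hR'def, h, if_false]
        omega
    · intro j
      show ∑ i, Fin.insertNth (α := fun _ => ℕ) j0 (if i ∈ I then 1 else 0) (B' i) j = T j
      rcases eq_or_ne j j0 with rfl | hj
      · simp only [Fin.insertNth_apply_same]
        exact hind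
      · obtain ⟨z, hz⟩ := Fin.exists_succAbove_eq hj
        rw [← hz]
        simp only [Fin.insertNth_apply_succAbove]
        exact hcol' z


lemma range_split_even (m p : ℕ) (hm : m = 2 * p) (F : ℕ → ℕ)
    (hsym : ∀ i < p, F (m - 1 - i) = F i) :
    ∑ i ∈ Finset.range m, F i = 2 * ∑ i ∈ Finset.range p, F i := by
  have h1 : ∑ i ∈ Finset.Ico 0 p, F i + ∑ i ∈ Finset.Ico p m, F i
      = ∑ i ∈ Finset.Ico 0 m, F i :=
    Finset.sum_Ico_consecutive F (Nat.zero_le p) (by omega)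
  have h2 : ∑ i ∈ Finset.Ico p m, F i = ∑ i ∈ Finset.range (m - p), F (p + i) :=
    Finset.sum_Ico_eq_sum_range F p m
  have h3 : m - p = p := by omega
  have h4 : ∑ i ∈ Finset.range p, F (p + (p - 1 - i)) = ∑ i ∈ Finset.range p, F (p + i) :=
    Finset.sum_range_reflect (fun i => F (p + i)) p
  have h5 : ∑ i ∈ Finset.range p, F (p + (p - 1 - i)) = ∑ i ∈ Finset.range p, F i := by
    apply Finset.sum_congr rfl
    intro i hi
    rw [Finset.mem_range] at hi
    have : p + (p - 1 - i) = m - 1 - i := by omega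
    rw [this, hsym i hi]
  rw [← Finset.range_eq_Ico, ← Finset.range_eq_Ico] at h1
  rw [h2, h3, ← h4, h5] at h1
  omega

lemma range_split_odd (m p : ℕ) (hm : m = 2 * p + 1) (F : ℕ → ℕ)
    (hsym : ∀ i < p, F (m - 1 - i) = F i) :
    ∑ i ∈ Finset.range m, F i = 2 * ∑ i ∈ Finset.range p, F i + F p := by
  have h1 : ∑ i ∈ Finset.Ico 0 p, F i + ∑ i ∈ Finset.Ico p m, F i
      = ∑ i ∈ Finset.Ico 0 m, F i :=
    Finset.sum_Ico_consecutive F (Nat.zero_le p) (by omega)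
  have h1b : ∑ i ∈ Finset.Ico p (p+1), F i + ∑ i ∈ Finset.Ico (p+1) m, F i
      = ∑ i ∈ Finset.Ico p m, F i :=
    Finset.sum_Ico_consecutive F (by omega) (by omega)
  have h1c : ∑ i ∈ Finset.Ico p (p+1), F i = F p := by
    rw [Finset.sum_Ico_eq_sum_range]
    simp
  have h2 : ∑ i ∈ Finset.Ico (p+1) m, F i = ∑ i ∈ Finset.range (m - (p+1)), F (p + 1 + i) :=
    Finset.sum_Ico_eq_sum_range F (p+1) m
  have h3 : m - (p+1) = p := by omega
  have h4 : ∑ i ∈ Finset.range p, F (p + 1 + (p - 1 - i)) = ∑ i ∈ Finset.range p, F (p + 1 + i) :=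
    Finset.sum_range_reflect (fun i => F (p + 1 + i)) p
  have h5 : ∑ i ∈ Finset.range p, F (p + 1 + (p - 1 - i)) = ∑ i ∈ Finset.range p, F i := by
    apply Finset.sum_congr rfl
    intro i hi
    rw [Finset.mem_range] at hi
    have : p + 1 + (p - 1 - i) = m - 1 - i := by omega
    rw [this, hsym i hi]
  rw [← Finset.range_eq_Ico, ← Finset.range_eq_Ico] at h1
  rw [h2, h3, ← h4, h5] at h1b
  omega

lemma fin_sum_palin_even {m : ℕ} (hm : m % 2 = 0) (v : Fin m → ℕ)
    (hpal : ∀ i, v i = v i.rev) :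
    ∑ i, v i = 2 * ∑ i : Fin (m / 2), v ⟨i.1, by omega⟩ := by
  set p := m / 2 with hp
  set F : ℕ → ℕ := fun i => if h : i < m then v ⟨i, h⟩ else 0 with hF
  have hFv : ∀ i : Fin m, v i = F i.1 := by
    intro i
    simp [hF, i.isLt]
  have e1 : ∑ i, v i = ∑ i ∈ Finset.range m, F i := by
    rw [Finset.sum_congr rfl (fun i _ => hFv i)]
    exact Fin.sum_univ_eq_sum_range F m
  have e2 : ∑ i : Fin p, v ⟨i.1, by omega⟩ = ∑ i ∈ Finset.range p, F i := by
    rw [Finset.sum_congr rfl (fun (i : Fin p) _ => hFv ⟨i.1, by omega⟩)]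
    exact Fin.sum_univ_eq_sum_range F p
  rw [e1, e2]
  apply range_split_even m p (by omega)
  intro i hi
  have h1 : m - 1 - i < m := by omega
  have h2 : i < m := by omega
  simp only [hF, dif_pos h1, dif_pos h2]
  have := hpal ⟨i, h2⟩
  rw [this]
  congr 1
  apply Fin.ext
  simp [Fin.val_rev]
  omega

lemma fin_sum_palin_odd {m : ℕ} (hm : m % 2 = 1) (v : Fin m → ℕ)
    (hpal : ∀ i, v i = v i.rev) :
    ∑ i, v i = 2 * ∑ i : Fin (m / 2), v ⟨i.1, by omega⟩ + v ⟨m / 2, by omega⟩ := by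
  set p := m / 2 with hp
  set F : ℕ → ℕ := fun i => if h : i < m then v ⟨i, h⟩ else 0 with hF
  have hFv : ∀ i : Fin m, v i = F i.1 := by
    intro i
    simp [hF, i.isLt]
  have e1 : ∑ i, v i = ∑ i ∈ Finset.range m, F i := by
    rw [Finset.sum_congr rfl (fun i _ => hFv i)]
    exact Fin.sum_univ_eq_sum_range F m
  have e2 : ∑ i : Fin p, v ⟨i.1, by omega⟩ = ∑ i ∈ Finset.range p, F i := by
    rw [Finset.sum_congr rfl (fun (i : Fin p) _ => hFv ⟨i.1, by omega⟩)]
    exact Fin.sum_univ_eq_sum_range F p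
  have e3 : v ⟨p, by omega⟩ = F p := hFv ⟨p, by omega⟩
  rw [e1, e2, e3]
  apply range_split_odd m p (by omega)
  intro i hi
  have h1 : m - 1 - i < m := by omega
  have h2 : i < m := by omega
  simp only [hF, dif_pos h1, dif_pos h2]
  have := hpal ⟨i, h2⟩
  rw [this]
  congr 1
  apply Fin.ext
  simp [Fin.val_rev]
  omega


lemma vecMS_double {n : ℕ} (T : Fin n → ℕ) :
    vecMS (fun j => 2 * T j) = (vecMS T).map (fun x => 2 * x) := by
  rw [vecMS, vecMS, Multiset.map_map]
  rfl

lemma erase_map_sum {M : Multiset ℕ} {x : ℕ} (hx : x ∈ M) (g : ℕ → ℕ) :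
    g x + ((M.erase x).map g).sum = (M.map g).sum := by
  conv_rhs => rw [← Multiset.cons_erase hx]
  rw [Multiset.map_cons, Multiset.sum_cons]

lemma erase_sum {M : Multiset ℕ} {x : ℕ} (hx : x ∈ M) :
    x + (M.erase x).sum = M.sum := by
  have := erase_map_sum hx id
  rwa [Multiset.map_id, Multiset.map_id] at this

lemma odd_card_sum {n : ℕ} (S : Fin n → ℕ) :
    (Finset.univ.filter fun j => S j % 2 = 1).card = ∑ j, S j % 2 := by
  rw [Finset.card_filter]
  apply Finset.sum_congr rfl
  intro j _
  by_cases h : S j % 2 = 1 <;> simp [h] <;> omega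


lemma fin_sum_palin_even' {m : ℕ} (hm : m % 2 = 0) (v : Fin m → ℕ)
    (hpal : ∀ i, v i = v i.rev) (w : Fin (m / 2) → ℕ)
    (hw : ∀ (i : Fin (m / 2)) (h : (i : ℕ) < m), w i = v ⟨i.1, h⟩) :
    ∑ i, v i = 2 * ∑ i, w i := by
  rw [fin_sum_palin_even hm v hpal]
  congr 1
  exact Finset.sum_congr rfl fun i _ => (hw i (by omega)).symm

lemma fin_sum_palin_odd' {m : ℕ} (hm : m % 2 = 1) (v : Fin m → ℕ)
    (hpal : ∀ i, v i = v i.rev) (w : Fin (m / 2) → ℕ)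
    (hw : ∀ (i : Fin (m / 2)) (h : (i : ℕ) < m), w i = v ⟨i.1, h⟩)
    (x : ℕ) (hx : ∀ h : m / 2 < m, v ⟨m / 2, h⟩ = x) :
    ∑ i, v i = 2 * ∑ i, w i + x := by
  rw [fin_sum_palin_odd hm v hpal, hx (by omega)]
  congr 2
  exact Finset.sum_congr rfl fun i _ => (hw i (by omega)).symm

/-- **(0,1)-matrices with horizontal-mirror symmetry (`r_0`).**
`𝒜^0(R,S) ≠ ∅` iff (a) `R` is palindromic, (b) if `m` is even then `S` is
even, and if `m` is odd then `r_{⌈m/2⌉} ≥ o(S)`, and (c) `S̄ ⪯ R̄*`, where `S̄`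
subtracts one from every odd component of `S` and `R̄` is `R` (for `m` even)
or `R` with its middle component removed (for `m` odd). -/
theorem horizontal_mirror_zeroOne (m n : ℕ) (R : Fin m → ℕ) (S : Fin n → ℕ)
    (hsum : ∑ i, R i = ∑ j, S j)
    (hRle : ∀ i, R i ≤ n) (hSle : ∀ j, S j ≤ m) :
    (∃ A : Matrix (Fin m) (Fin n) ℕ,
        (∀ i j, A i j = 0 ∨ A i j = 1) ∧
        (∀ i, ∑ j, A i j = R i) ∧
        (∀ j, ∑ i, A i j = S j) ∧
        (∀ i j, A i j = A i.rev j)) ↔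
      ((∀ i, R i = R i.rev) ∧
        (m % 2 = 0 → ∀ j, S j % 2 = 0) ∧
        (∀ hm : m % 2 = 1,
          (Finset.univ.filter fun j => S j % 2 = 1).card ≤ R ⟨m / 2, by omega⟩) ∧
        MajorizedBy
          (vecMS (fun j => S j - S j % 2))
          (conjMS (if hm : m % 2 = 1 then (vecMS R).erase (R ⟨m / 2, by omega⟩)
            else vecMS R))) := by
  have hrev : ∀ i : Fin m, (i.rev : Fin m).1 = m - 1 - i.1 := fun i => by
    rw [Fin.val_rev]; omega
  have hplm : ∀ i : Fin (m / 2), (i : ℕ) < m := fun i => by omega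
  constructor
  · rintro ⟨A, h01, hrow, hcol, hsymA⟩
    have hpal : ∀ i, R i = R i.rev := fun i => by
      rw [← hrow i, ← hrow i.rev]
      exact Finset.sum_congr rfl fun j _ => hsymA i j
    set B : Fin (m / 2) → Fin n → ℕ := fun i j => A ⟨i.1, hplm i⟩ j with hB
    set T' : Fin n → ℕ := fun j => ∑ i, B i j with hT'
    have hB01 : ∀ i j, B i j = 0 ∨ B i j = 1 := fun i j => h01 _ _
    have hBrow : ∀ i : Fin (m / 2), ∑ j, B i j = R ⟨i.1, hplm i⟩ := fun i => hrow _
    have hBcol : ∀ j, ∑ i, B i j = T' j := fun j => rfl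
    have hTR : ∑ j, T' j = ∑ i : Fin (m / 2), R ⟨i.1, hplm i⟩ := by
      calc ∑ j, T' j = ∑ j, ∑ i, B i j := rfl
        _ = ∑ i, ∑ j, B i j := Finset.sum_comm
        _ = _ := Finset.sum_congr rfl fun i _ => hBrow i
    have htopchain : ∀ k, topSum (vecMS T') k ≤ ∑ i : Fin (m / 2), min (R ⟨i.1, hplm i⟩) k := by
      intro k
      obtain ⟨K, hKle, hKeq⟩ := topSum_eq_finset_sum T' k
      rw [hKeq]
      have hnec := galeRyser_nec (fun i : Fin (m / 2) => R ⟨i.1, hplm i⟩) T' B hB01 hBrow hBcol K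
      have hmono : ∑ i : Fin (m / 2), min (R ⟨i.1, hplm i⟩) K.card
          ≤ ∑ i : Fin (m / 2), min (R ⟨i.1, hplm i⟩) k :=
        Finset.sum_le_sum fun i _ => by omega
      exact hnec.trans hmono
    rcases Nat.mod_two_eq_zero_or_one m with hm0 | hm1
    · -- m even
      have hScol : ∀ j, S j = 2 * T' j := by
        intro j
        have e := fin_sum_palin_even' hm0 (fun i => A i j) (fun i => hsymA i j)
          (fun i => B i j) (fun i h => rfl)
        rw [hcol j, hBcol j] at e
        exact e
      refine ⟨hpal, fun _ j => by have := hScol j; omega, fun hm' => absurd hm' (by omega), ?_⟩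
      rw [dif_neg (by omega : ¬ m % 2 = 1)]
      have hfun : (fun j => S j - S j % 2) = (fun j => 2 * T' j) := funext fun j => by
        have := hScol j; omega
      have hvec : vecMS (fun j => S j - S j % 2) = (vecMS T').map (fun x => 2 * x) := by
        rw [hfun, vecMS_double]
      have hconjmap : ∀ k, ((vecMS R).map (fun x => min x k)).sum
          = 2 * ∑ i : Fin (m / 2), min (R ⟨i.1, hplm i⟩) k := by
        intro k
        rw [vecMS_map_sum]
        exact fin_sum_palin_even' hm0 (fun i => min (R i) k)
          (fun i => by show min (R i) k = min (R i.rev) k; rw [hpal i])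
          (fun i => min (R ⟨i.1, hplm i⟩) k) (fun i h => rfl)
      have hRsum : ∑ i, R i = 2 * ∑ i : Fin (m / 2), R ⟨i.1, hplm i⟩ :=
        fin_sum_palin_even' hm0 R hpal (fun i => R ⟨i.1, hplm i⟩) (fun i h => rfl)
      constructor
      · rw [hvec, conjMS_sum, vecMS_sum]
        have lhs1 : ((vecMS T').map fun x => 2 * x).sum = ∑ j, 2 * T' j := vecMS_map_sum T' _
        have lhs2 : ∑ j, 2 * T' j = 2 * ∑ j, T' j := (Finset.mul_sum _ _ _).symm
        omega
      · intro k
        rw [hvec, topSum_double, topSum_conjMS, hconjmap k]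
        have := htopchain k
        omega
    · -- m odd
      have hmidlt : m / 2 < m := by omega
      have hScol : ∀ j, S j = 2 * T' j + A ⟨m / 2, hmidlt⟩ j := by
        intro j
        have e := fin_sum_palin_odd' hm1 (fun i => A i j) (fun i => hsymA i j)
          (fun i => B i j) (fun i h => rfl) (A ⟨m / 2, hmidlt⟩ j) (fun h => rfl)
        rw [hcol j, hBcol j] at e
        exact e
      have hmid01 : ∀ j, A ⟨m / 2, hmidlt⟩ j = 0 ∨ A ⟨m / 2, hmidlt⟩ j = 1 := fun j => h01 _ j
      have hSmod : ∀ j, S j % 2 = A ⟨m / 2, hmidlt⟩ j := by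
        intro j
        have h1 := hScol j
        rcases hmid01 j with h | h <;> omega
      have hoS : (Finset.univ.filter fun j => S j % 2 = 1).card = R ⟨m / 2, hmidlt⟩ := by
        rw [odd_card_sum, Finset.sum_congr rfl fun j _ => hSmod j, hrow]
      refine ⟨hpal, fun hm' j => by omega, fun _ => le_of_eq hoS, ?_⟩
      rw [dif_pos hm1]
      have hxx : (vecMS R).erase (R ⟨m / 2, by omega⟩) = (vecMS R).erase (R ⟨m / 2, hmidlt⟩) :=
        rfl
      rw [hxx]
      have hmem : R ⟨m / 2, hmidlt⟩ ∈ vecMS R :=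
        Multiset.mem_map.2 ⟨⟨m / 2, hmidlt⟩, Finset.mem_univ_val _, rfl⟩
      have hfun : (fun j => S j - S j % 2) = (fun j => 2 * T' j) := funext fun j => by
        have h1 := hScol j
        have h2 := hSmod j
        omega
      have hvec : vecMS (fun j => S j - S j % 2) = (vecMS T').map (fun x => 2 * x) := by
        rw [hfun, vecMS_double]
      have hconjmap : ∀ k, (((vecMS R).erase (R ⟨m / 2, hmidlt⟩)).map (fun x => min x k)).sum
          = 2 * ∑ i : Fin (m / 2), min (R ⟨i.1, hplm i⟩) k := by
        intro k
        have e1 : min (R ⟨m / 2, hmidlt⟩) k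
            + (((vecMS R).erase (R ⟨m / 2, hmidlt⟩)).map (fun x => min x k)).sum
            = ∑ i, min (R i) k := by
          have e0 := erase_map_sum hmem (fun x => min x k)
          rw [vecMS_map_sum] at e0
          exact e0
        have e2 : ∑ i, min (R i) k
            = 2 * ∑ i : Fin (m / 2), min (R ⟨i.1, hplm i⟩) k + min (R ⟨m / 2, hmidlt⟩) k :=
          fin_sum_palin_odd' hm1 (fun i => min (R i) k)
            (fun i => by show min (R i) k = min (R i.rev) k; rw [hpal i])
            (fun i => min (R ⟨i.1, hplm i⟩) k) (fun i h => rfl)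
            (min (R ⟨m / 2, hmidlt⟩) k) (fun h => rfl)
        omega
      have hRsum : ∑ i, R i = 2 * ∑ i : Fin (m / 2), R ⟨i.1, hplm i⟩ + R ⟨m / 2, hmidlt⟩ :=
        fin_sum_palin_odd' hm1 R hpal (fun i => R ⟨i.1, hplm i⟩) (fun i h => rfl)
          (R ⟨m / 2, hmidlt⟩) (fun h => rfl)
      have hesum := erase_sum hmem
      rw [vecMS_sum] at hesum
      constructor
      · rw [hvec, conjMS_sum]
        have lhs1 : ((vecMS T').map fun x => 2 * x).sum = ∑ j, 2 * T' j := vecMS_map_sum T' _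
        have lhs2 : ∑ j, 2 * T' j = 2 * ∑ j, T' j := (Finset.mul_sum _ _ _).symm
        omega
      · intro k
        rw [hvec, topSum_double, topSum_conjMS, hconjmap k]
        have := htopchain k
        omega
  · rintro ⟨hpal, hbeven, hbodd, hmaj⟩
    obtain ⟨hmsum, hmtop⟩ := hmaj
    set T : Fin n → ℕ := fun j => S j / 2 with hT
    have hfun : (fun j => S j - S j % 2) = (fun j => 2 * T j) := funext fun j => by
      simp only [hT]; omega
    have hvec : vecMS (fun j => S j - S j % 2) = (vecMS T).map (fun x => 2 * x) := by
      rw [hfun, vecMS_double]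
    have hTsum : ∑ j, (S j - S j % 2) = 2 * ∑ j, T j := by
      rw [Finset.mul_sum]
      exact Finset.sum_congr rfl fun j _ => by simp only [hT]; omega
    have hsplitS : ∑ j, (S j - S j % 2) + ∑ j, S j % 2 = ∑ j, S j := by
      rw [← Finset.sum_add_distrib]
      exact Finset.sum_congr rfl fun j _ => by omega
    have hvsum : (vecMS (fun j => S j - S j % 2)).sum = ∑ j, (S j - S j % 2) :=
      vecMS_sum _
    rcases Nat.mod_two_eq_zero_or_one m with hm0 | hm1
    · -- m even
      rw [dif_neg (by omega : ¬ m % 2 = 1)] at hmsum hmtop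
      have hRsum : ∑ i, R i = 2 * ∑ i : Fin (m / 2), R ⟨i.1, hplm i⟩ :=
        fin_sum_palin_even' hm0 R hpal (fun i => R ⟨i.1, hplm i⟩) (fun i h => rfl)
      have hmsum2 : 2 * ∑ j, T j = 2 * ∑ i : Fin (m / 2), R ⟨i.1, hplm i⟩ := by
        rw [hvsum, conjMS_sum, vecMS_sum] at hmsum
        omega
      have hcond : ∀ K : Finset (Fin n),
          ∑ j ∈ K, T j ≤ ∑ i : Fin (m / 2), min (R ⟨i.1, hplm i⟩) K.card := by
        intro K
        have h1 := finset_sum_le_topSum T K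
        have h2 := hmtop K.card
        rw [hvec, topSum_double, topSum_conjMS] at h2
        have h3 : ((vecMS R).map (fun x => min x K.card)).sum
            = 2 * ∑ i : Fin (m / 2), min (R ⟨i.1, hplm i⟩) K.card := by
          rw [vecMS_map_sum]
          exact fin_sum_palin_even' hm0 (fun i => min (R i) K.card)
            (fun i => by show min (R i) K.card = min (R i.rev) K.card; rw [hpal i])
            (fun i => min (R ⟨i.1, hplm i⟩) K.card) (fun i h => rfl)
        rw [h3] at h2
        omega
      obtain ⟨B, hB01, hBrow, hBcol⟩ := galeRyser_suff n (m / 2)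
        (fun i => R ⟨i.1, hplm i⟩) T (fun i => hRle _)
        (show ∑ i : Fin (m / 2), R ⟨i.1, hplm i⟩ = ∑ j, T j by omega) hcond
      set A : Matrix (Fin m) (Fin n) ℕ := fun i j =>
        if h : i.1 < m / 2 then B ⟨i.1, h⟩ j
        else if h2 : m - 1 - i.1 < m / 2 then B ⟨m - 1 - i.1, h2⟩ j else S j % 2 with hA
      have hA1 : ∀ (i : Fin m) (h : i.1 < m / 2) (j : Fin n), A i j = B ⟨i.1, h⟩ j := by
        intro i h j
        simp only [hA]
        rw [dif_pos h]
      have hA2 : ∀ (i : Fin m) (h : ¬ i.1 < m / 2) (h2 : m - 1 - i.1 < m / 2) (j : Fin n),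
          A i j = B ⟨m - 1 - i.1, h2⟩ j := by
        intro i h h2 j
        simp only [hA]
        rw [dif_neg h, dif_pos h2]
      have hA3 : ∀ (i : Fin m) (h : ¬ i.1 < m / 2) (h2 : ¬ m - 1 - i.1 < m / 2) (j : Fin n),
          A i j = S j % 2 := by
        intro i h h2 j
        simp only [hA]
        rw [dif_neg h, dif_neg h2]
      have hsym : ∀ i j, A i j = A i.rev j := by
        intro i j
        have hri := hrev i
        have hilt := i.isLt
        by_cases h : i.1 < m / 2
        · have h' : ¬ ((i.rev : Fin m).1 < m / 2) := by omega
          have h2' : m - 1 - (i.rev : Fin m).1 < m / 2 := by omega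
          rw [hA1 i h j, hA2 i.rev h' h2' j]
          exact congrArg (fun z => B z j) (Fin.ext (by simp only []; omega))
        · by_cases h2 : m - 1 - i.1 < m / 2
          · have h' : (i.rev : Fin m).1 < m / 2 := by omega
            rw [hA2 i h h2 j, hA1 i.rev h' j]
            exact congrArg (fun z => B z j) (Fin.ext (by simp only []; omega))
          · have h' : ¬ ((i.rev : Fin m).1 < m / 2) := by omega
            have h2' : ¬ (m - 1 - (i.rev : Fin m).1 < m / 2) := by omega
            rw [hA3 i h h2 j, hA3 i.rev h' h2' j]
      refine ⟨A, ?_, ?_, ?_, hsym⟩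
      · intro i j
        by_cases h : i.1 < m / 2
        · rw [hA1 i h j]; exact hB01 _ j
        · by_cases h2 : m - 1 - i.1 < m / 2
          · rw [hA2 i h h2 j]; exact hB01 _ j
          · rw [hA3 i h h2 j]; omega
      · intro i
        by_cases h : i.1 < m / 2
        · rw [Finset.sum_congr rfl fun j _ => hA1 i h j, hBrow ⟨i.1, h⟩]
        · by_cases h2 : m - 1 - i.1 < m / 2
          · rw [Finset.sum_congr rfl fun j _ => hA2 i h h2 j, hBrow ⟨m - 1 - i.1, h2⟩]
            rw [hpal i]
            exact congrArg R (Fin.ext (by simp only [Fin.val_rev]; omega))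
          · exfalso
            have := i.isLt
            omega
      · intro j
        have e : ∑ i, A i j = 2 * ∑ i : Fin (m / 2), B i j :=
          fin_sum_palin_even' hm0 (fun i => A i j) (fun i => hsym i j)
            (fun i => B i j) (fun i h => (hA1 ⟨i.1, h⟩ i.2 j).symm)
        rw [e, hBcol j]
        have := hbeven hm0 j
        simp only [hT]
        omega
    · -- m odd
      have hmidlt : m / 2 < m := by omega
      rw [dif_pos hm1] at hmsum hmtop
      have hxx : (vecMS R).erase (R ⟨m / 2, by omega⟩) = (vecMS R).erase (R ⟨m / 2, hmidlt⟩) :=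
        rfl
      rw [hxx] at hmsum hmtop
      have hmem : R ⟨m / 2, hmidlt⟩ ∈ vecMS R :=
        Multiset.mem_map.2 ⟨⟨m / 2, hmidlt⟩, Finset.mem_univ_val _, rfl⟩
      have hesum := erase_sum hmem
      rw [vecMS_sum] at hesum
      have hRsum : ∑ i, R i = 2 * ∑ i : Fin (m / 2), R ⟨i.1, hplm i⟩ + R ⟨m / 2, hmidlt⟩ :=
        fin_sum_palin_odd' hm1 R hpal (fun i => R ⟨i.1, hplm i⟩) (fun i h => rfl)
          (R ⟨m / 2, hmidlt⟩) (fun h => rfl)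
      have hoS := odd_card_sum S
      rw [hvsum, conjMS_sum] at hmsum
      have hmid_eq : R ⟨m / 2, hmidlt⟩ = (Finset.univ.filter fun j => S j % 2 = 1).card := by
        omega
      have hcond : ∀ K : Finset (Fin n),
          ∑ j ∈ K, T j ≤ ∑ i : Fin (m / 2), min (R ⟨i.1, hplm i⟩) K.card := by
        intro K
        have h1 := finset_sum_le_topSum T K
        have h2 := hmtop K.card
        rw [hvec, topSum_double, topSum_conjMS] at h2
        have e1 : min (R ⟨m / 2, hmidlt⟩) K.card
            + (((vecMS R).erase (R ⟨m / 2, hmidlt⟩)).map (fun x => min x K.card)).sum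
            = ∑ i, min (R i) K.card := by
          have e0 := erase_map_sum hmem (fun x => min x K.card)
          rw [vecMS_map_sum] at e0
          exact e0
        have e2 : ∑ i, min (R i) K.card
            = 2 * ∑ i : Fin (m / 2), min (R ⟨i.1, hplm i⟩) K.card
              + min (R ⟨m / 2, hmidlt⟩) K.card :=
          fin_sum_palin_odd' hm1 (fun i => min (R i) K.card)
            (fun i => by show min (R i) K.card = min (R i.rev) K.card; rw [hpal i])
            (fun i => min (R ⟨i.1, hplm i⟩) K.card) (fun i h => rfl)
            (min (R ⟨m / 2, hmidlt⟩) K.card) (fun h => rfl)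
        omega
      obtain ⟨B, hB01, hBrow, hBcol⟩ := galeRyser_suff n (m / 2)
        (fun i => R ⟨i.1, hplm i⟩) T (fun i => hRle _)
        (show ∑ i : Fin (m / 2), R ⟨i.1, hplm i⟩ = ∑ j, T j by omega) hcond
      set A : Matrix (Fin m) (Fin n) ℕ := fun i j =>
        if h : i.1 < m / 2 then B ⟨i.1, h⟩ j
        else if h2 : m - 1 - i.1 < m / 2 then B ⟨m - 1 - i.1, h2⟩ j else S j % 2 with hA
      have hA1 : ∀ (i : Fin m) (h : i.1 < m / 2) (j : Fin n), A i j = B ⟨i.1, h⟩ j := by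
        intro i h j
        simp only [hA]
        rw [dif_pos h]
      have hA2 : ∀ (i : Fin m) (h : ¬ i.1 < m / 2) (h2 : m - 1 - i.1 < m / 2) (j : Fin n),
          A i j = B ⟨m - 1 - i.1, h2⟩ j := by
        intro i h h2 j
        simp only [hA]
        rw [dif_neg h, dif_pos h2]
      have hA3 : ∀ (i : Fin m) (h : ¬ i.1 < m / 2) (h2 : ¬ m - 1 - i.1 < m / 2) (j : Fin n),
          A i j = S j % 2 := by
        intro i h h2 j
        simp only [hA]
        rw [dif_neg h, dif_neg h2]
      have hsym : ∀ i j, A i j = A i.rev j := by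
        intro i j
        have hri := hrev i
        have hilt := i.isLt
        by_cases h : i.1 < m / 2
        · have h' : ¬ ((i.rev : Fin m).1 < m / 2) := by omega
          have h2' : m - 1 - (i.rev : Fin m).1 < m / 2 := by omega
          rw [hA1 i h j, hA2 i.rev h' h2' j]
          exact congrArg (fun z => B z j) (Fin.ext (by simp only []; omega))
        · by_cases h2 : m - 1 - i.1 < m / 2
          · have h' : (i.rev : Fin m).1 < m / 2 := by omega
            rw [hA2 i h h2 j, hA1 i.rev h' j]
            exact congrArg (fun z => B z j) (Fin.ext (by simp only []; omega))
          · have h' : ¬ ((i.rev : Fin m).1 < m / 2) := by omega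
            have h2' : ¬ (m - 1 - (i.rev : Fin m).1 < m / 2) := by omega
            rw [hA3 i h h2 j, hA3 i.rev h' h2' j]
      refine ⟨A, ?_, ?_, ?_, hsym⟩
      · intro i j
        by_cases h : i.1 < m / 2
        · rw [hA1 i h j]; exact hB01 _ j
        · by_cases h2 : m - 1 - i.1 < m / 2
          · rw [hA2 i h h2 j]; exact hB01 _ j
          · rw [hA3 i h h2 j]; omega
      · intro i
        by_cases h : i.1 < m / 2
        · rw [Finset.sum_congr rfl fun j _ => hA1 i h j, hBrow ⟨i.1, h⟩]
        · by_cases h2 : m - 1 - i.1 < m / 2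
          · rw [Finset.sum_congr rfl fun j _ => hA2 i h h2 j, hBrow ⟨m - 1 - i.1, h2⟩]
            rw [hpal i]
            exact congrArg R (Fin.ext (by simp only [Fin.val_rev]; omega))
          · have hilt := i.isLt
            have hieq : i = ⟨m / 2, hmidlt⟩ := Fin.ext (by simp only []; omega)
            rw [Finset.sum_congr rfl fun j _ => hA3 i h h2 j, hieq, hmid_eq, odd_card_sum]
      · intro j
        have e : ∑ i, A i j = 2 * ∑ i : Fin (m / 2), B i j + S j % 2 :=
          fin_sum_palin_odd' hm1 (fun i => A i j) (fun i => hsym i j)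
            (fun i => B i j) (fun i h => (hA1 ⟨i.1, h⟩ i.2 j).symm)
            (S j % 2) (fun h => hA3 ⟨m / 2, h⟩ (by show ¬ (m / 2 < m / 2); omega)
              (by show ¬ (m - 1 - m / 2 < m / 2); omega) j)
        rw [e, hBcol j]
        simp only [hT]
        omega
end
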